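/- arXiv:1710.03845 — 8 statements merged into one kernel-verified Lean document; each statement's English description precedes it below -/
import Mathlib

section
/- Assume G : ℕ → ℕ is strictly increasing with G 1 = 1, and there is an integer s ≥ 2 such that G (i+1) ≤ s · G i for all i ≥ 1. For i ≥ 1 define A_i = ⋃_{m=0}^{G i − 1} [2π/((s+1)·G i) + 2π m/(G i), 2π s/((s+1)·G i) + 2π m/(G i)] ⊆ ℝ. Then for every n ≥ 2, the union ⋃_{i=1}^{n−1} A_i equals the closed interval [2π/((s+1)·G (n−1)), 2π·((s+1)·G (n−1) − 1)/((s+1)·G (n−1))]. -/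
open Real

lemma cover_lemma (a b c d e : ℝ) (N : ℕ) (hN : 1 ≤ N) (hd : 0 < d)
    (hca : c ≤ a) (hae : a ≤ e)
    (hcb : c + ((N : ℝ) - 1) * d ≤ b) (hbe : b ≤ e + ((N : ℝ) - 1) * d) :
    Set.Icc a b ∪ (⋃ m ∈ Finset.range N, Set.Icc (c + m * d) (e + m * d))
      = Set.Icc c (e + ((N : ℝ) - 1) * d) := by
  ext x
  simp only [Set.mem_union, Set.mem_iUnion, Finset.mem_range, Set.mem_Icc, exists_prop]
  constructor
  · rintro (⟨h1, h2⟩ | ⟨m, hm, h1, h2⟩)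
    · exact ⟨le_trans hca h1, le_trans h2 hbe⟩
    · have hm' : (m : ℝ) + 1 ≤ N := by exact_mod_cast hm
      have hm0 : (0 : ℝ) ≤ (m : ℝ) * d := by positivity
      exact ⟨by linarith, by nlinarith⟩
  · rintro ⟨h1, h2⟩
    set k : ℕ := (⌊(x - c) / d⌋).toNat with hk
    have hy0 : (0 : ℝ) ≤ (x - c) / d := div_nonneg (by linarith) hd.le
    have hkz : ((k : ℕ) : ℝ) = ((⌊(x - c) / d⌋ : ℤ) : ℝ) := by
      rw [hk]
      have := Int.toNat_of_nonneg (Int.floor_nonneg.mpr hy0)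
      exact_mod_cast congrArg (fun z : ℤ => (z : ℝ)) this
    have hkle : (k : ℝ) ≤ (x - c) / d := hkz ▸ Int.floor_le ((x - c) / d)
    have hklt : (x - c) / d < (k : ℝ) + 1 := by
      have := Int.lt_floor_add_one ((x - c) / d)
      rw [← hkz] at this
      exact this
    have hkd : (k : ℝ) * d ≤ x - c := (le_div_iff₀ hd).mp hkle
    have hkd' : x - c < ((k : ℝ) + 1) * d := (div_lt_iff₀ hd).mp hklt
    set m : ℕ := min k (N - 1) with hm
    have hmN : m < N := lt_of_le_of_lt (min_le_right _ _) (Nat.sub_lt hN one_pos)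
    have hmk : (m : ℝ) ≤ (k : ℝ) := by exact_mod_cast min_le_left k (N - 1)
    have hcm : c + m * d ≤ x := by nlinarith
    by_cases hx : x ≤ e + m * d
    · exact Or.inr ⟨m, hmN, hcm, hx⟩
    · push_neg at hx
      left
      have hNm1 : ((N - 1 : ℕ) : ℝ) = (N : ℝ) - 1 := by
        push_cast [Nat.cast_sub hN]; ring
      rcases le_or_gt (N - 1) k with h | h
      · exfalso
        have hmeq : m = N - 1 := by omega
        have : (m : ℝ) = (N : ℝ) - 1 := by rw [hmeq, hNm1]
        rw [this] at hx
        linarith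
      · have hmk' : m = k := by omega
        have hk1 : (k : ℝ) + 1 ≤ (N : ℝ) - 1 := by
          have h' : k + 1 ≤ N - 1 := h
          have := (Nat.cast_le (α := ℝ)).mpr h'
          rw [hNm1] at this
          push_cast at this
          linarith
        have hm0 : (0 : ℝ) ≤ (m : ℝ) * d := by positivity
        constructor
        · linarith
        · have : ((k : ℝ) + 1) * d ≤ ((N : ℝ) - 1) * d := by nlinarith
          linarith

/-- The union of the sets `A i`, `1 ≤ i ≤ n-1`, is the closed interval
`[2π/((s+1) G (n-1)), 2π((s+1) G (n-1) - 1)/((s+1) G (n-1))]`. -/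
theorem union_Ai_eq_interval
    (G : ℕ → ℕ) (hG1 : G 1 = 1) (hmono : ∀ i, 1 ≤ i → G i < G (i + 1))
    (s : ℕ) (hs2 : 2 ≤ s) (hs : ∀ i, 1 ≤ i → G (i + 1) ≤ s * G i)
    (A : ℕ → Set ℝ)
    (hA : ∀ i, 1 ≤ i → A i =
      ⋃ m ∈ Finset.range (G i),
        Set.Icc (2 * π / (((s : ℝ) + 1) * G i) + 2 * π * m / G i)
          (2 * π * s / (((s : ℝ) + 1) * G i) + 2 * π * m / G i))
    (n : ℕ) (hn : 2 ≤ n) :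
    (⋃ i ∈ Finset.Icc 1 (n - 1), A i) =
      Set.Icc (2 * π / (((s : ℝ) + 1) * G (n - 1)))
        (2 * π * (((s : ℝ) + 1) * G (n - 1) - 1) / (((s : ℝ) + 1) * G (n - 1))) := by
  have hGpos : ∀ i, 1 ≤ i → 1 ≤ G i := by
    intro i hi
    induction i with
    | zero => omega
    | succ j ih =>
      rcases Nat.eq_or_lt_of_le hi with h | h
      · have h1 : j + 1 = 1 := h.symm
        rw [h1, hG1]
      · have hj : 1 ≤ j := by omega
        have := hmono j hj
        have := ih hj
        omega
  induction n, hn using Nat.le_induction with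
  | base =>
    simp only [show (2 : ℕ) - 1 = 1 from rfl, Finset.Icc_self, Finset.mem_singleton,
      Set.iUnion_iUnion_eq_left]
    rw [hA 1 le_rfl, hG1]
    have hπ := Real.pi_pos
    have hs1 : ((s : ℝ) + 1) ≠ 0 := by positivity
    simp only [Finset.range_one, Finset.mem_singleton, Set.iUnion_iUnion_eq_left,
      Nat.cast_one, Nat.cast_zero]
    norm_num
  | succ n hn2 ih =>
    -- goal about n + 1; (n+1) - 1 = n
    simp only [Nat.add_sub_cancel]
    have hn1 : n - 1 + 1 = n := by omega
    have hn1' : 1 ≤ n - 1 := by omega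
    -- split the union
    have hsplit : Finset.Icc 1 n = insert n (Finset.Icc 1 (n - 1)) := by
      ext x
      simp only [Finset.mem_Icc, Finset.mem_insert]
      omega
    rw [hsplit, Finset.set_biUnion_insert, ih]
    set g : ℝ := (G (n - 1) : ℝ) with hg
    set g' : ℝ := (G n : ℝ) with hg'
    have hg1 : 1 ≤ g := by rw [hg]; exact_mod_cast hGpos (n - 1) hn1'
    have hg1' : 1 ≤ g' := by rw [hg']; exact_mod_cast hGpos n (by omega)
    have hglt : g < g' := by
      have h2 := hmono (n - 1) hn1'
      rw [hn1] at h2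
      rw [hg, hg']
      exact_mod_cast h2
    have hgs : g' ≤ s * g := by
      have h2 := hs (n - 1) hn1'
      rw [hn1] at h2
      rw [hg, hg']
      exact_mod_cast h2
    have hπ := Real.pi_pos
    have hsR : (2 : ℝ) ≤ s := by exact_mod_cast hs2
    have hs1 : (0 : ℝ) < (s : ℝ) + 1 := by linarith
    have hgpos : (0 : ℝ) < g := by linarith
    have hgpos' : (0 : ℝ) < g' := by linarith
    -- rewrite A n into the c + m * d form
    have hrw : A n = ⋃ m ∈ Finset.range (G n),
        Set.Icc (2 * π / (((s : ℝ) + 1) * g') + m * (2 * π / g'))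
          (2 * π * s / (((s : ℝ) + 1) * g') + m * (2 * π / g')) := by
      rw [hA n (by omega), ← hg']
      apply Set.iUnion_congr
      intro m
      apply Set.iUnion_congr
      intro _
      congr 1 <;> field_simp <;> ring
    rw [hrw, Set.union_comm]
    have hN1 : 1 ≤ G n := hGpos n (by omega)
    have hcover := cover_lemma
      (2 * π / (((s : ℝ) + 1) * g))
      (2 * π * (((s : ℝ) + 1) * g - 1) / (((s : ℝ) + 1) * g))
      (2 * π / (((s : ℝ) + 1) * g'))
      (2 * π / g')
      (2 * π * s / (((s : ℝ) + 1) * g'))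
      (G n) hN1 (by positivity)
      (by gcongr <;> nlinarith)
      (by
        rw [div_le_div_iff₀ (by positivity) (by positivity)]
        nlinarith [mul_le_mul_of_nonneg_left hgs (by positivity : (0:ℝ) ≤ 2 * π * ((s:ℝ)+1))])
      (by
        have heq : 2 * π / (((s : ℝ) + 1) * g') + (((G n : ℝ)) - 1) * (2 * π / g')
            = 2 * π * (((s : ℝ) + 1) * g' - s) / (((s : ℝ) + 1) * g') := by
          field_simp
          ring
        rw [← hg', heq, div_le_div_iff₀ (by positivity) (by positivity)]
        nlinarith [mul_le_mul_of_nonneg_left hgs (by positivity : (0:ℝ) ≤ 2 * π * ((s:ℝ)+1))])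
      (by
        have heq : 2 * π * s / (((s : ℝ) + 1) * g') + (((G n : ℝ)) - 1) * (2 * π / g')
            = 2 * π * (((s : ℝ) + 1) * g' - 1) / (((s : ℝ) + 1) * g') := by
          field_simp
          ring
        rw [← hg', heq, div_le_div_iff₀ (by positivity) (by positivity)]
        nlinarith [mul_nonneg (mul_nonneg (by positivity : (0:ℝ) ≤ 2 * π)
          (by positivity : (0:ℝ) ≤ (s:ℝ)+1)) (sub_nonneg.mpr hglt.le)])
    rw [← hg'] at hcover
    have hend : 2 * π * (s : ℝ) / (((s : ℝ) + 1) * g') + (g' - 1) * (2 * π / g')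
        = 2 * π * (((s : ℝ) + 1) * g' - 1) / (((s : ℝ) + 1) * g') := by
      field_simp
      ring
    rw [hcover, hend, hg']
end

section
/- Assume G : ℕ → ℕ is strictly increasing with G 1 = 1, and there is an integer s ≥ 2 such that G (i+1) ≤ s · G i for all i ≥ 1. For i ≥ 1 define A_i = ⋃_{m=0}^{G i − 1} [2π/((s+1)·G i) + 2π m/(G i), 2π s/((s+1)·G i) + 2π m/(G i)] ⊆ ℝ. Then for every n ≥ 2 and every k with 1 ≤ k ≤ G n − 1, the angle 2π k / (G n) lies in ⋃_{i=1}^{n−1} A_i; consequently, there exists j with 1 ≤ j ≤ n−1 such that the representative of 2π k · G j / (G n) modulo 2π lies in the interval [2π/(s+1), 2π s/(s+1)]. -/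
open Real

lemma core_lemma (G : ℕ → ℕ) (hG1 : G 1 = 1) (s N n : ℕ) (hs2 : 2 ≤ s)
    (hs : ∀ i, 1 ≤ i → G (i + 1) ≤ s * G i) (hn : 2 ≤ n) (hN : G n = N)
    (k : ℕ) (hk : 1 ≤ k) (hsmall : (s + 1) * k < N)
    (havoid : ∀ j, 1 ≤ j → j ≤ n - 1 →
      ¬(N ≤ (s + 1) * (k * G j) ∧ (s + 1) * (k * G j) ≤ s * N)) : False := by
  have hN0 : 0 < N := lt_of_le_of_lt (Nat.zero_le _) hsmall
  have key : ∀ j, 1 ≤ j → j ≤ n - 1 → (s + 1) * (k * G j) < N := by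
    intro j hj
    induction j, hj using Nat.le_induction with
    | base => intro _; rw [hG1, Nat.mul_one]; exact hsmall
    | succ j hj ih =>
      intro hj2
      have ihj : (s + 1) * (k * G j) < N := ih (by omega)
      have hb : G (j + 1) ≤ s * G j := hs j hj
      have h2 : (s + 1) * (k * G (j + 1)) ≤ s * ((s + 1) * (k * G j)) := by
        calc (s + 1) * (k * G (j + 1)) ≤ (s + 1) * (k * (s * G j)) := by
              exact Nat.mul_le_mul_left _ (Nat.mul_le_mul_left _ hb)
          _ = s * ((s + 1) * (k * G j)) := by ring
      have h3 : s * ((s + 1) * (k * G j)) < s * N :=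
        Nat.mul_lt_mul_of_le_of_lt (le_refl s) ihj (by omega)
      have h4 := havoid (j + 1) (by omega) hj2
      set X := (s + 1) * (k * G (j + 1)) with hX
      set Y := s * N with hY
      omega
  have h := key (n - 1) (by omega) (le_refl _)
  have hb : G (n - 1 + 1) ≤ s * G (n - 1) := hs (n - 1) (by omega)
  have hnn : n - 1 + 1 = n := by omega
  rw [hnn] at hb
  have h2 : (s + 1) * (k * G n) ≤ s * ((s + 1) * (k * G (n - 1))) := by
    calc (s + 1) * (k * G n) ≤ (s + 1) * (k * (s * G (n - 1))) :=
          Nat.mul_le_mul_left _ (Nat.mul_le_mul_left _ hb)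
      _ = s * ((s + 1) * (k * G (n - 1))) := by ring
  have h3 : s * ((s + 1) * (k * G (n - 1))) < s * N :=
    Nat.mul_lt_mul_of_le_of_lt (le_refl s) h (by omega)
  rw [hN] at h2
  have h5 : (s + 1) * N ≤ (s + 1) * (k * N) :=
    Nat.mul_le_mul_left _ (Nat.le_mul_of_pos_left _ (by omega))
  have h6 : s * N < (s + 1) * N := by
    have : s < s + 1 := by omega
    exact Nat.mul_lt_mul_of_lt_of_le this (le_refl N) hN0
  omega

lemma main_nat (G : ℕ → ℕ) (hG1 : G 1 = 1) (hmono : ∀ i, 1 ≤ i → G i < G (i + 1))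
    (s : ℕ) (hs2 : 2 ≤ s) (hs : ∀ i, 1 ≤ i → G (i + 1) ≤ s * G i)
    (n : ℕ) (hn : 2 ≤ n) (k : ℕ) (hk1 : 1 ≤ k) (hk2 : k ≤ G n - 1)
    (hcore : ∀ (k' : ℕ), 1 ≤ k' → (s + 1) * k' < G n →
      (∀ j, 1 ≤ j → j ≤ n - 1 →
        ¬(G n ≤ (s + 1) * (k' * G j) ∧ (s + 1) * (k' * G j) ≤ s * G n)) → False) :
    ∃ j m, 1 ≤ j ∧ j ≤ n - 1 ∧ m < G j ∧
      G n * (1 + (s + 1) * m) ≤ (s + 1) * (k * G j) ∧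
      (s + 1) * (k * G j) ≤ G n * (s + (s + 1) * m) := by
  have hpos : ∀ j, 1 ≤ j → 1 ≤ G j := by
    intro j hj
    induction j, hj using Nat.le_induction with
    | base => omega
    | succ j hj ih => have := hmono j hj; omega
  have hN2 : 2 ≤ G n := by
    have h1 := hmono (n - 1) (by omega)
    have h2 := hpos (n - 1) (by omega)
    have : n - 1 + 1 = n := by omega
    omega
  have hkN : k < G n := by omega
  by_contra hcon
  have havoidk : ∀ j, 1 ≤ j → j ≤ n - 1 →
      ¬(G n ≤ (s + 1) * (k * G j) ∧ (s + 1) * (k * G j) ≤ s * G n) := by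
    intro j h1 h2 hband
    refine hcon ⟨j, 0, h1, h2, hpos j h1, ?_, ?_⟩
    · have e : G n * (1 + (s + 1) * 0) = G n := by ring
      rw [e]; exact hband.1
    · have e : G n * (s + (s + 1) * 0) = s * G n := by ring
      rw [e]; exact hband.2
  have h1 := havoidk 1 (le_refl 1) (by omega)
  rw [hG1, Nat.mul_one] at h1
  rcases lt_or_ge ((s + 1) * k) (G n) with hsm | hlg
  · exact hcore k hk1 hsm havoidk
  · have hlarge : s * G n < (s + 1) * k := by
      by_contra hc
      push_neg at hc
      exact h1 ⟨hlg, hc⟩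
    set k' := G n - k with hk'
    have hk'1 : 1 ≤ k' := by omega
    have hkk : (k' : ℤ) = (G n : ℤ) - (k : ℤ) := by
      rw [hk']; push_cast [hkN.le]; ring
    have hk'small : (s + 1) * k' < G n := by
      zify
      rw [hkk]
      push_cast at hlarge
      nlinarith
    refine hcore k' hk'1 hk'small ?_
    intro j hj1 hj2 hband
    have hg1 : 1 ≤ G j := hpos j hj1
    refine hcon ⟨j, G j - 1, hj1, hj2, by omega, ?_, ?_⟩
    · have hb2 := hband.2
      zify [hg1] at hb2 ⊢
      rw [hkk] at hb2
      nlinarith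
    · have hb1 := hband.1
      zify [hg1] at hb1 ⊢
      rw [hkk] at hb1
      nlinarith

/-- Every angle `2πk/G n` (for `1 ≤ k ≤ G n - 1`) lies in `⋃_{i=1}^{n-1} A i`, and
consequently for some `j` with `1 ≤ j ≤ n-1` the representative of `2πk G j / G n`
modulo `2π` lies in `[2π/(s+1), 2πs/(s+1)]`. -/
theorem angle_mem_union_Ai
    (G : ℕ → ℕ) (hG1 : G 1 = 1) (hmono : ∀ i, 1 ≤ i → G i < G (i + 1))
    (s : ℕ) (hs2 : 2 ≤ s) (hs : ∀ i, 1 ≤ i → G (i + 1) ≤ s * G i)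
    (A : ℕ → Set ℝ)
    (hA : ∀ i, 1 ≤ i → A i =
      ⋃ m ∈ Finset.range (G i),
        Set.Icc (2 * π / (((s : ℝ) + 1) * G i) + 2 * π * m / G i)
          (2 * π * s / (((s : ℝ) + 1) * G i) + 2 * π * m / G i))
    (n : ℕ) (hn : 2 ≤ n) (k : ℕ) (hk1 : 1 ≤ k) (hk2 : k ≤ G n - 1) :
    (2 * π * k / G n) ∈ ⋃ i ∈ Finset.Icc 1 (n - 1), A i ∧
      ∃ j, 1 ≤ j ∧ j ≤ n - 1 ∧ ∃ q : ℤ,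
        2 * π * k * G j / G n - 2 * π * q ∈
          Set.Icc (2 * π / ((s : ℝ) + 1)) (2 * π * s / ((s : ℝ) + 1)) := by
  have hpos : ∀ j, 1 ≤ j → 1 ≤ G j := by
    intro j hj
    induction j, hj using Nat.le_induction with
    | base => omega
    | succ j hj ih => have := hmono j hj; omega
  obtain ⟨j, m, hj1, hj2, hm, hb1, hb2⟩ :=
    main_nat G hG1 hmono s hs2 hs n hn k hk1 hk2
      (fun k' a b c => core_lemma G hG1 s (G n) n hs2 hs hn rfl k' a b c)
  have hπ := pi_pos
  have hGj : (0:ℝ) < G j := by exact_mod_cast hpos j hj1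
  have hN2 : 2 ≤ G n := by
    have h1 := hmono (n - 1) (by omega)
    have h2 := hpos (n - 1) (by omega)
    have : n - 1 + 1 = n := by omega
    omega
  have hNR : (0:ℝ) < G n := by
    have : (0:ℕ) < G n := by omega
    exact_mod_cast this
  have hs1 : (0:ℝ) < (s:ℝ) + 1 := by positivity
  have Hb1 : (G n : ℝ) * (1 + ((s:ℝ) + 1) * m) ≤ ((s:ℝ) + 1) * ((k:ℝ) * G j) := by
    exact_mod_cast hb1
  have Hb2 : ((s:ℝ) + 1) * ((k:ℝ) * G j) ≤ (G n : ℝ) * ((s:ℝ) + ((s:ℝ) + 1) * m) := by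
    exact_mod_cast hb2
  constructor
  · refine Set.mem_iUnion₂.mpr ⟨j, Finset.mem_Icc.mpr ⟨hj1, hj2⟩, ?_⟩
    rw [hA j hj1]
    refine Set.mem_iUnion₂.mpr ⟨m, Finset.mem_range.mpr hm, ?_, ?_⟩
    · have e1 : 2 * π / (((s:ℝ) + 1) * G j) + 2 * π * m / G j
          = 2 * π * (1 + ((s:ℝ) + 1) * m) / (((s:ℝ) + 1) * G j) := by
        field_simp
      rw [e1, div_le_div_iff₀ (by positivity) hNR]
      nlinarith [mul_le_mul_of_nonneg_left Hb1 (show (0:ℝ) ≤ 2 * π by positivity)]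
    · have e2 : 2 * π * s / (((s:ℝ) + 1) * G j) + 2 * π * m / G j
          = 2 * π * ((s:ℝ) + ((s:ℝ) + 1) * m) / (((s:ℝ) + 1) * G j) := by
        field_simp
      rw [e2, div_le_div_iff₀ hNR (by positivity)]
      nlinarith [mul_le_mul_of_nonneg_left Hb2 (show (0:ℝ) ≤ 2 * π by positivity)]
  · refine ⟨j, hj1, hj2, (m : ℤ), ?_, ?_⟩
    · have e : 2 * π * k * G j / G n - 2 * π * ((m:ℤ):ℝ)
          = (2 * π * ((k:ℝ) * G j) - 2 * π * m * G n) / G n := by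
        push_cast
        field_simp
      rw [e, div_le_div_iff₀ hs1 hNR]
      nlinarith [mul_le_mul_of_nonneg_left Hb1 (show (0:ℝ) ≤ 2 * π by positivity)]
    · have e : 2 * π * k * G j / G n - 2 * π * ((m:ℤ):ℝ)
          = (2 * π * ((k:ℝ) * G j) - 2 * π * m * G n) / G n := by
        push_cast
        field_simp
      rw [e, div_le_div_iff₀ hNR hs1]
      nlinarith [mul_le_mul_of_nonneg_left Hb2 (show (0:ℝ) ≤ 2 * π by positivity)]
end

section
/- Assume G : ℕ → ℕ is strictly increasing with G 1 = 1, and there is an integer s ≥ 2 such that G (i+1) ≤ s · G i for all i ≥ 1. Fix n ≥ 2, set m = G n, and let λ_k = (1/n)·Σ_{i=1}^{n} exp(2π I k G i / m) where I = √(-1). Then for every k with 1 ≤ k ≤ m − 1, the eigenvalue modulus satisfies |λ_k| ≤ 1 − (2/n)·(1 − |cos(π/(s+1))|). -/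
open Finset Real


-- helper monotonicity
lemma Gmono (G : ℕ → ℕ) (hmono : ∀ i, 1 ≤ i → G i < G (i + 1)) :
    ∀ a b, 1 ≤ a → a ≤ b → G a ≤ G b := by
  intro a b ha hab
  induction b with
  | zero => omega
  | succ b ih =>
    rcases Nat.lt_or_ge a (b+1) with h | h
    · exact le_trans (ih (by omega)) (le_of_lt (hmono b (by omega)))
    · have : a = b + 1 := by omega
      simp [this]

-- existence of a good index
lemma exists_good (G : ℕ → ℕ) (hG1 : G 1 = 1) (hmono : ∀ i, 1 ≤ i → G i < G (i + 1))
    (s : ℕ) (hs1 : 1 ≤ s) (hs : ∀ i, 1 ≤ i → G (i + 1) ≤ s * G i)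
    (n : ℕ) (hn : 2 ≤ n) (m : ℕ) (hm : m = G n)
    (k : ℕ) (hk1 : 1 ≤ k) (hk2 : 2 * k ≤ m) :
    ∃ j, 1 ≤ j ∧ j < n ∧ m ≤ (s+1) * (k * G j) ∧ (s+1) * (k * G j) ≤ s * m := by
  have hmn : 1 ≤ m := by
    have := Gmono G hmono 1 n (le_refl 1) (by omega); omega
  have hex : ∃ j, 1 ≤ j ∧ m ≤ (s+1) * (k * G j) := by
    refine ⟨n, by omega, ?_⟩
    have : m ≤ k * G n := by
      rw [← hm]; nlinarith
    nlinarith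
  classical
  set j := Nat.find hex with hj
  obtain ⟨hj1, hjP⟩ := Nat.find_spec hex
  have hupper : (s+1) * (k * G j) ≤ s * m := by
    rcases Nat.lt_or_ge j 2 with h2 | h2
    · have hjeq : j = 1 := by omega
      rw [hjeq, hG1, mul_one]
      -- m ≤ (s+1)*k, and 2k ≤ m
      nlinarith
    · have hmin : ¬ (1 ≤ j - 1 ∧ m ≤ (s+1) * (k * G (j-1))) :=
        Nat.find_min hex (by omega)
      have hlt : (s+1) * (k * G (j-1)) < m := by
        rcases Nat.lt_or_ge ((s+1) * (k * G (j-1))) m with h | h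
        · exact h
        · exact absurd ⟨by omega, h⟩ hmin
      have hstep : G j ≤ s * G (j-1) := by
        have := hs (j-1) (by omega)
        have hje : j - 1 + 1 = j := by omega
        rwa [hje] at this
      calc (s+1) * (k * G j) ≤ (s+1) * (k * (s * G (j-1))) := by
            apply Nat.mul_le_mul_left; exact Nat.mul_le_mul_left _ hstep
        _ = s * ((s+1) * (k * G (j-1))) := by ring
        _ ≤ s * m := by
            exact Nat.mul_le_mul_left _ (by omega)
  have hjn : j < n := by
    by_contra h
    have hge : n ≤ j := by omega
    have : G n ≤ G j := Gmono G hmono n j (by omega) hge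
    have hGn : m ≤ G j := by omega
    have h1 : m ≤ k * G j := le_trans hGn (Nat.le_mul_of_pos_left _ hk1)
    have h2 : (s+1) * m ≤ (s+1) * (k * G j) := Nat.mul_le_mul_left _ h1
    nlinarith
  exact ⟨j, hj1, hjn, hjP, hupper⟩

-- cosine bound
lemma coshalf (c x : ℝ) (hc0 : 0 < c) (hc : c ≤ 1/2) (h1 : c ≤ x) (h2 : x ≤ 1/2) :
    |Real.cos (π * x)| ≤ Real.cos (π * c) := by
  have hpi := Real.pi_pos
  have hnn : 0 ≤ Real.cos (π * x) := by
    apply Real.cos_nonneg_of_mem_Icc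
    constructor <;> nlinarith
  rw [abs_of_nonneg hnn]
  apply Real.cos_le_cos_of_nonneg_of_le_pi <;> nlinarith

lemma cosbound (c x : ℝ) (hc0 : 0 < c) (hc : c ≤ 1/2) (h1 : c ≤ x) (h2 : x ≤ 1 - c) :
    |Real.cos (π * x)| ≤ Real.cos (π * c) := by
  rcases le_or_gt x (1/2) with h | h
  · exact coshalf c x hc0 hc h1 h
  · have : |Real.cos (π * x)| = |Real.cos (π * (1 - x))| := by
      have : π * (1 - x) = π - π * x := by ring
      rw [this, Real.cos_pi_sub, abs_neg]
    rw [this]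
    exact coshalf c (1-x) hc0 hc (by linarith) (by linarith)

-- |exp(θI)+1| = 2|cos(θ/2)|
lemma abs_exp_add_one (θ : ℝ) :
    ‖Complex.exp (θ * Complex.I) + 1‖ = 2 * |Real.cos (θ/2)| := by
  have key : Complex.exp (θ * Complex.I) + 1
      = Complex.exp ((θ/2 : ℝ) * Complex.I) * (2 * Complex.cos ((θ/2 : ℝ))) := by
    have h1 : Complex.exp (((θ/2:ℝ):ℂ)*Complex.I) * Complex.exp (((θ/2:ℝ):ℂ)*Complex.I)
        = Complex.exp ((θ:ℂ)*Complex.I) := by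
      rw [← Complex.exp_add]; congr 1; push_cast; ring
    have h2 : Complex.exp (((θ/2:ℝ):ℂ)*Complex.I) * Complex.exp (-((θ/2:ℝ):ℂ)*Complex.I) = 1 := by
      rw [← Complex.exp_add,
        show ((θ/2:ℝ):ℂ)*Complex.I + -((θ/2:ℝ):ℂ)*Complex.I = 0 from by ring, Complex.exp_zero]
    rw [Complex.cos,
      show (2:ℂ) * ((Complex.exp (((θ/2:ℝ):ℂ)*Complex.I) + Complex.exp (-((θ/2:ℝ):ℂ)*Complex.I))/2)
        = Complex.exp (((θ/2:ℝ):ℂ)*Complex.I) + Complex.exp (-((θ/2:ℝ):ℂ)*Complex.I) from by ring,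
      mul_add, h1, h2]
  rw [key, norm_mul, Complex.norm_exp_ofReal_mul_I, one_mul]
  rw [← Complex.ofReal_cos]
  rw [show (2 : ℂ) * (Real.cos (θ/2) : ℂ) = ((2 * Real.cos (θ/2) : ℝ) : ℂ) by push_cast; ring]
  rw [Complex.norm_real, Real.norm_eq_abs, abs_mul]
  norm_num

/-- Upper bound on the moduli of the nontrivial eigenvalues of the random walk
determined by a linear recurrence: `|λ_k| ≤ 1 - (2/n)(1 - |cos(π/(s+1))|)`. -/
theorem eigenvalue_modulus_upper_bound
    (G : ℕ → ℕ) (hG1 : G 1 = 1) (hmono : ∀ i, 1 ≤ i → G i < G (i + 1))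
    (s : ℕ) (hs2 : 2 ≤ s) (hs : ∀ i, 1 ≤ i → G (i + 1) ≤ s * G i)
    (n : ℕ) (hn : 2 ≤ n) (m : ℕ) (hm : m = G n)
    (k : ℕ) (hk1 : 1 ≤ k) (hk2 : k ≤ m - 1) :
    ‖(1 / n : ℂ) *
        ∑ i ∈ Finset.Icc 1 n, Complex.exp (2 * π * Complex.I * k * G i / m)‖ ≤
      1 - (2 / n) * (1 - |Real.cos (π / ((s : ℝ) + 1))|) := by
  have hpi := Real.pi_pos
  -- basic size facts
  have hm2 : 2 ≤ m := by
    have h12 : G 1 < G 2 := hmono 1 le_rfl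
    have h2n : G 2 ≤ G n := Gmono G hmono 2 n (by omega) hn
    omega
  have hkm : k < m := by omega
  have hm0 : (0:ℝ) < m := by positivity
  have hn0 : (0:ℝ) < n := by positivity
  set k' := min k (m - k) with hk'
  have hk'1 : 1 ≤ k' := by omega
  have hk'2 : 2 * k' ≤ m := by omega
  obtain ⟨j, hj1, hjn, hlow, hhigh⟩ :=
    exists_good G hG1 hmono s (by omega) hs n hn m hm k' hk'1 hk'2
  set c : ℝ := 1 / ((s:ℝ) + 1) with hc
  have hs0 : (0:ℝ) < (s:ℝ) + 1 := by positivity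
  have hc0 : 0 < c := by positivity
  have hchalf : c ≤ 1/2 := by
    rw [hc, div_le_div_iff₀ hs0 (by norm_num)]
    have : (2:ℝ) ≤ (s:ℝ) := by exact_mod_cast hs2
    linarith
  -- cos bound with k'
  have hcos' : |Real.cos (π * ((k':ℝ) * G j / m))| ≤ Real.cos (π * c) := by
    apply cosbound c _ hc0 hchalf
    · rw [hc, div_le_div_iff₀ hs0 hm0]
      have : (m:ℝ) ≤ ((s:ℝ)+1) * ((k':ℝ) * G j) := by exact_mod_cast hlow
      linarith
    · have h1 : ((s:ℝ)+1) * ((k':ℝ) * G j) ≤ (s:ℝ) * m := by exact_mod_cast hhigh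
      rw [hc]
      rw [div_le_iff₀ hm0] at *
      have : (1:ℝ) - 1/((s:ℝ)+1) = (s:ℝ)/((s:ℝ)+1) := by field_simp; ring
      rw [this, div_mul_eq_mul_div, le_div_iff₀ hs0]
      nlinarith
  -- cos bound with k
  have hcos : |Real.cos (π * ((k:ℝ) * G j / m))| ≤ Real.cos (π * c) := by
    rcases le_or_gt k (m - k) with h | h
    · have : k' = k := by omega
      rwa [this] at hcos'
    · have hkk : k' = m - k := by omega
      have hkr : (k:ℝ) = (m:ℝ) - (k':ℝ) := by
        rw [hkk]; push_cast [Nat.cast_sub (le_of_lt hkm)]; ring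
      have harg : π * ((k:ℝ) * G j / m) = (G j : ℝ) * π - π * ((k':ℝ) * G j / m) := by
        rw [hkr]; field_simp
      rw [harg, Real.cos_nat_mul_pi_sub, abs_mul, abs_pow, abs_neg, abs_one, one_pow, one_mul]
      exact hcos'
  -- the exponential terms
  set f : ℕ → ℂ := fun i => Complex.exp (((2 * π * k * G i / m : ℝ) : ℂ) * Complex.I) with hf
  have hrw : (∑ i ∈ Finset.Icc 1 n, Complex.exp (2 * π * Complex.I * k * G i / m))
      = ∑ i ∈ Finset.Icc 1 n, f i :=
    Finset.sum_congr rfl (fun i _ => congrArg Complex.exp (by push_cast; ring))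
  rw [hrw]
  have hexp : ∀ i, f i = Complex.exp (((2 * π * k * G i / m : ℝ) : ℂ) * Complex.I) :=
    fun i => rfl
  have habs1 : ∀ i, ‖f i‖ = 1 := by
    intro i; rw [hexp i, Complex.norm_exp_ofReal_mul_I]
  have hfn : f n = 1 := by
    rw [hexp n]
    have hGn : (G n : ℝ) = m := by rw [hm]
    have : ((2 * π * k * G n / m : ℝ) : ℂ) * Complex.I = (k:ℤ) * (2 * π * Complex.I) := by
      rw [hGn, mul_div_assoc, div_self (ne_of_gt hm0), mul_one]
      push_cast
      ring
    rw [this, Complex.exp_int_mul_two_pi_mul_I]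
  -- pair bound
  have hpair : ‖f j + f n‖ ≤ 2 * Real.cos (π * c) := by
    rw [hfn, hexp j, abs_exp_add_one]
    have : (2 * π * k * G j / m : ℝ) / 2 = π * ((k:ℝ) * G j / m) := by ring
    rw [this]
    linarith
  -- sum split
  have hjS : j ∈ Finset.Icc 1 n := by simp [Finset.mem_Icc]; omega
  have hnS : n ∈ Finset.Icc 1 n := by simp [Finset.mem_Icc]; omega
  have hjne : j ≠ n := by omega
  have hsub : ({j, n} : Finset ℕ) ⊆ Finset.Icc 1 n := by
    intro x hx
    simp only [Finset.mem_insert, Finset.mem_singleton] at hx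
    rcases hx with rfl | rfl <;> assumption
  have hunion : (Finset.Icc 1 n \ {j, n}) ∪ {j, n} = Finset.Icc 1 n :=
    Finset.sdiff_union_of_subset hsub
  have hcard : (Finset.Icc 1 n \ ({j, n} : Finset ℕ)).card = n - 2 := by
    rw [Finset.card_sdiff_of_subset hsub, Finset.card_pair hjne, Nat.card_Icc]
    omega
  have hsplit : ∑ i ∈ Finset.Icc 1 n, f i
      = (∑ i ∈ Finset.Icc 1 n \ {j, n}, f i) + (f j + f n) := by
    conv_lhs => rw [← hunion]
    rw [Finset.sum_union Finset.sdiff_disjoint, Finset.sum_pair hjne]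
  have hT : ‖∑ i ∈ Finset.Icc 1 n \ {j, n}, f i‖ ≤ (n:ℝ) - 2 := by
    calc ‖∑ i ∈ Finset.Icc 1 n \ {j, n}, f i‖
        ≤ ∑ i ∈ Finset.Icc 1 n \ {j, n}, ‖f i‖ :=
          norm_sum_le _ _
      _ = ((Finset.Icc 1 n \ ({j, n} : Finset ℕ)).card : ℝ) := by
          simp [habs1]
      _ = (n:ℝ) - 2 := by
          rw [hcard]; push_cast [Nat.cast_sub hn]; ring
  have htot : ‖∑ i ∈ Finset.Icc 1 n, f i‖
      ≤ (n:ℝ) - 2 + 2 * Real.cos (π * c) := by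
    rw [hsplit]
    calc ‖_‖ ≤ ‖∑ i ∈ Finset.Icc 1 n \ {j, n}, f i‖
          + ‖f j + f n‖ := norm_add_le _ _
      _ ≤ (n:ℝ) - 2 + 2 * Real.cos (π * c) := by linarith
  -- conclude
  have hcabs : |Real.cos (π / ((s:ℝ) + 1))| = Real.cos (π * c) := by
    rw [hc, mul_one_div]
    apply abs_of_nonneg
    apply Real.cos_nonneg_of_mem_Icc
    have hs2' : (2:ℝ) ≤ (s:ℝ) := by exact_mod_cast hs2
    have hp0 : 0 ≤ π / ((s:ℝ)+1) := by positivity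
    constructor
    · linarith
    · rw [div_le_iff₀ hs0]
      nlinarith
  rw [norm_mul, hcabs]
  have h1n : ‖1 / (n:ℂ)‖ = 1 / (n:ℝ) := by
    rw [norm_div, norm_one, Complex.norm_natCast]
  rw [h1n, div_mul_eq_mul_div, one_mul, div_le_iff₀ hn0]
  have hne : (n:ℝ) ≠ 0 := ne_of_gt hn0
  have hexp2 : (1 - 2/(n:ℝ) * (1 - Real.cos (π * c))) * n = n - 2*(1 - Real.cos (π*c)) := by
    field_simp
  rw [hexp2]
  linarith [htot]
end

section
/- Fix a sequence of positive integers G 1, …, G n with n ≥ 1 and set m = G n with m ≥ 2. Let μ : ZMod m → ℝ, μ x = (1/n)·card{i ∈ Finset.Icc 1 n : (G i : ZMod m) = x}; let p 0 be the indicator of 0 ∈ ZMod m and p (t+1) x = Σ_{y ∈ ZMod m} p t y · μ (x − y); let π x = 1/m; and let λ_k = (1/n)·Σ_{i=1}^{n} exp(2π I k G i / m) where I = √(-1). Then for every t ≥ 1, ((1/2)·Σ_{x ∈ ZMod m} |p t x − π x|)² ≤ (1/4)·Σ_{k=1}^{m−1} |λ_k|^{2t}. -/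
open Finset Real

/-- Step distribution of the random walk on `ℤ_m` with steps drawn uniformly from
`{G 1, …, G n}`. -/
noncomputable def stepDist (G : ℕ → ℕ) (n m : ℕ) [NeZero m] (x : ZMod m) : ℝ :=
  (1 / n : ℝ) * ((Finset.Icc 1 n).filter (fun i => (G i : ZMod m) = x)).card

/-- `t`-step distribution of the random walk started at `0`. -/
noncomputable def walkDist (G : ℕ → ℕ) (n m : ℕ) [NeZero m] : ℕ → ZMod m → ℝ
  | 0 => fun x => if x = 0 then 1 else 0
  | t + 1 => fun x => ∑ y : ZMod m, walkDist G n m t y * stepDist G n m (x - y)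


section Fourier
variable {m : ℕ} [NeZero m]

noncomputable def myF (f : ZMod m → ℂ) (k : ZMod m) : ℂ :=
  ∑ x : ZMod m, f x * ZMod.stdAddChar (x * k)

lemma orth (t : ZMod m) :
    ∑ k : ZMod m, ZMod.stdAddChar (t * k) = if t = 0 then (m : ℂ) else 0 := by
  split_ifs with h
  · simp [h, Finset.card_univ]
  · exact AddChar.sum_eq_zero_of_ne_one (ZMod.isPrimitive_stdAddChar m h)

lemma conj_std (a : ZMod m) :
    (starRingEnd ℂ) (ZMod.stdAddChar a) = ZMod.stdAddChar (-a) := by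
  have h1 : ZMod.stdAddChar a * ZMod.stdAddChar (-a) = 1 := by
    rw [← AddChar.map_add_eq_mul]; simp
  have habs : ‖(ZMod.stdAddChar : AddChar (ZMod m) ℂ) a‖ = 1 := by
    rw [ZMod.stdAddChar_apply]; exact Circle.norm_coe _
  rw [← Complex.inv_eq_conj habs, inv_eq_of_mul_eq_one_right h1]

lemma myF_conv (f g : ZMod m → ℂ) (k : ZMod m) :
    myF (fun x => ∑ y : ZMod m, f y * g (x - y)) k = myF f k * myF g k := by
  unfold myF
  rw [Finset.sum_mul]
  rw [show (∑ x : ZMod m, (∑ y : ZMod m, f y * g (x - y)) * ZMod.stdAddChar (x * k))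
      = ∑ x : ZMod m, ∑ y : ZMod m, f y * ZMod.stdAddChar (y * k) *
          (g (x - y) * ZMod.stdAddChar ((x - y) * k)) from ?_, Finset.sum_comm]
  · refine Finset.sum_congr rfl fun y _ => ?_
    rw [← Finset.mul_sum]
    congr 1
    exact Fintype.sum_equiv (Equiv.subRight y) _ _ (fun x => rfl)
  · refine Finset.sum_congr rfl fun x _ => ?_
    rw [Finset.sum_mul]
    refine Finset.sum_congr rfl fun y _ => ?_
    have : ZMod.stdAddChar (x * k) =
        ZMod.stdAddChar (y * k) * ZMod.stdAddChar ((x - y) * k) := by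
      rw [← AddChar.map_add_eq_mul]; ring_nf
    rw [this]; ring

lemma plancherel (f : ZMod m → ℂ) :
    ∑ k : ZMod m, Complex.normSq (myF f k) = m * ∑ x : ZMod m, Complex.normSq (f x) := by
  have key : ∑ k : ZMod m, (myF f k * (starRingEnd ℂ) (myF f k))
      = (m : ℂ) * ∑ x : ZMod m, (f x * (starRingEnd ℂ) (f x)) := by
    have expand : ∀ k : ZMod m, myF f k * (starRingEnd ℂ) (myF f k)
        = ∑ x : ZMod m, ∑ y : ZMod m,
            f x * (starRingEnd ℂ) (f y) * ZMod.stdAddChar ((x - y) * k) := by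
      intro k
      unfold myF
      rw [map_sum, Finset.sum_mul]
      refine Finset.sum_congr rfl fun x _ => ?_
      rw [Finset.mul_sum]
      refine Finset.sum_congr rfl fun y _ => ?_
      rw [map_mul (starRingEnd ℂ), conj_std]
      have : ZMod.stdAddChar ((x - y) * k) =
          ZMod.stdAddChar (x * k) * ZMod.stdAddChar (-(y * k)) := by
        rw [← AddChar.map_add_eq_mul]; ring_nf
      rw [this]; ring
    simp_rw [expand]
    rw [Finset.sum_comm]
    have : ∀ x : ZMod m, ∑ k : ZMod m, ∑ y : ZMod m,
        f x * (starRingEnd ℂ) (f y) * ZMod.stdAddChar ((x - y) * k)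
        = (m : ℂ) * (f x * (starRingEnd ℂ) (f x)) := by
      intro x
      rw [Finset.sum_comm]
      have : ∀ y : ZMod m, ∑ k : ZMod m,
          f x * (starRingEnd ℂ) (f y) * ZMod.stdAddChar ((x - y) * k)
          = f x * (starRingEnd ℂ) (f y) * (if x - y = 0 then (m : ℂ) else 0) := by
        intro y; rw [← Finset.mul_sum, orth]
      simp_rw [this, mul_ite, mul_zero, sub_eq_zero]
      rw [Finset.sum_ite_eq Finset.univ x (fun y => f x * (starRingEnd ℂ) (f y) * m)]
      simp [mul_comm]
    simp_rw [this, ← Finset.mul_sum]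
  have := congrArg Complex.re key
  simpa [Complex.mul_conj, ← Complex.ofReal_sum, Complex.ofReal_mul] using this

end Fourier


section Walk
variable (G : ℕ → ℕ) (n m : ℕ) [NeZero m]

lemma myF_step (k : ZMod m) :
    myF (fun x => (stepDist G n m x : ℂ)) k
      = (1 / n : ℂ) * ∑ i ∈ Finset.Icc 1 n, ZMod.stdAddChar ((G i : ZMod m) * k) := by
  have key : ∀ x : ZMod m, ((stepDist G n m x : ℝ) : ℂ) * ZMod.stdAddChar (x * k)
      = (1 / n : ℂ) * ∑ i ∈ (Finset.Icc 1 n).filter (fun i => (G i : ZMod m) = x),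
          ZMod.stdAddChar ((G i : ZMod m) * k) := by
    intro x
    have hsum : ∑ i ∈ (Finset.Icc 1 n).filter (fun i => (G i : ZMod m) = x),
          ZMod.stdAddChar ((G i : ZMod m) * k)
        = ∑ _i ∈ (Finset.Icc 1 n).filter (fun i => (G i : ZMod m) = x),
          ZMod.stdAddChar (x * k) :=
      Finset.sum_congr rfl fun i hi => by rw [(Finset.mem_filter.mp hi).2]
    rw [hsum, Finset.sum_const, nsmul_eq_mul]
    unfold stepDist
    push_cast
    ring
  unfold myF
  simp_rw [key, ← Finset.mul_sum]
  congr 1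
  exact Finset.sum_fiberwise_of_maps_to (fun i _ => Finset.mem_univ _) _

lemma sum_stepDist (hn : 1 ≤ n) : ∑ x : ZMod m, stepDist G n m x = 1 := by
  have hcard : ∑ x : ZMod m, ((Finset.Icc 1 n).filter (fun i => (G i : ZMod m) = x)).card
      = (Finset.Icc 1 n).card :=
    (Finset.card_eq_sum_card_fiberwise (fun i _ => Finset.mem_univ ((G i : ZMod m)))).symm
  unfold stepDist
  rw [← Finset.mul_sum, ← Nat.cast_sum, hcard, Nat.card_Icc, Nat.add_sub_cancel]
  have : (n : ℝ) ≠ 0 := Nat.cast_ne_zero.mpr (by omega)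
  field_simp

lemma myF_walk (t : ℕ) (k : ZMod m) :
    myF (fun x => (walkDist G n m t x : ℂ)) k
      = (myF (fun x => (stepDist G n m x : ℂ)) k) ^ t := by
  induction t with
  | zero =>
    unfold myF walkDist
    simp [apply_ite (fun r : ℝ => (r : ℂ)), ite_mul]
  | succ t ih =>
    have : (fun x => ((walkDist G n m (t + 1) x : ℝ) : ℂ))
        = fun x => ∑ y : ZMod m, (walkDist G n m t y : ℂ) * (stepDist G n m (x - y) : ℂ) := by
      funext x
      show ((∑ y : ZMod m, walkDist G n m t y * stepDist G n m (x - y) : ℝ) : ℂ) = _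
      push_cast; rfl
    rw [this, myF_conv (fun y => ((walkDist G n m t y : ℝ) : ℂ))
      (fun z => ((stepDist G n m z : ℝ) : ℂ)), ih, pow_succ]

end Walk


/-- Upper Bound Lemma (Diaconis–Shahshahani) for the random walk on `ℤ_m`
determined by the sequence `G 1, …, G n`. -/
theorem upper_bound_lemma
    (G : ℕ → ℕ) (n : ℕ) (hn : 1 ≤ n) (hGpos : ∀ i, 1 ≤ i → i ≤ n → 0 < G i)
    (m : ℕ) [NeZero m] (hm : m = G n) (hm2 : 2 ≤ m) (t : ℕ) (ht : 1 ≤ t) :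
    ((1 / 2 : ℝ) * ∑ x : ZMod m, |walkDist G n m t x - 1 / m|) ^ 2 ≤
      (1 / 4 : ℝ) * ∑ k ∈ Finset.Icc 1 (m - 1),
        (‖(1 / n : ℂ) *
          ∑ i ∈ Finset.Icc 1 n, Complex.exp (2 * π * Complex.I * k * G i / m)‖) ^ (2 * t) := by
  classical
  have hm0 : m ≠ 0 := NeZero.ne m
  set p : ZMod m → ℝ := walkDist G n m t with hp
  set stepC : ZMod m → ℂ := fun x => (stepDist G n m x : ℂ) with hstepC
  set f : ZMod m → ℂ := fun x => ((p x - 1 / m : ℝ) : ℂ) with hf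
  -- Cauchy--Schwarz
  have h1 : (∑ x : ZMod m, |p x - 1 / m|) ^ 2 ≤ (m : ℝ) * ∑ x : ZMod m, (p x - 1 / m) ^ 2 := by
    have := sq_sum_le_card_mul_sum_sq (s := (Finset.univ : Finset (ZMod m)))
      (f := fun x => |p x - 1 / m|)
    simpa [sq_abs, Finset.card_univ, ZMod.card] using this
  -- Plancherel
  have h2 : (m : ℝ) * ∑ x : ZMod m, (p x - 1 / m) ^ 2
      = ∑ k : ZMod m, Complex.normSq (myF f k) := by
    rw [plancherel]
    congr 1
    refine Finset.sum_congr rfl fun x _ => ?_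
    rw [hf]
    rw [Complex.normSq_ofReal, sq]
  -- Fourier coefficients of f
  have horth : ∀ k : ZMod m, ∑ x : ZMod m, ZMod.stdAddChar (x * k)
      = if k = 0 then (m : ℂ) else 0 := by
    intro k
    rw [← orth k]
    exact Fintype.sum_congr _ _ fun x => by rw [mul_comm]
  have hsplit : ∀ k : ZMod m, myF f k
      = (myF stepC k) ^ t - (1 / m : ℂ) * (if k = 0 then (m : ℂ) else 0) := by
    intro k
    have : myF f k = myF (fun x => ((p x : ℝ) : ℂ)) k
        - ∑ x : ZMod m, (1 / m : ℂ) * ZMod.stdAddChar (x * k) := by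
      unfold myF
      rw [← Finset.sum_sub_distrib]
      refine Finset.sum_congr rfl fun x _ => ?_
      rw [hf]
      push_cast
      ring
    rw [this, ← Finset.mul_sum, horth, hp, myF_walk]
  have hstep0 : myF stepC 0 = 1 := by
    unfold myF
    simp only [mul_zero, AddChar.map_zero_eq_one, mul_one]
    rw [hstepC, ← Complex.ofReal_sum, sum_stepDist G n m hn, Complex.ofReal_one]
  have hF0 : myF f 0 = 0 := by
    rw [hsplit 0, hstep0, one_pow, if_pos rfl, one_div,
      inv_mul_cancel₀ (Nat.cast_ne_zero.mpr hm0)]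
    ring
  have hFk : ∀ k : ZMod m, k ≠ 0 → myF f k = (myF stepC k) ^ t := by
    intro k hk
    rw [hsplit k, if_neg hk, mul_zero, sub_zero]
  -- sum over nonzero frequencies
  have hsum : ∑ k : ZMod m, Complex.normSq (myF f k)
      = ∑ k ∈ (Finset.univ : Finset (ZMod m)).erase 0,
          ‖myF stepC k‖ ^ (2 * t) := by
    rw [← Finset.add_sum_erase _ _ (Finset.mem_univ (0 : ZMod m)), hF0]
    rw [Complex.normSq_zero, zero_add]
    refine Finset.sum_congr rfl fun k hk => ?_
    rw [hFk k (Finset.ne_of_mem_erase hk), ← Complex.sq_norm, norm_pow, ← pow_mul, mul_comm t 2]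
  -- identify with natural-number indexed eigenvalues
  have hchar : ∀ (k i : ℕ), ZMod.stdAddChar ((G i : ZMod m) * ((k : ℕ) : ZMod m))
      = Complex.exp (2 * π * Complex.I * k * G i / m) := by
    intro k i
    rw [show ((G i : ZMod m) * ((k : ℕ) : ZMod m)) = (((G i * k : ℕ)) : ZMod m) by push_cast; ring]
    rw [ZMod.stdAddChar_apply, ZMod.toCircle_natCast]
    congr 1
    push_cast
    ring
  have hlam : ∀ k : ℕ, myF stepC ((k : ℕ) : ZMod m)
      = (1 / n : ℂ) * ∑ i ∈ Finset.Icc 1 n, Complex.exp (2 * π * Complex.I * k * G i / m) := by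
    intro k
    rw [hstepC, myF_step]
    congr 1
    exact Finset.sum_congr rfl fun i _ => hchar k i
  have hreindex : ∑ k ∈ (Finset.univ : Finset (ZMod m)).erase 0,
        ‖myF stepC k‖ ^ (2 * t)
      = ∑ k ∈ Finset.Icc 1 (m - 1),
          (‖(1 / n : ℂ) *
            ∑ i ∈ Finset.Icc 1 n, Complex.exp (2 * π * Complex.I * k * G i / m)‖) ^ (2 * t) := by
    refine Finset.sum_nbij' (fun k => ZMod.val k) (fun k => (k : ZMod m)) ?_ ?_ ?_ ?_ ?_
    · intro k hk
      have hk0 : k ≠ 0 := Finset.ne_of_mem_erase hk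
      have h1 : k.val ≠ 0 := fun h => hk0 (by rwa [← ZMod.val_eq_zero])
      have h2 : k.val < m := ZMod.val_lt k
      have : (1 : ℕ) ≤ k.val ∧ k.val ≤ m - 1 := ⟨by omega, by omega⟩
      exact Finset.mem_Icc.mpr this
    · intro k hk
      have hk' := Finset.mem_Icc.mp hk
      refine Finset.mem_erase.mpr ⟨?_, Finset.mem_univ _⟩
      intro h
      have := (ZMod.natCast_eq_zero_iff k m).mp h
      have := Nat.le_of_dvd (by omega) this
      omega
    · intro k _
      exact ZMod.natCast_zmod_val k
    · intro k hk
      have hk' := Finset.mem_Icc.mp hk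
      exact ZMod.val_cast_of_lt (by omega)
    · intro k _
      rw [← hlam (ZMod.val k), ZMod.natCast_zmod_val]
  -- put everything together
  have key : (∑ x : ZMod m, |p x - 1 / m|) ^ 2
      ≤ ∑ k ∈ Finset.Icc 1 (m - 1),
          (‖(1 / n : ℂ) *
            ∑ i ∈ Finset.Icc 1 n, Complex.exp (2 * π * Complex.I * k * G i / m)‖) ^ (2 * t) := by
    calc (∑ x : ZMod m, |p x - 1 / m|) ^ 2
        ≤ (m : ℝ) * ∑ x : ZMod m, (p x - 1 / m) ^ 2 := h1
      _ = ∑ k : ZMod m, Complex.normSq (myF f k) := h2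
      _ = _ := by rw [hsum, hreindex]
  rw [mul_pow]
  calc (1 / 2 : ℝ) ^ 2 * (∑ x : ZMod m, |p x - 1 / m|) ^ 2
      ≤ (1 / 2 : ℝ) ^ 2 * ∑ k ∈ Finset.Icc 1 (m - 1),
          (‖(1 / n : ℂ) *
            ∑ i ∈ Finset.Icc 1 n, Complex.exp (2 * π * Complex.I * k * G i / m)‖) ^ (2 * t) := by
        exact mul_le_mul_of_nonneg_left key (by norm_num)
    _ = _ := by norm_num
end

section
/- Assume G : ℕ → ℕ is strictly increasing with G 1 = 1, and there is an integer s ≥ 2 such that G (i+1) ≤ s · G i for all i ≥ 1. Fix n ≥ 2 and set m = G n, and set κ = 1/(4 − 4·cos(π/(s+1))). Let p and π be the t-step distribution and the uniform distribution of the random walk on ℤ_m determined by G 1, …, G n. Then for every real ε > 0 and every natural number t with t ≥ κ·n·log(m − 1) − κ·n·log(4ε²), the total variation distance satisfies (1/2)·Σ_{x ∈ ZMod m} |p t x − π x| ≤ ε. -/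
open Finset Real

set_option linter.unusedSectionVars false
set_option linter.unusedTactic false

noncomputable def Ee (m a : ℕ) : ℂ := Complex.exp (2 * Real.pi * Complex.I * a / m)

lemma Ee_add (m a b : ℕ) : Ee m (a + b) = Ee m a * Ee m b := by
  rw [Ee, Ee, Ee, ← Complex.exp_add]
  congr 1
  push_cast
  ring

lemma Ee_abs (m a : ℕ) : ‖Ee m a‖ = 1 := by
  rw [Ee, Complex.norm_exp]
  have : (2 * Real.pi * Complex.I * a / m).re = 0 := by
    simp [Complex.div_re, Complex.mul_re]
  rw [this, Real.exp_zero]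

lemma Ee_mul_m (m q : ℕ) (hm : m ≠ 0) : Ee m (m * q) = 1 := by
  rw [Ee]
  have : 2 * Real.pi * Complex.I * (m * q : ℕ) / m = (q : ℤ) * (2 * Real.pi * Complex.I) := by
    have : (m : ℂ) ≠ 0 := Nat.cast_ne_zero.mpr hm
    field_simp
    push_cast
    ring
  rw [this, Complex.exp_int_mul_two_pi_mul_I]

lemma Ee_mod (m a : ℕ) (hm : m ≠ 0) : Ee m a = Ee m (a % m) := by
  conv_lhs => rw [← Nat.mod_add_div a m, Ee_add, Ee_mul_m m _ hm, mul_one]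

lemma Ee_congr (m a b : ℕ) (hm : m ≠ 0) (h : a ≡ b [MOD m]) : Ee m a = Ee m b := by
  rw [Ee_mod m a hm, Ee_mod m b hm, h]

lemma Ee_pow (m c r : ℕ) : Ee m (c * r) = (Ee m c) ^ r := by
  rw [Ee, Ee, ← Complex.exp_nat_mul]
  congr 1
  push_cast
  ring

variable {m : ℕ} [NeZero m]

noncomputable def chi (k x : ZMod m) : ℂ := Ee m (k.val * x.val)

lemma chi_comm (k x : ZMod m) : chi k x = chi x k := by rw [chi, chi, Nat.mul_comm]

lemma chi_zero_right (k : ZMod m) : chi k 0 = 1 := by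
  rw [chi, ZMod.val_zero, Nat.mul_zero, Ee]
  simp

lemma chi_add_right (k x y : ZMod m) : chi k (x + y) = chi k x * chi k y := by
  rw [chi, chi, chi, ← Ee_add]
  refine Ee_congr m _ _ (NeZero.ne m) ?_
  rw [ZMod.val_add, ← Nat.mul_add]
  exact (Nat.mod_modEq _ m).mul_left _

lemma chi_abs (k x : ZMod m) : ‖chi k x‖ = 1 := Ee_abs m _

lemma chi_mul_conj (k x : ZMod m) : chi k x * (starRingEnd ℂ) (chi k x) = 1 := by
  rw [Complex.mul_conj, ← Complex.sq_norm, chi_abs]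
  norm_num

lemma conj_chi (k x : ZMod m) : (starRingEnd ℂ) (chi k x) = chi k (-x) := by
  have h1 : chi k x * chi k (-x) = 1 := by
    rw [← chi_add_right, add_neg_cancel, chi_zero_right]
  calc (starRingEnd ℂ) (chi k x) = (starRingEnd ℂ) (chi k x) * (chi k x * chi k (-x)) := by
        rw [h1, mul_one]
    _ = (chi k x * (starRingEnd ℂ) (chi k x)) * chi k (-x) := by ring
    _ = chi k (-x) := by rw [chi_mul_conj, one_mul]

lemma chi_natCast (k : ZMod m) (a : ℕ) : chi k (a : ZMod m) = Ee m (k.val * a) := by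
  rw [chi]
  refine Ee_congr m _ _ (NeZero.ne m) (Nat.ModEq.mul_left _ ?_)
  rw [ZMod.val_natCast]
  exact Nat.mod_modEq a m

lemma sum_chi (k : ZMod m) : ∑ x : ZMod m, chi k x = if k = 0 then (m : ℂ) else 0 := by
  have hrange : ∑ x : ZMod m, chi k x = ∑ r ∈ Finset.range m, (Ee m k.val) ^ r := by
    refine Finset.sum_nbij' (fun x => x.val) (fun r => (r : ZMod m)) ?_ ?_ ?_ ?_ ?_
    · intro x _; exact Finset.mem_range.mpr (ZMod.val_lt x)
    · intro r _; exact Finset.mem_univ _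
    · intro x _; exact ZMod.natCast_rightInverse x
    · intro r hr; exact ZMod.val_cast_of_lt (Finset.mem_range.mp hr)
    · intro x _; rw [chi, Ee_pow]
  rw [hrange]
  by_cases hk : k = 0
  · subst hk
    simp [ZMod.val_zero, Ee]
  · have hv : 0 < k.val := Nat.pos_of_ne_zero (fun h => hk ((ZMod.val_eq_zero k).mp h))
    have hne1 : Ee m k.val ≠ 1 := by
      intro h
      rw [Ee, Complex.exp_eq_one_iff] at h
      obtain ⟨N, hN⟩ := h
      have hm : (m : ℂ) ≠ 0 := Nat.cast_ne_zero.mpr (NeZero.ne m)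
      rw [div_eq_iff hm] at hN
      have h2 : (2 * Real.pi * Complex.I : ℂ) ≠ 0 := by
        simp [Real.pi_ne_zero, Complex.I_ne_zero]
      have h3 : (2 * Real.pi * Complex.I : ℂ) * k.val = (2 * Real.pi * Complex.I) * ((N * m : ℤ) : ℂ) := by
        rw [hN]; push_cast; ring
      have h4 : (k.val : ℤ) = N * m := by exact_mod_cast mul_left_cancel₀ h2 h3
      have hvm := ZMod.val_lt k
      have hm' : 0 < (m:ℤ) := by exact_mod_cast Nat.pos_of_ne_zero (NeZero.ne m)
      have hv' : 0 < (k.val:ℤ) := by exact_mod_cast hv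
      have hlt : (k.val:ℤ) < m := by exact_mod_cast hvm
      rcases le_or_gt N 0 with hN0 | hN0
      · nlinarith
      · have hN1 : 1 ≤ N := hN0
        nlinarith
    rw [geom_sum_eq hne1, if_neg hk]
    have : Ee m k.val ^ m = 1 := by
      rw [← Ee_pow, Nat.mul_comm, Ee_mul_m m _ (NeZero.ne m)]
    rw [this, sub_self, zero_div]

lemma sum_chi_pair (x y : ZMod m) :
    ∑ k : ZMod m, chi k y * (starRingEnd ℂ) (chi k x) = if y = x then (m : ℂ) else 0 := by
  have h : ∀ k : ZMod m, chi k y * (starRingEnd ℂ) (chi k x) = chi (y - x) k := by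
    intro k
    rw [conj_chi, ← chi_add_right, ← sub_eq_add_neg, chi_comm]
  simp_rw [h, sum_chi]
  by_cases hxy : y = x
  · simp [hxy]
  · rw [if_neg (fun h0 => hxy (sub_eq_zero.mp h0)), if_neg hxy]

lemma fourier_inversion (f : ZMod m → ℂ) (x : ZMod m) :
    f x = (1 / m : ℂ) * ∑ k : ZMod m, (∑ y : ZMod m, f y * chi k y) * (starRingEnd ℂ) (chi k x) := by
  have hm : (m : ℂ) ≠ 0 := Nat.cast_ne_zero.mpr (NeZero.ne m)
  have : ∑ k : ZMod m, (∑ y : ZMod m, f y * chi k y) * (starRingEnd ℂ) (chi k x)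
      = ∑ y : ZMod m, f y * (∑ k : ZMod m, chi k y * (starRingEnd ℂ) (chi k x)) := by
    simp_rw [Finset.sum_mul, mul_assoc]
    rw [Finset.sum_comm]
    simp_rw [← Finset.mul_sum]
  rw [this]
  simp_rw [sum_chi_pair, mul_ite, mul_zero]
  rw [Finset.sum_ite_eq' Finset.univ x (fun y => f y * m)]
  simp only [Finset.mem_univ, if_true]
  field_simp

noncomputable def Shat (G : ℕ → ℕ) (n m : ℕ) [NeZero m] (k : ZMod m) : ℂ :=
  ∑ j ∈ Finset.Icc 1 n, chi k ((G j : ZMod m))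

lemma step_hat (G : ℕ → ℕ) (n : ℕ) (hn : n ≠ 0) (k : ZMod m) :
    ∑ x : ZMod m, (stepDist G n m x : ℂ) * chi k x = Shat G n m k / n := by
  have hcard : ∀ x : ZMod m, ((stepDist G n m x : ℂ)) * chi k x
      = (1 / n : ℂ) * ∑ j ∈ (Finset.Icc 1 n).filter (fun i => (G i : ZMod m) = x), chi k ((G j : ZMod m)) := by
    intro x
    rw [stepDist]
    push_cast
    rw [Finset.sum_congr rfl (fun j hj => by rw [(Finset.mem_filter.mp hj).2]),
      Finset.sum_const, nsmul_eq_mul]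
    ring
  simp_rw [hcard]
  rw [← Finset.mul_sum, Finset.sum_fiberwise_eq_sum_filter]
  rw [Shat]
  simp only [Finset.mem_univ, Finset.filter_true]
  ring

lemma walk_hat (G : ℕ → ℕ) (n : ℕ) (hn : n ≠ 0) (t : ℕ) (k : ZMod m) :
    ∑ x : ZMod m, (walkDist G n m t x : ℂ) * chi k x = (Shat G n m k / n) ^ t := by
  induction t with
  | zero =>
    rw [pow_zero]
    have h0 : ∀ x : ZMod m, ((walkDist G n m 0 x : ℝ) : ℂ) * chi k x
        = if x = 0 then chi k x else 0 := by
      intro x; rw [walkDist]; by_cases h : x = 0 <;> simp [h]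
    simp_rw [h0]
    rw [Finset.sum_ite_eq' Finset.univ 0 (fun x => chi k x)]
    simp [chi_zero_right]
  | succ t ih =>
    rw [walkDist]
    push_cast
    have hswap : ∑ x : ZMod m, (∑ y : ZMod m, (walkDist G n m t y : ℂ) * (stepDist G n m (x - y) : ℂ)) * chi k x
        = ∑ y : ZMod m, (walkDist G n m t y : ℂ) * chi k y * (∑ z : ZMod m, (stepDist G n m z : ℂ) * chi k z) := by
      simp_rw [Finset.sum_mul]
      rw [Finset.sum_comm]
      congr 1; ext y
      rw [Finset.mul_sum, ← Equiv.sum_comp (Equiv.addLeft y) (fun x => (walkDist G n m t y : ℂ) * (stepDist G n m (x - y) : ℂ) * chi k x)]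
      congr 1; ext z
      simp only [Equiv.coe_addLeft]
      rw [add_sub_cancel_left, chi_add_right]
      ring
    rw [hswap, step_hat G n hn k, ← Finset.sum_mul, ih, pow_succ]

lemma chi_zero_left (x : ZMod m) : chi (0 : ZMod m) x = 1 := by
  rw [chi_comm, chi_zero_right]

lemma Shat_zero (G : ℕ → ℕ) (n : ℕ) : Shat G n m 0 = n := by
  rw [Shat]
  simp [chi_zero_left]

lemma walk_dev (G : ℕ → ℕ) (n : ℕ) (hn : n ≠ 0) (t : ℕ) (x : ZMod m) :
    ((walkDist G n m t x : ℝ) : ℂ) - 1 / m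
      = (1 / m : ℂ) * ∑ k ∈ Finset.univ.erase (0 : ZMod m),
          (Shat G n m k / n) ^ t * (starRingEnd ℂ) (chi k x) := by
  have hni : (n : ℂ) ≠ 0 := Nat.cast_ne_zero.mpr hn
  have h := fourier_inversion (fun y => ((walkDist G n m t y : ℝ) : ℂ)) x
  simp_rw [walk_hat G n hn t] at h
  rw [h, ← Finset.add_sum_erase _ _ (Finset.mem_univ (0 : ZMod m)),
    Shat_zero, div_self hni, one_pow, conj_chi, chi_zero_left, mul_one, mul_add]
  ring

lemma walk_parseval (G : ℕ → ℕ) (n : ℕ) (hn : n ≠ 0) (t : ℕ) :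
    ∑ x : ZMod m, (walkDist G n m t x - 1 / m) ^ 2
      = (1 / m : ℝ) * ∑ k ∈ Finset.univ.erase (0 : ZMod m),
          (‖Shat G n m k / n‖) ^ (2 * t) := by
  classical
  set u0 := Finset.univ.erase (0 : ZMod m)
  set a : ZMod m → ℂ := fun k => (Shat G n m k / n) ^ t with ha
  set g : ZMod m → ℂ := fun x => ∑ k ∈ u0, a k * (starRingEnd ℂ) (chi k x) with hg
  have hgsum : ∑ x : ZMod m, g x * (starRingEnd ℂ) (g x)
      = (m : ℂ) * ∑ k ∈ u0, a k * (starRingEnd ℂ) (a k) := by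
    have hexp : ∀ x : ZMod m, g x * (starRingEnd ℂ) (g x)
        = ∑ k ∈ u0, ∑ l ∈ u0, a k * (starRingEnd ℂ) (a l) *
            ((starRingEnd ℂ) (chi k x) * chi l x) := by
      intro x
      rw [hg]
      simp only [map_sum, map_mul, RingHomCompTriple.comp_apply, RingHom.id_apply,
        Complex.conj_conj]
      rw [Finset.sum_mul_sum]
      refine Finset.sum_congr rfl fun k _ => Finset.sum_congr rfl fun l _ => by ring
    simp_rw [hexp]
    rw [Finset.sum_comm]
    have hin : ∀ k ∈ u0, ∑ x : ZMod m, ∑ l ∈ u0, a k * (starRingEnd ℂ) (a l) *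
        ((starRingEnd ℂ) (chi k x) * chi l x) = (m : ℂ) * (a k * (starRingEnd ℂ) (a k)) := by
      intro k hk
      rw [Finset.sum_comm]
      have : ∀ l ∈ u0, ∑ x : ZMod m, a k * (starRingEnd ℂ) (a l) *
          ((starRingEnd ℂ) (chi k x) * chi l x)
          = a k * (starRingEnd ℂ) (a l) * (if l = k then (m : ℂ) else 0) := by
        intro l _
        rw [← Finset.mul_sum]
        congr 1
        rw [← sum_chi_pair k l]
        refine Finset.sum_congr rfl fun x _ => ?_
        rw [chi_comm x l, chi_comm x k]
        ring
      rw [Finset.sum_congr rfl this]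
      simp_rw [mul_ite, mul_zero]
      rw [Finset.sum_ite_eq' u0 k (fun l => a k * (starRingEnd ℂ) (a l) * m), if_pos hk]
      ring
    rw [Finset.sum_congr rfl hin, ← Finset.mul_sum]
  -- now relate to real sums
  have hdev : ∀ x : ZMod m, ((walkDist G n m t x - 1 / m : ℝ) : ℂ) = (1/m : ℂ) * g x := by
    intro x
    push_cast
    rw [walk_dev G n hn t x]
  have hsq : ∀ x : ZMod m, (walkDist G n m t x - 1 / m)^2
      = Complex.normSq ((1/m : ℂ) * g x) := by
    intro x
    rw [← hdev x, Complex.normSq_ofReal, sq]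
  rw [Finset.sum_congr rfl (fun x _ => hsq x)]
  have hnsq : ∀ x : ZMod m, Complex.normSq ((1/m : ℂ) * g x)
      = (1 / (m:ℝ)^2) * Complex.normSq (g x) := by
    intro x
    rw [Complex.normSq_mul]
    congr 1
    simp [Complex.normSq_div, sq, mul_inv]
  rw [Finset.sum_congr rfl (fun x _ => hnsq x), ← Finset.mul_sum]
  have hgr : ∑ x : ZMod m, (Complex.normSq (g x) : ℝ)
      = (m : ℝ) * ∑ k ∈ u0, Complex.normSq (a k) := by
    have h2 := hgsum
    simp_rw [Complex.mul_conj] at h2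
    exact_mod_cast h2
  rw [hgr]
  have hm0 : (m : ℝ) ≠ 0 := Nat.cast_ne_zero.mpr (NeZero.ne m)
  have habs : ∀ k ∈ u0, (Complex.normSq (a k) : ℝ)
      = (‖Shat G n m k / n‖) ^ (2 * t) := by
    intro k _
    rw [ha, ← Complex.sq_norm, norm_pow, ← pow_mul, mul_comm t 2]
  rw [Finset.sum_congr rfl habs]
  field_simp

lemma gap_lemma (G : ℕ → ℕ) (hG1 : G 1 = 1) (s : ℕ) (hs1 : 1 ≤ s)
    (hs : ∀ i, 1 ≤ i → G (i + 1) ≤ s * G i)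
    (n : ℕ) (hn : 2 ≤ n) (m : ℕ) (hm : m = G n) (hm2 : 2 ≤ m)
    (c : ℕ) (hc1 : 1 ≤ c) (hc2 : 2 * c ≤ m) :
    ∃ j, 1 ≤ j ∧ j < n ∧ ∀ N : ℤ, 1 / ((s : ℝ) + 1) ≤ |(c * G j : ℝ) / m - N| := by
  set δ : ℝ := 1 / ((s : ℝ) + 1) with hδ
  have hm0 : (0 : ℝ) < m := by positivity
  have hs0 : (0 : ℝ) < (s : ℝ) + 1 := by positivity
  have hs1' : (1 : ℝ) ≤ (s : ℝ) := by exact_mod_cast hs1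
  have hδpos : 0 < δ := by positivity
  have hδhalf : δ ≤ 1 / 2 := by
    rw [hδ, div_le_div_iff₀ hs0 (by norm_num)]
    linarith
  have hsδ : (s : ℝ) * δ = 1 - δ := by
    rw [hδ]; field_simp; ring
  have hxnonneg : ∀ j, 0 ≤ (c * G j : ℝ) / m := fun j => by positivity
  have hstep : ∀ j, 1 ≤ j →
      (c * G (j + 1) : ℝ) / m ≤ (s : ℝ) * ((c * G j : ℝ) / m) := by
    intro j hj
    have h1 := hs j hj
    have h3 : (G (j + 1) : ℝ) ≤ (s : ℝ) * G j := by exact_mod_cast h1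
    have hc0 : (0 : ℝ) ≤ (c : ℝ) := by positivity
    rw [div_le_iff₀ hm0]
    have heq : (s : ℝ) * ((c : ℝ) * (G j : ℝ) / m) * m = (s : ℝ) * ((c : ℝ) * (G j : ℝ)) := by
      field_simp
    push_cast
    rw [heq]
    nlinarith
  have hc2' : (2 : ℝ) * c ≤ m := by exact_mod_cast hc2
  have hx1 : (c * G 1 : ℝ) / m ≤ 1 / 2 := by
    rw [hG1]
    push_cast
    rw [div_le_div_iff₀ hm0 (by norm_num)]
    linarith
  by_contra hcon
  push_neg at hcon
  have key : ∀ j, 1 ≤ j → j < n → (c * G j : ℝ) / m < δ := by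
    intro j
    induction j with
    | zero => omega
    | succ j ih =>
      intro _ hjn
      have hxj1 : (c * G (j + 1) : ℝ) / m < 1 - δ ∨ j = 0 := by
        rcases Nat.eq_zero_or_pos j with hj0 | hj0
        · exact Or.inr hj0
        · left
          have hih := ih hj0 (by omega)
          have := hstep j hj0
          nlinarith [hxnonneg j]
      obtain ⟨N, hN⟩ := hcon (j + 1) (by omega) hjn
      have habs := abs_lt.mp hN
      rcases le_or_gt N 0 with hN0 | hN0
      · have hNr : (N : ℝ) ≤ 0 := by exact_mod_cast hN0
        linarith [hxnonneg (j + 1)]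
      · have hN1 : (1 : ℝ) ≤ (N : ℝ) := by exact_mod_cast hN0
        exfalso
        rcases hxj1 with h | h
        · linarith
        · subst h
          linarith
  have hlast := key (n - 1) (by omega) (by omega)
  have hn1 : n - 1 + 1 = n := by omega
  have hstepn := hstep (n - 1) (by omega)
  rw [hn1] at hstepn
  have hGn0 : (G n : ℝ) ≠ 0 := by
    have : 2 ≤ G n := hm ▸ hm2
    positivity
  have hxn : (c * G n : ℝ) / m = c := by
    rw [hm]
    push_cast
    rw [mul_div_assoc, div_self hGn0, mul_one]
  have hc1' : (1 : ℝ) ≤ c := by exact_mod_cast hc1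
  nlinarith [hxnonneg (n - 1)]

lemma one_add_exp_bound (δ θ : ℝ) (hδ : 0 < δ) (hδ2 : δ ≤ 1 / 2)
    (hθl : δ ≤ |θ|) (hθu : |θ| ≤ 1 / 2) :
    ‖1 + Complex.exp (2 * Real.pi * Complex.I * θ)‖
      ≤ 2 * Real.cos (Real.pi * δ) := by
  have hπ := Real.pi_pos
  have hrw : (2 * Real.pi * Complex.I * θ : ℂ) = ((2 * Real.pi * θ : ℝ) : ℂ) * Complex.I := by
    push_cast; ring
  rw [hrw, Complex.exp_mul_I, ← Complex.ofReal_cos, ← Complex.ofReal_sin]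
  set ψ : ℝ := 2 * Real.pi * θ with hψ
  have hsq : (‖1 + ((Real.cos ψ : ℂ) + (Real.sin ψ : ℂ) * Complex.I)‖) ^ 2
      = 2 + 2 * Real.cos ψ := by
    rw [Complex.sq_norm, Complex.normSq_apply]
    simp [Complex.add_re, Complex.add_im, Complex.mul_im, Complex.mul_re, Complex.cos_ofReal_re, Complex.sin_ofReal_re]
    nlinarith [Real.sin_sq_add_cos_sq ψ]
  have hcosψ : Real.cos ψ ≤ Real.cos (2 * Real.pi * δ) := by
    have h1 : Real.cos ψ = Real.cos (2 * Real.pi * |θ|) := by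
      rw [hψ, ← Real.cos_abs, ← Real.cos_abs (2 * Real.pi * |θ|)]
      congr 1
      rw [abs_mul, abs_mul]
      rw [abs_of_pos hπ, abs_of_pos (show (0:ℝ) < 2 by norm_num)]
      exact (_root_.abs_of_nonneg (by positivity)).symm
    rw [h1]
    apply Real.cos_le_cos_of_nonneg_of_le_pi (by positivity)
    · nlinarith
    · nlinarith
  have hcosδ : 0 ≤ Real.cos (Real.pi * δ) := by
    apply Real.cos_nonneg_of_mem_Icc
    constructor <;> nlinarith
  have htarget : (2 * Real.cos (Real.pi * δ)) ^ 2 = 2 + 2 * Real.cos (2 * Real.pi * δ) := by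
    have := Real.cos_two_mul (Real.pi * δ)
    have h2 : 2 * (Real.pi * δ) = 2 * Real.pi * δ := by ring
    rw [← h2]
    nlinarith [Real.cos_two_mul (Real.pi * δ)]
  have hfin : (‖1 + ((Real.cos ψ : ℂ) + (Real.sin ψ : ℂ) * Complex.I)‖) ^ 2
      ≤ (2 * Real.cos (Real.pi * δ)) ^ 2 := by
    rw [hsq, htarget]
    linarith
  have h0 := norm_nonneg (1 + ((Real.cos ψ : ℂ) + (Real.sin ψ : ℂ) * Complex.I))
  nlinarith

lemma Shat_bound (G : ℕ → ℕ) (hG1 : G 1 = 1) (s : ℕ) (hs1 : 1 ≤ s)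
    (hs : ∀ i, 1 ≤ i → G (i + 1) ≤ s * G i)
    (n : ℕ) (hn : 2 ≤ n) (m : ℕ) [NeZero m] (hm : m = G n) (hm2 : 2 ≤ m)
    (k : ZMod m) (hk : k ≠ 0) :
    ‖Shat G n m k‖
      ≤ (n : ℝ) - 2 * (1 - Real.cos (Real.pi / ((s : ℝ) + 1))) := by
  have hmne : m ≠ 0 := NeZero.ne m
  set c : ℕ := k.val with hc
  have hc1 : 1 ≤ c := Nat.pos_of_ne_zero (fun h => hk ((ZMod.val_eq_zero k).mp h))
  have hcm : c < m := ZMod.val_lt k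
  have hS : Shat G n m k = ∑ j ∈ Finset.Icc 1 n, Ee m (c * G j) :=
    Finset.sum_congr rfl fun j _ => chi_natCast k (G j)
  -- reduce to c' with 2 c' ≤ m
  obtain ⟨c', hc'1, hc'2, habs⟩ : ∃ c', 1 ≤ c' ∧ 2 * c' ≤ m ∧
      ‖∑ j ∈ Finset.Icc 1 n, Ee m (c' * G j)‖
        = ‖∑ j ∈ Finset.Icc 1 n, Ee m (c * G j)‖ := by
    by_cases h2c : 2 * c ≤ m
    · exact ⟨c, hc1, h2c, rfl⟩
    · refine ⟨m - c, by omega, by omega, ?_⟩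
      have hconj : ∀ j, Ee m ((m - c) * G j) = (starRingEnd ℂ) (Ee m (c * G j)) := by
        intro j
        have hmul : Ee m ((m - c) * G j) * Ee m (c * G j) = 1 := by
          rw [← Ee_add]
          have : (m - c) * G j + c * G j = m * G j := by
            rw [← Nat.add_mul]
            congr 1
            omega
          rw [this, Ee_mul_m m _ hmne]
        have hcc : Ee m (c * G j) * (starRingEnd ℂ) (Ee m (c * G j)) = 1 := by
          rw [Complex.mul_conj, ← Complex.sq_norm, Ee_abs]
          norm_num
        calc Ee m ((m - c) * G j)
            = Ee m ((m - c) * G j) * (Ee m (c * G j) * (starRingEnd ℂ) (Ee m (c * G j))) := by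
              rw [hcc, mul_one]
          _ = (Ee m ((m - c) * G j) * Ee m (c * G j)) * (starRingEnd ℂ) (Ee m (c * G j)) := by
              ring
          _ = (starRingEnd ℂ) (Ee m (c * G j)) := by rw [hmul, one_mul]
      rw [Finset.sum_congr rfl fun j _ => hconj j, ← map_sum]
      exact Complex.norm_conj _
  rw [hS, ← habs]
  -- gap lemma
  obtain ⟨j0, hj01, hj0n, hgap⟩ := gap_lemma G hG1 s hs1 hs n hn m hm hm2 c' hc'1 hc'2
  set T := Finset.Icc 1 n with hT
  have hnT : n ∈ T := Finset.mem_Icc.mpr ⟨by omega, le_refl n⟩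
  have hj0T : j0 ∈ T.erase n := Finset.mem_erase.mpr ⟨by omega, Finset.mem_Icc.mpr ⟨hj01, by omega⟩⟩
  have hsplit : ∑ j ∈ T, Ee m (c' * G j)
      = (∑ j ∈ (T.erase n).erase j0, Ee m (c' * G j)) + (Ee m (c' * G j0) + Ee m (c' * G n)) := by
    rw [← Finset.sum_erase_add T _ hnT, ← Finset.sum_erase_add (T.erase n) _ hj0T]
    ring
  rw [hsplit]
  have hrest : ‖∑ j ∈ (T.erase n).erase j0, Ee m (c' * G j)‖ ≤ (n : ℝ) - 2 := by
    calc ‖∑ j ∈ (T.erase n).erase j0, Ee m (c' * G j)‖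
        ≤ ∑ j ∈ (T.erase n).erase j0, ‖Ee m (c' * G j)‖ := norm_sum_le _ _
      _ = ∑ j ∈ (T.erase n).erase j0, (1 : ℝ) := Finset.sum_congr rfl fun j _ => Ee_abs m _
      _ = ((T.erase n).erase j0).card := by rw [Finset.sum_const, nsmul_eq_mul, mul_one]
      _ = ((n : ℝ) - 2) := by
          rw [Finset.card_erase_of_mem hj0T, Finset.card_erase_of_mem hnT, hT, Nat.card_Icc]
          have : n + 1 - 1 - 1 - 1 = n - 2 := by omega
          rw [this, Nat.cast_sub hn]
          norm_num
  have hEn : Ee m (c' * G n) = 1 := by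
    rw [← hm, Nat.mul_comm, Ee_mul_m m _ hmne]
  have hmid : ‖Ee m (c' * G j0) + Ee m (c' * G n)‖
      ≤ 2 * Real.cos (Real.pi / ((s : ℝ) + 1)) := by
    rw [hEn, add_comm]
    set x : ℝ := (c' * G j0 : ℝ) / m with hx
    set θ : ℝ := x - round x with hθdef
    have hEe : Ee m (c' * G j0) = Complex.exp (2 * Real.pi * Complex.I * (θ : ℝ)) := by
      rw [Ee]
      have h1 : (2 * Real.pi * Complex.I * ((c' * G j0 : ℕ) : ℂ) / m)
          = 2 * Real.pi * Complex.I * (θ : ℝ) + (round x : ℤ) * (2 * Real.pi * Complex.I) := by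
        rw [hθdef, hx]
        push_cast
        have hm0 : (m : ℂ) ≠ 0 := Nat.cast_ne_zero.mpr hmne
        field_simp
        ring
      rw [h1, Complex.exp_add, Complex.exp_int_mul_two_pi_mul_I, mul_one]
    rw [hEe]
    have hδpos : (0 : ℝ) < 1 / ((s : ℝ) + 1) := by positivity
    have hδ2 : 1 / ((s : ℝ) + 1) ≤ 1 / 2 := by
      rw [div_le_div_iff₀ (by positivity) (by norm_num)]
      have : (1 : ℝ) ≤ (s : ℝ) := by exact_mod_cast hs1
      linarith
    have hb := one_add_exp_bound (1 / ((s : ℝ) + 1)) θ hδpos hδ2 ?_ ?_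
    · rw [mul_one_div] at hb
      exact hb
    · rw [hθdef]
      exact hgap (round x)
    · exact abs_sub_round x
  calc ‖(∑ j ∈ (T.erase n).erase j0, Ee m (c' * G j))
        + (Ee m (c' * G j0) + Ee m (c' * G n))‖
      ≤ ‖∑ j ∈ (T.erase n).erase j0, Ee m (c' * G j)‖
        + ‖Ee m (c' * G j0) + Ee m (c' * G n)‖ := norm_add_le _ _
    _ ≤ ((n : ℝ) - 2) + 2 * Real.cos (Real.pi / ((s : ℝ) + 1)) := add_le_add hrest hmid
    _ = (n : ℝ) - 2 * (1 - Real.cos (Real.pi / ((s : ℝ) + 1))) := by ring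


/-- Mixing-time upper bound for the random walk determined by a linear recurrence:
`t_mix(ε) ≤ κ n log(G n - 1) - κ n log(4ε²)` with `κ = 1/(4 - 4cos(π/(s+1)))`. -/
theorem mixing_time_upper_bound_general
    (G : ℕ → ℕ) (hG1 : G 1 = 1) (hmono : ∀ i, 1 ≤ i → G i < G (i + 1))
    (s : ℕ) (hs2 : 2 ≤ s) (hs : ∀ i, 1 ≤ i → G (i + 1) ≤ s * G i)
    (n : ℕ) (hn : 2 ≤ n) (m : ℕ) [NeZero m] (hm : m = G n)
    (κ : ℝ) (hκ : κ = 1 / (4 - 4 * Real.cos (π / ((s : ℝ) + 1))))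
    (ε : ℝ) (hε : 0 < ε) (t : ℕ)
    (ht : κ * n * Real.log ((m : ℝ) - 1) - κ * n * Real.log (4 * ε ^ 2) ≤ t) :
    (1 / 2 : ℝ) * ∑ x : ZMod m, |walkDist G n m t x - 1 / m| ≤ ε := by
  have hπ := Real.pi_pos
  have hs1 : 1 ≤ s := by omega
  have hn0 : n ≠ 0 := by omega
  -- m ≥ 2
  have hGmono : ∀ i j, 1 ≤ i → i ≤ j → G i ≤ G j := by
    intro i j hi hij
    induction j with
    | zero => omega
    | succ j ih =>
      rcases Nat.lt_or_ge j i with h | h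
      · have hij : i = j + 1 := by omega
        rw [hij]
      · exact le_trans (ih (by omega)) (le_of_lt (hmono j (by omega)))
  have hm2 : 2 ≤ m := by
    have h1 : G 1 < G 2 := hmono 1 (le_refl 1)
    have h2 : G 2 ≤ G n := hGmono 2 n (by omega) hn
    omega
  -- spectral constants
  set cc : ℝ := 1 - Real.cos (π / ((s : ℝ) + 1)) with hcc
  have hsr : (1 : ℝ) ≤ (s : ℝ) := by exact_mod_cast hs1
  have hsr2 : (2 : ℝ) ≤ (s : ℝ) := by exact_mod_cast hs2
  have hargpos : 0 < π / ((s : ℝ) + 1) := by positivity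
  have hargle : π / ((s : ℝ) + 1) ≤ π / 3 := by
    apply div_le_div_of_nonneg_left (le_of_lt hπ) (by norm_num)
    linarith
  have hccpos : 0 < cc := by
    rw [hcc]
    have : Real.cos (π / ((s : ℝ) + 1)) < Real.cos 0 := by
      apply Real.cos_lt_cos_of_nonneg_of_le_pi (le_refl 0) _ hargpos
      linarith
    rw [Real.cos_zero] at this
    linarith
  have hcchalf : cc ≤ 1 / 2 := by
    rw [hcc]
    have h1 : Real.cos (π / 3) ≤ Real.cos (π / ((s : ℝ) + 1)) := by
      apply Real.cos_le_cos_of_nonneg_of_le_pi (le_of_lt hargpos) _ hargle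
      linarith
    rw [Real.cos_pi_div_three] at h1
    linarith
  have hκc : κ = 1 / (4 * cc) := by rw [hκ, hcc]; ring_nf
  clear_value cc
  -- eigenvalue bound
  set lam : ℝ := 1 - 2 * cc / n with hlam
  have hnr : (2 : ℝ) ≤ (n : ℝ) := by exact_mod_cast hn
  have hnrpos : (0 : ℝ) < n := by linarith
  have hlam0 : 0 ≤ lam := by
    rw [hlam]
    rw [sub_nonneg, div_le_one hnrpos]
    linarith
  have heig : ∀ k : ZMod m, k ≠ 0 → ‖Shat G n m k / n‖ ≤ lam := by
    intro k hk
    have hb := Shat_bound G hG1 s hs1 hs n hn m hm hm2 k hk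
    rw [norm_div, Complex.norm_natCast]
    rw [div_le_iff₀ hnrpos, hlam]
    have : (1 - 2 * cc / ↑n) * ↑n = (n : ℝ) - 2 * cc := by field_simp
    rw [this]
    rw [hcc]
    linarith
  -- sum over nonzero frequencies
  set u0 := Finset.univ.erase (0 : ZMod m) with hu0
  have hcard : (u0.card : ℝ) = (m : ℝ) - 1 := by
    rw [hu0, Finset.card_erase_of_mem (Finset.mem_univ _), Finset.card_univ, ZMod.card]
    rw [Nat.cast_sub (by omega)]
    norm_num
  have hsum1 : ∑ k ∈ u0, (‖Shat G n m k / n‖) ^ (2 * t)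
      ≤ ((m : ℝ) - 1) * lam ^ (2 * t) := by
    calc ∑ k ∈ u0, (‖Shat G n m k / n‖) ^ (2 * t)
        ≤ ∑ k ∈ u0, lam ^ (2 * t) := by
          apply Finset.sum_le_sum
          intro k hk
          exact pow_le_pow_left₀ (norm_nonneg _) (heig k (Finset.mem_erase.mp hk).1) _
      _ = (u0.card : ℝ) * lam ^ (2 * t) := by rw [Finset.sum_const, nsmul_eq_mul]
      _ = ((m : ℝ) - 1) * lam ^ (2 * t) := by rw [hcard]
  -- exponential bound
  have hlamexp : lam ≤ Real.exp (-(2 * cc / n)) := by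
    have := Real.add_one_le_exp (-(2 * cc / n))
    rw [hlam]; linarith
  have hlampow : lam ^ (2 * t) ≤ Real.exp (-(4 * cc * t) / n) := by
    calc lam ^ (2 * t) ≤ (Real.exp (-(2 * cc / n))) ^ (2 * t) :=
          pow_le_pow_left₀ hlam0 hlamexp _
      _ = Real.exp (-(4 * cc * t) / n) := by
          rw [← Real.exp_nat_mul]
          congr 1
          push_cast
          ring
  -- log chain
  have hm1 : (1 : ℝ) ≤ (m : ℝ) - 1 := by
    have : (2 : ℝ) ≤ (m : ℝ) := by exact_mod_cast hm2
    linarith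
  have hApos : (0 : ℝ) < (m : ℝ) - 1 := by linarith
  have hBpos : (0 : ℝ) < 4 * ε ^ 2 := by positivity
  have hlog : Real.log ((m : ℝ) - 1) - Real.log (4 * ε ^ 2) ≤ 4 * cc * t / n := by
    have e1 : κ * n * Real.log ((m : ℝ) - 1) - κ * n * Real.log (4 * ε ^ 2)
        = (Real.log ((m : ℝ) - 1) - Real.log (4 * ε ^ 2)) * n / (4 * cc) := by
      rw [hκc]
      field_simp
    have ht2 : (Real.log ((m : ℝ) - 1) - Real.log (4 * ε ^ 2)) * n / (4 * cc) ≤ t := e1 ▸ ht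
    rw [div_le_iff₀ (by positivity : (0:ℝ) < 4 * cc)] at ht2
    rw [le_div_iff₀ hnrpos]
    linarith
  have hfinal : ((m : ℝ) - 1) * Real.exp (-(4 * cc * t) / n) ≤ 4 * ε ^ 2 := by
    calc ((m : ℝ) - 1) * Real.exp (-(4 * cc * t) / n)
        = Real.exp (Real.log ((m : ℝ) - 1) + -(4 * cc * t) / n) := by
          rw [Real.exp_add, Real.exp_log hApos]
      _ ≤ Real.exp (Real.log (4 * ε ^ 2)) := by
          apply Real.exp_le_exp.mpr
          have : -(4 * cc * t) / n = -(4 * cc * t / n) := by ring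
          rw [this]
          linarith
      _ = 4 * ε ^ 2 := Real.exp_log hBpos
  -- Cauchy-Schwarz
  set Ssum : ℝ := ∑ x : ZMod m, |walkDist G n m t x - 1 / m| with hS
  have hSnonneg : 0 ≤ Ssum := Finset.sum_nonneg fun x _ => abs_nonneg _
  have hCS : Ssum ^ 2 ≤ (m : ℝ) * ∑ x : ZMod m, (walkDist G n m t x - 1 / m) ^ 2 := by
    have h := Finset.sum_mul_sq_le_sq_mul_sq Finset.univ
      (fun x : ZMod m => |walkDist G n m t x - 1 / m|) (fun _ => (1 : ℝ))
    simp only [mul_one, one_pow, Finset.sum_const, Finset.card_univ, ZMod.card,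
      nsmul_eq_mul, _root_.sq_abs] at h
    rw [hS]
    calc (∑ x : ZMod m, |walkDist G n m t x - 1 / m|) ^ 2
        ≤ (∑ x : ZMod m, (walkDist G n m t x - 1 / m) ^ 2) * (m : ℝ) := h
      _ = (m : ℝ) * ∑ x : ZMod m, (walkDist G n m t x - 1 / m) ^ 2 := by ring
  have hmr : (0 : ℝ) < m := by
    have : (2:ℝ) ≤ (m:ℝ) := by exact_mod_cast hm2
    linarith
  have hchain : Ssum ^ 2 ≤ 4 * ε ^ 2 := by
    have hp := walk_parseval (m := m) G n hn0 t
    calc Ssum ^ 2 ≤ (m : ℝ) * ∑ x : ZMod m, (walkDist G n m t x - 1 / m) ^ 2 := hCS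
      _ = (m : ℝ) * ((1 / m : ℝ) * ∑ k ∈ u0, (‖Shat G n m k / n‖) ^ (2 * t)) := by
          rw [hp]
      _ = ∑ k ∈ u0, (‖Shat G n m k / n‖) ^ (2 * t) := by
          field_simp
      _ ≤ ((m : ℝ) - 1) * lam ^ (2 * t) := hsum1
      _ ≤ ((m : ℝ) - 1) * Real.exp (-(4 * cc * t) / n) := by
          apply mul_le_mul_of_nonneg_left hlampow (by linarith)
      _ ≤ 4 * ε ^ 2 := hfinal
  have h2e : Ssum ^ 2 ≤ (2 * ε) ^ 2 := by nlinarith [hchain]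
  have hfin : Ssum ≤ 2 * ε :=
    (pow_le_pow_iff_left₀ hSnonneg (by positivity) (by norm_num)).mp h2e
  linarith
end

section
/- Assume G : ℕ → ℕ is strictly increasing with G 1 = 1, and there is an integer s ≥ 2 such that G (i+1) ≤ s · G i for all i ≥ 1. Then there exists a real constant γ > 0, depending only on s, such that for every n ≥ 2 (with m = G n) and every natural number t with t ≥ γ·n², the t-step distribution p of the random walk on ℤ_m determined by G 1, …, G n satisfies (1/2)·Σ_{x ∈ ZMod m} |p t x − π x| ≤ 1/4, where π is the uniform distribution. That is, the mixing time is at most γ·n². -/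
open Finset Real

namespace RWmix

noncomputable def crn (x : ℝ) : ℝ := |x - (round x : ℤ)|

lemma crn_le_half (x : ℝ) : crn x ≤ 1/2 := abs_sub_round x

lemma crn_nonneg (x : ℝ) : 0 ≤ crn x := abs_nonneg _

lemma crn_le_abs_sub_int (x : ℝ) (p : ℤ) : crn x ≤ |x - p| := by
  rcases eq_or_ne p (round x) with h | h
  · simp [crn, h]
  · have h1 : (1:ℝ) ≤ |(round x : ℝ) - p| := by
      have : round x - p ≠ 0 := sub_ne_zero.2 (Ne.symm h)
      have := Int.one_le_abs this
      calc (1:ℝ) ≤ |(round x - p : ℤ)| := by exact_mod_cast this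
        _ = |(round x : ℝ) - p| := by push_cast; rfl
    have h2 : |(round x : ℝ) - p| ≤ |(round x:ℝ) - x| + |x - p| := abs_sub_le _ _ _
    have h3 : |(round x:ℝ) - x| = crn x := by rw [abs_sub_comm]; rfl
    have h4 := crn_le_half x
    unfold crn at *
    linarith
lemma crn_add_le (x y : ℝ) : crn (x + y) ≤ crn x + crn y := by
  have h := crn_le_abs_sub_int (x + y) (round x + round y)
  refine h.trans ?_
  have : x + y - ((round x + round y : ℤ):ℝ) = (x - round x) + (y - round y) := by
    push_cast; ring
  rw [this]
  exact (abs_add_le _ _)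

lemma crn_neg (x : ℝ) : crn (-x) = crn x := by
  have h1 : crn (-x) ≤ crn x := by
    have := crn_le_abs_sub_int (-x) (-round x)
    calc crn (-x) ≤ |-x - ((-round x : ℤ):ℝ)| := this
      _ = |x - round x| := by push_cast; rw [← abs_neg]; ring_nf
      _ = crn x := rfl
  have h2 : crn x ≤ crn (-x) := by
    have := crn_le_abs_sub_int x (-round (-x))
    calc crn x ≤ |x - ((-round (-x) : ℤ):ℝ)| := this
      _ = |-x - (round (-x):ℝ)| := by push_cast; rw [← abs_neg]; ring_nf
      _ = crn (-x) := rfl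
  linarith

lemma crn_add_int (x : ℝ) (p : ℤ) : crn (x + p) = crn x := by
  have h1 : crn (x + p) ≤ crn x := by
    have := crn_le_abs_sub_int (x + p) (round x + p)
    calc crn (x+p) ≤ |x + p - ((round x + p : ℤ):ℝ)| := this
      _ = |x - round x| := by push_cast; ring_nf
      _ = crn x := rfl
  have h2 : crn x ≤ crn (x + p) := by
    have := crn_le_abs_sub_int x (round (x+p) - p)
    calc crn x ≤ |x - ((round (x+p) - p : ℤ):ℝ)| := this
      _ = |x + p - (round (x+p):ℝ)| := by push_cast; ring_nf
      _ = crn (x+p) := rfl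
  linarith

lemma crn_eq_self {x : ℝ} (h0 : 0 ≤ x) (h1 : x ≤ 1/2) : crn x = x := by
  have hfr : Int.fract x = x := Int.fract_eq_self.2 ⟨h0, by linarith⟩
  rw [crn, abs_sub_round_eq_min, hfr]
  exact min_eq_left (by linarith)

lemma cos_pair {x δ : ℝ} (hδ : 0 ≤ δ) (h : δ ≤ crn x) :
    8 * δ^2 ≤ 1 - Real.cos (2 * π * x) := by
  have hδ2 : δ ≤ 1/2 := h.trans (crn_le_half x)
  have hy : crn x = |x - round x| := rfl
  have hπ := Real.pi_pos
  have h1 : Real.cos (2 * π * x) = Real.cos (2*π*(x - round x)) := by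
    have : 2*π*x = 2*π*(x - round x) + (round x : ℤ) * (2*π) := by ring
    rw [this, Real.cos_add_int_mul_two_pi]
  have h2 : Real.cos (2*π*(x - round x)) = Real.cos (2*π*|x - round x|) := by
    rw [← Real.cos_abs (2*π*(x - round x)), abs_mul, abs_of_pos (by positivity : (0:ℝ) < 2*π)]
  have h3 : Real.cos (2*π*|x - round x|) ≤ Real.cos (2*π*δ) := by
    apply Real.cos_le_cos_of_nonneg_of_le_pi (by positivity)
    · nlinarith [crn_le_half x, hy ▸ h]
    · nlinarith [hy ▸ h]
  have h4 : Real.cos (2*π*δ) ≤ 1 - 2/π^2 * (2*π*δ)^2 := by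
    apply Real.cos_le_one_sub_mul_cos_sq
    rw [abs_of_nonneg (by positivity)]
    nlinarith
  have h5 : 2/π^2 * (2*π*δ)^2 = 8 * δ^2 := by
    field_simp
    ring
  linarith [h1 ▸ (h2 ▸ (h3.trans h4))]

lemma sum_inv_sq_aux (N : ℕ) (hN : 1 ≤ N) :
    ∑ v ∈ Icc 1 N, ((v:ℝ)^2)⁻¹ ≤ 2 - (N:ℝ)⁻¹ := by
  induction N, hN using Nat.le_induction with
  | base => norm_num
  | succ N hN ih =>
    rw [Finset.sum_Icc_succ_top (by omega : 1 ≤ N + 1)]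
    have hN0 : (0:ℝ) < N := by exact_mod_cast hN
    have key : (((N:ℝ)+1)^2)⁻¹ ≤ (N:ℝ)⁻¹ - ((N:ℝ)+1)⁻¹ := by
      have h1 : (N:ℝ)⁻¹ - ((N:ℝ)+1)⁻¹ = ((N:ℝ)*((N:ℝ)+1))⁻¹ := by
        field_simp
        ring
      rw [h1]
      apply inv_anti₀ (by positivity)
      nlinarith
    push_cast
    linarith

lemma sum_inv_sq_le (N : ℕ) : ∑ v ∈ Icc 1 N, ((v:ℝ)^2)⁻¹ ≤ 2 := by
  rcases Nat.eq_zero_or_pos N with h | h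
  · simp [h]
  · have := sum_inv_sq_aux N h
    have : (0:ℝ) < (N:ℝ)⁻¹ := by positivity
    linarith [sum_inv_sq_aux N h]

section Fourier
variable {m : ℕ} [NeZero m]

lemma sum_char (d : ZMod m) :
    ∑ k : ZMod m, ZMod.stdAddChar (d * k) = if d = 0 then (m:ℂ) else 0 := by
  split_ifs with h
  · simp only [h, zero_mul, AddChar.map_zero_eq_one, Finset.sum_const, Finset.card_univ,
      ZMod.card, nsmul_eq_mul, mul_one]
  · have h1 : (ZMod.stdAddChar (N := m)).mulShift d ≠ 1 := ZMod.isPrimitive_stdAddChar m h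
    have h2 := AddChar.sum_eq_zero_of_ne_one h1
    simpa [AddChar.mulShift_apply] using h2

lemma conj_char (a : ZMod m) :
    (starRingEnd ℂ) (ZMod.stdAddChar a) = ZMod.stdAddChar (-a) := by
  rw [ZMod.stdAddChar_apply, ZMod.stdAddChar_apply, ← Circle.coe_inv_eq_conj,
    ← AddChar.map_neg_eq_inv]

noncomputable def fhat (f : ZMod m → ℝ) (k : ZMod m) : ℂ :=
  ∑ x : ZMod m, ZMod.stdAddChar (-(x * k)) * (f x : ℂ)

lemma parseval (f : ZMod m → ℝ) :
    ∑ k : ZMod m, Complex.normSq (fhat f k) = m * ∑ x : ZMod m, (f x)^2 := by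
  have key : ∑ k : ZMod m, (fhat f k * (starRingEnd ℂ) (fhat f k))
      = (m:ℂ) * ∑ x : ZMod m, ((f x : ℂ))^2 := by
    have h1 : ∀ k : ZMod m, fhat f k * (starRingEnd ℂ) (fhat f k)
        = ∑ x : ZMod m, ∑ y : ZMod m,
            (f x : ℂ) * (f y : ℂ) * ZMod.stdAddChar ((y - x) * k) := by
      intro k
      rw [fhat, map_sum, Finset.sum_mul_sum]
      refine Finset.sum_congr rfl fun x _ => Finset.sum_congr rfl fun y _ => ?_
      rw [map_mul, conj_char, Complex.conj_ofReal, neg_neg]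
      have : ZMod.stdAddChar (-(x * k)) * ZMod.stdAddChar (y * k)
          = ZMod.stdAddChar ((y - x) * k) := by
        rw [← AddChar.map_add_eq_mul]; ring_nf
      calc ZMod.stdAddChar (-(x * k)) * (f x : ℂ) * (ZMod.stdAddChar (y * k) * (f y : ℂ))
          = (f x : ℂ) * (f y : ℂ) * (ZMod.stdAddChar (-(x * k)) * ZMod.stdAddChar (y * k)) := by
            ring
        _ = (f x : ℂ) * (f y : ℂ) * ZMod.stdAddChar ((y - x) * k) := by rw [this]
    simp only [h1]
    rw [Finset.sum_comm]
    have h2 : ∀ x : ZMod m, ∑ k : ZMod m, ∑ y : ZMod m,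
        (f x : ℂ) * (f y : ℂ) * ZMod.stdAddChar ((y - x) * k)
        = (f x : ℂ)^2 * m := by
      intro x
      rw [Finset.sum_comm]
      have h3 : ∀ y : ZMod m, ∑ k : ZMod m, (f x : ℂ) * (f y : ℂ) * ZMod.stdAddChar ((y - x) * k)
          = (f x : ℂ) * (f y : ℂ) * (if y - x = 0 then (m:ℂ) else 0) := by
        intro y
        rw [← Finset.mul_sum, sum_char]
      simp only [h3, sub_eq_zero, mul_ite, mul_zero]
      rw [Finset.sum_ite_eq' Finset.univ x (fun y => (f x : ℂ) * (f y : ℂ) * m)]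
      simp only [Finset.mem_univ, if_true, sq]
    simp only [h2]
    rw [← Finset.sum_mul]
    ring
  have := key
  simp only [Complex.mul_conj] at this
  have h4 : ((∑ k : ZMod m, Complex.normSq (fhat f k) : ℝ) : ℂ)
      = ((m * ∑ x : ZMod m, (f x)^2 : ℝ) : ℂ) := by
    push_cast
    convert this using 2
  exact_mod_cast h4

lemma fhat_sub (f g : ZMod m → ℝ) (k : ZMod m) :
    fhat (fun x => f x - g x) k = fhat f k - fhat g k := by
  simp only [fhat, Complex.ofReal_sub, mul_sub, Finset.sum_sub_distrib]

lemma fhat_const (c : ℝ) (k : ZMod m) :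
    fhat (fun _ => c) k = if k = 0 then (m:ℂ) * c else 0 := by
  have h : ∀ x : ZMod m, -(x * k) = (-k) * x := fun x => by ring
  rw [fhat]
  simp only [h]
  rw [← Finset.sum_mul, sum_char]
  simp only [neg_eq_zero]
  split_ifs with hk <;> simp [mul_comm]

end Fourier

section Walk
variable (G : ℕ → ℕ) (n m : ℕ) [NeZero m]

lemma fhat_step (k : ZMod m) :
    fhat (stepDist G n m) k
      = (n:ℂ)⁻¹ * ∑ i ∈ Icc 1 n, ZMod.stdAddChar (-((G i : ZMod m) * k)) := by
  rw [fhat]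
  have h1 : ∀ x : ZMod m, (↑(stepDist G n m x) : ℂ)
      = (n:ℂ)⁻¹ * ((Finset.Icc 1 n).filter (fun i => (G i : ZMod m) = x)).card := by
    intro x; rw [stepDist]; push_cast; ring
  simp only [h1]
  have h2 : ∀ x : ZMod m, ZMod.stdAddChar (-(x * k)) *
      ((n:ℂ)⁻¹ * ((Finset.Icc 1 n).filter (fun i => (G i : ZMod m) = x)).card)
      = (n:ℂ)⁻¹ * ∑ i ∈ (Finset.Icc 1 n).filter (fun i => (G i : ZMod m) = x),
          ZMod.stdAddChar (-(x * k)) := by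
    intro x
    rw [Finset.sum_const, nsmul_eq_mul]
    ring
  simp only [h2]
  rw [← Finset.mul_sum]
  congr 1
  have h5 := Finset.sum_fiberwise_eq_sum_filter' (Finset.Icc 1 n) Finset.univ
    (fun i => (G i : ZMod m)) (fun x => ZMod.stdAddChar (-(x * k)))
  simpa using h5

lemma fhat_step_zero (hn : n ≠ 0) : fhat (stepDist G n m) (0 : ZMod m) = 1 := by
  rw [fhat_step]
  simp only [mul_zero, neg_zero, AddChar.map_zero_eq_one, Finset.sum_const, Nat.card_Icc,
    Nat.add_sub_cancel, nsmul_eq_mul, mul_one]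
  exact inv_mul_cancel₀ (by exact_mod_cast hn)

lemma fhat_walk (t : ℕ) (k : ZMod m) :
    fhat (walkDist G n m t) k = (fhat (stepDist G n m) k)^t := by
  induction t with
  | zero =>
    rw [fhat]
    have hw : walkDist G n m 0 = fun x : ZMod m => if x = 0 then (1:ℝ) else 0 := rfl
    simp [hw, apply_ite, Finset.sum_ite_eq']
  | succ t ih =>
    rw [fhat]
    have hw : walkDist G n m (t+1)
        = fun x : ZMod m => ∑ y : ZMod m, walkDist G n m t y * stepDist G n m (x - y) := rfl
    simp only [hw]
    push_cast
    simp only [Finset.mul_sum]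
    rw [Finset.sum_comm]
    have h1 : ∀ y : ZMod m, ∑ x : ZMod m,
        ZMod.stdAddChar (-(x * k)) * ((walkDist G n m t y : ℂ) * (stepDist G n m (x - y) : ℂ))
        = (walkDist G n m t y : ℂ) * ZMod.stdAddChar (-(y * k)) *
            ∑ u : ZMod m, ZMod.stdAddChar (-(u * k)) * (stepDist G n m u : ℂ) := by
      intro y
      rw [Finset.mul_sum]
      apply Fintype.sum_equiv (Equiv.subRight y)
      intro x
      simp only [Equiv.subRight_apply]
      have h3 : ZMod.stdAddChar (-(y * k)) * ZMod.stdAddChar (-((x - y) * k))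
          = ZMod.stdAddChar (-(x * k)) := by
        rw [← AddChar.map_add_eq_mul]
        congr 1
        ring
      rw [← h3]
      ring
    simp only [h1]
    rw [← Finset.sum_mul]
    rw [pow_succ, ← ih, fhat]
    congr 1
    apply Finset.sum_congr rfl
    intro y _
    ring

end Walk
lemma G_mono (G : ℕ → ℕ) (hmono : ∀ i, 1 ≤ i → G i < G (i + 1)) :
    ∀ i j, 1 ≤ i → i ≤ j → G i ≤ G j := by
  intro i j h1 h2
  induction j, h2 using Nat.le_induction with
  | base => exact le_rfl
  | succ j hj ih => exact ih.trans (le_of_lt (hmono j (h1.trans hj)))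

set_option maxHeartbeats 1000000 in
lemma good_pairs (G : ℕ → ℕ) (hG1 : G 1 = 1) (hmono : ∀ i, 1 ≤ i → G i < G (i + 1))
    (s : ℕ) (hs2 : 2 ≤ s) (hs : ∀ i, 1 ≤ i → G (i + 1) ≤ s * G i)
    (n : ℕ) (hn : 2 ≤ n) (m : ℕ) (hm : m = G n)
    (k' : ℕ) (hk1 : 1 ≤ k') (hk2 : 2 * k' ≤ m) :
    ∃ S : Finset (ℕ × ℕ), S ⊆ Icc 1 n ×ˢ Icc 1 n ∧
      (∀ p ∈ S, ((8*(s:ℝ))⁻¹ ≤ crn ((G p.2 * k' : ℝ)/m - (G p.1 * k' : ℝ)/m))) ∧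
      max 1 (Real.logb s (2*k') - 1) ≤ (S.card : ℝ) := by
  classical
  set δ : ℝ := (8*(s:ℝ))⁻¹ with hδdef
  set z : ℕ → ℝ := fun j => ((G j : ℝ) * (k' : ℝ))/(m : ℝ) with hzdef
  have hzeq : ∀ p : ℕ × ℕ, ((G p.2 * k' : ℝ)/m - (G p.1 * k' : ℝ)/m) = z p.2 - z p.1 := by
    intro p; simp [hzdef]
  have hsR : (2:ℝ) ≤ (s:ℝ) := by exact_mod_cast hs2
  have hδpos : 0 < δ := by positivity
  have hδ16 : δ ≤ 1/16 := by
    rw [hδdef]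
    rw [inv_le_comm₀ (by positivity) (by norm_num)]
    linarith
  have hm2 : 2 ≤ m := by omega
  have hmpos : (0:ℝ) < m := by positivity
  have hk'R : (1:ℝ) ≤ (k' : ℝ) := by exact_mod_cast hk1
  have hGpos : ∀ j, 1 ≤ j → 1 ≤ G j := by
    intro j hj
    have := G_mono G hmono 1 j le_rfl hj
    omega
  have hz_mono : ∀ i j, 1 ≤ i → i ≤ j → z i ≤ z j := by
    intro i j h1 h2
    have hGij : (G i : ℝ) ≤ (G j : ℝ) := by exact_mod_cast G_mono G hmono i j h1 h2
    have hk0 : (0:ℝ) ≤ (k' : ℝ) := by positivity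
    show (G i : ℝ) * k' / m ≤ (G j : ℝ) * k' / m
    rw [div_le_div_iff₀ hmpos hmpos]
    nlinarith [mul_le_mul_of_nonneg_right (mul_le_mul_of_nonneg_right hGij hk0) hmpos.le]
  have hz_nonneg : ∀ j, 0 ≤ z j := by intro j; rw [hzdef]; positivity
  have hz1 : z 1 ≤ 1/2 := by
    rw [hzdef]; simp only [hG1, Nat.cast_one, one_mul]
    rw [div_le_iff₀ hmpos]
    have : (2:ℝ) * k' ≤ m := by exact_mod_cast hk2
    linarith
  have hzn : z n = (k' : ℝ) := by
    have hGn : (G n : ℝ) = m := by exact_mod_cast hm.symm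
    show (G n : ℝ) * k' / m = k'
    rw [hGn]
    field_simp
  have hz_step : ∀ j, 1 ≤ j → z (j + 1) ≤ (s:ℝ) * z j := by
    intro j hj
    rw [hzdef]
    have h1 : (G (j+1) : ℝ) ≤ (s:ℝ) * (G j : ℝ) := by exact_mod_cast hs j hj
    have hk0 : (0:ℝ) ≤ (k' : ℝ) := by positivity
    rw [div_le_iff₀ hmpos]
    have h2 : (G (j+1) : ℝ) * k' ≤ (s:ℝ) * (G j : ℝ) * k' := by nlinarith
    calc (G (j+1) : ℝ) * k' ≤ (s:ℝ) * (G j : ℝ) * k' := h2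
      _ = ((s:ℝ) * ((G j : ℝ) * k' / m)) * m := by field_simp
  -- existence of a very good index
  have hex : ∃ i₀, i₀ ∈ Icc 1 n ∧ 3*δ ≤ crn (z i₀) := by
    by_contra hcon
    push_neg at hcon
    have hsmall : ∀ j, 1 ≤ j → j ≤ n → z j < 3*δ := by
      intro j hj1
      induction j, hj1 using Nat.le_induction with
      | base =>
        intro h1n
        have h := hcon 1 (mem_Icc.2 ⟨le_rfl, h1n⟩)
        by_contra hge
        push_neg at hge
        rw [crn_eq_self (hz_nonneg 1) hz1] at h
        linarith
      | succ j hj ih =>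
        intro hjn
        have hzj : z j < 3*δ := ih (by omega)
        have h1 : z (j+1) ≤ (s:ℝ) * z j := hz_step j hj
        have h2 : (s:ℝ) * z j < (s:ℝ) * (3*δ) := by
          have : (0:ℝ) < s := by linarith
          exact mul_lt_mul_of_pos_left hzj this
        have h3 : (s:ℝ) * (3*δ) = 3/8 := by
          have hs0 : (s:ℝ) ≠ 0 := by linarith
          rw [hδdef]; field_simp
        have h4 : z (j+1) ≤ 1/2 := by linarith
        have h := hcon (j+1) (mem_Icc.2 ⟨by omega, hjn⟩)
        rw [crn_eq_self (hz_nonneg (j+1)) h4] at h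
        exact h
    have hlast := hsmall n (by omega) le_rfl
    rw [hzn] at hlast
    linarith
  obtain ⟨i₀, hi₀mem, hi₀⟩ := hex
  -- the threshold index T
  set A := (Icc 1 n).filter (fun j => z j ≤ 1/2) with hAdef
  have hA1 : (1:ℕ) ∈ A := by
    rw [hAdef, mem_filter]
    exact ⟨mem_Icc.2 ⟨le_rfl, by omega⟩, hz1⟩
  have hAne : A.Nonempty := ⟨1, hA1⟩
  set T := A.max' hAne with hTdef
  have hTmem : T ∈ A := A.max'_mem hAne
  have hT1 : 1 ≤ T := by
    have := (mem_filter.1 hTmem).1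
    exact (mem_Icc.1 this).1
  have hTn : T ≤ n := by
    have := (mem_filter.1 hTmem).1
    exact (mem_Icc.1 this).2
  have hTz : z T ≤ 1/2 := (mem_filter.1 hTmem).2
  have hTltn : T < n := by
    rcases lt_or_eq_of_le hTn with h | h
    · exact h
    · exfalso
      rw [h, hzn] at hTz
      linarith
  have hgt : ∀ j, T < j → j ≤ n → 1/2 < z j := by
    intro j hTj hjn
    by_contra hle
    push_neg at hle
    have : j ∈ A := by
      rw [hAdef, mem_filter]
      exact ⟨mem_Icc.2 ⟨by omega, hjn⟩, hle⟩
    have := A.le_max' j this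
    omega
  -- growth bound
  have hpow : ∀ d a, 1 ≤ a → z (a + d) ≤ (s:ℝ)^d * z a := by
    intro d
    induction d with
    | zero => intro a _; simp
    | succ d ih =>
      intro a ha
      have h1 : z (a + (d+1)) = z ((a + d) + 1) := by rw [Nat.add_succ]
      have h2 : z ((a + d) + 1) ≤ (s:ℝ) * z (a + d) := hz_step _ (by omega)
      have h3 := ih a ha
      have hspos : (0:ℝ) < s := by linarith
      calc z (a + (d+1)) = z ((a + d) + 1) := h1
        _ ≤ (s:ℝ) * z (a + d) := h2
        _ ≤ (s:ℝ) * ((s:ℝ)^d * z a) := by nlinarith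
        _ = (s:ℝ)^(d+1) * z a := by ring
  have hgrow : (2:ℝ) * k' ≤ (s:ℝ)^(n - T) := by
    have h1 := hpow (n - T) T hT1
    rw [show T + (n - T) = n from by omega, hzn] at h1
    have h2 : (s:ℝ)^(n-T) * z T ≤ (s:ℝ)^(n-T) * (1/2) := by
      have : (0:ℝ) ≤ (s:ℝ)^(n-T) := by positivity
      nlinarith
    linarith
  have hlogb : Real.logb s (2*k') ≤ ((n - T : ℕ) : ℝ) := by
    rw [Real.logb_le_iff_le_rpow (by linarith : (1:ℝ) < s) (by positivity : (0:ℝ) < 2*k')]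
    rw [Real.rpow_natCast]
    exact_mod_cast hgrow
  -- construct the set of good pairs
  set f : ℕ → ℕ × ℕ := fun j => if 2*δ ≤ crn (z j) then (j, n) else (i₀, j) with hfdef
  set S : Finset (ℕ × ℕ) := insert (i₀, n) ((Icc (T+1) (n-1)).image f) with hSdef
  have hzn_crn : ∀ j, crn (z n - z j) = crn (z j) := by
    intro j
    rw [hzn, show (k':ℝ) - z j = -(z j) + ((k' : ℤ) : ℝ) from by push_cast; ring,
      crn_add_int, crn_neg]
  have hi₀Icc := mem_Icc.1 hi₀mem
  refine ⟨S, ?_, ?_, ?_⟩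
  · intro p hp
    rw [hSdef] at hp
    rcases mem_insert.1 hp with h | h
    · rw [h, mem_product]
      exact ⟨hi₀mem, mem_Icc.2 ⟨by omega, le_rfl⟩⟩
    · obtain ⟨j, hj, hfj⟩ := mem_image.1 h
      have hjIcc := mem_Icc.1 hj
      rw [← hfj, hfdef]
      dsimp only
      by_cases hc : 2*δ ≤ crn (z j)
      · rw [if_pos hc, mem_product]
        constructor <;> rw [mem_Icc] <;> omega
      · rw [if_neg hc, mem_product]
        constructor <;> rw [mem_Icc] <;> omega
  · intro p hp
    rw [hzeq p]
    rw [hSdef] at hp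
    rcases mem_insert.1 hp with h | h
    · rw [h]
      show δ ≤ crn (z n - z i₀)
      rw [hzn_crn i₀]
      linarith
    · obtain ⟨j, hj, hfj⟩ := mem_image.1 h
      rw [← hfj, hfdef]
      dsimp only
      by_cases hc : 2*δ ≤ crn (z j)
      · rw [if_pos hc]
        show δ ≤ crn (z n - z j)
        rw [hzn_crn j]
        linarith
      · push_neg at hc
        rw [if_neg hc.not_ge]
        have htri : crn (z i₀) ≤ crn (z j - z i₀) + crn (z j) := by
          have h1 : z i₀ = (z i₀ - z j) + z j := by ring
          calc crn (z i₀) = crn ((z i₀ - z j) + z j) := by rw [← h1]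
            _ ≤ crn (z i₀ - z j) + crn (z j) := crn_add_le _ _
            _ = crn (z j - z i₀) + crn (z j) := by
                rw [show z i₀ - z j = -(z j - z i₀) from by ring, crn_neg]
        show δ ≤ crn (z j - z i₀)
        linarith
  · have hinj : Set.InjOn f (Icc (T+1) (n-1)) := by
      intro a ha b hb hab
      have haIcc := mem_Icc.1 ha
      have hbIcc := mem_Icc.1 hb
      rw [hfdef] at hab
      dsimp only at hab
      by_cases h1 : 2*δ ≤ crn (z a) <;> by_cases h2 : 2*δ ≤ crn (z b)
      · rw [if_pos h1, if_pos h2, Prod.mk.injEq] at hab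
        exact hab.1
      · rw [if_pos h1, if_neg h2, Prod.mk.injEq] at hab
        omega
      · rw [if_neg h1, if_pos h2, Prod.mk.injEq] at hab
        omega
      · rw [if_neg h1, if_neg h2, Prod.mk.injEq] at hab
        exact hab.2
    have hcard1 : (1:ℝ) ≤ (S.card : ℝ) := by
      have : 0 < S.card := Finset.card_pos.2 ⟨(i₀, n), by rw [hSdef]; exact mem_insert_self _ _⟩
      exact_mod_cast this
    have hcard2 : Real.logb s (2*k') - 1 ≤ (S.card : ℝ) := by
      have h1 : ((Icc (T+1) (n-1)).image f).card = n - 1 - T := by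
        rw [Finset.card_image_of_injOn hinj, Nat.card_Icc]
        omega
      have h2 : ((Icc (T+1) (n-1)).image f).card ≤ S.card := by
        apply Finset.card_le_card
        rw [hSdef]
        exact Finset.subset_insert _ _
      have h3 : ((n - 1 - T : ℕ) : ℝ) ≤ (S.card : ℝ) := by
        rw [← h1]; exact_mod_cast h2
      have h4 : ((n - 1 - T : ℕ) : ℝ) = ((n - T : ℕ) : ℝ) - 1 := by
        have : (n - 1 - T : ℕ) = (n - T) - 1 := by omega
        rw [this, Nat.cast_sub (by omega : 1 ≤ n - T)]
        norm_num
      rw [h4] at h3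
      linarith only [h3, hlogb]
    exact max_le hcard1 hcard2

set_option maxHeartbeats 1000000 in
lemma normSq_step_le (G : ℕ → ℕ) (hG1 : G 1 = 1) (hmono : ∀ i, 1 ≤ i → G i < G (i + 1))
    (s : ℕ) (hs2 : 2 ≤ s) (hs : ∀ i, 1 ≤ i → G (i + 1) ≤ s * G i)
    (n : ℕ) (hn : 2 ≤ n) (m : ℕ) [NeZero m] (hm : m = G n)
    (k : ZMod m) (hk : k ≠ 0) :
    Complex.normSq (fhat (stepDist G n m) k)
      ≤ 1 - ((8*(s:ℝ)^2)⁻¹ / (n:ℝ)^2) *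
          max 1 (Real.logb s (2 * min k.val (m - k.val)) - 1) := by
  classical
  set K := k.val with hK
  set k' := min K (m - K) with hk'def
  have hKpos : 0 < K := by
    rcases Nat.eq_zero_or_pos K with h | h
    · exact absurd ((ZMod.val_eq_zero k).1 h) hk
    · exact h
  have hKm : K < m := ZMod.val_lt k
  have hk'1 : 1 ≤ k' := by omega
  have hk'2 : 2 * k' ≤ m := by omega
  have hm2 : 2 ≤ m := by omega
  have hm0 : (m:ℝ) ≠ 0 := by positivity
  have hn0 : (0:ℝ) < n := by exact_mod_cast (by omega : 0 < n)
  have hsR : (2:ℝ) ≤ s := by exact_mod_cast hs2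
  obtain ⟨S, hSsub, hSgood, hScard⟩ := good_pairs G hG1 hmono s hs2 hs n hn m hm k' hk'1 hk'2
  set δ : ℝ := (8*(s:ℝ))⁻¹ with hδdef
  have hδpos : 0 < δ := by positivity
  set z : ℕ → ℝ := fun j => (G j : ℝ) * (k' : ℝ) / m with hzdef
  set c : ℕ → ℂ := fun i => ZMod.stdAddChar (-((G i : ZMod m) * k)) with hcdef
  have hterm : ∀ i j : ℕ, (c i * (starRingEnd ℂ) (c j)).re = Real.cos (2*π*(z j - z i)) := by
    intro i j
    have e1 : c i * (starRingEnd ℂ) (c j)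
        = ZMod.stdAddChar (((((G j : ℤ) - (G i : ℤ)) * (K:ℤ)) : ℤ) : ZMod m) := by
      rw [hcdef]
      dsimp only
      rw [conj_char, neg_neg, ← AddChar.map_add_eq_mul]
      congr 1
      have hKk : ((K : ℕ) : ZMod m) = k := ZMod.natCast_zmod_val k
      push_cast
      rw [hKk]
      ring
    rw [e1, ZMod.stdAddChar_coe]
    have e2 : 2*(π:ℂ)*Complex.I*((((G j : ℤ) - (G i : ℤ)) * (K:ℤ) : ℤ):ℂ)/m
        = ((2*π*((((G j : ℝ) - (G i : ℝ)))*K/m) : ℝ) : ℂ) * Complex.I := by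
      push_cast; ring
    rw [e2, Complex.exp_ofReal_mul_I_re]
    show Real.cos (2*π*(((G j : ℝ) - (G i : ℝ))*K/m))
        = Real.cos (2*π*((G j : ℝ) * (k' : ℝ) / m - (G i : ℝ) * (k' : ℝ) / m))
    rcases Nat.le_total K (m - K) with hle | hle
    · have hkk : (k' : ℝ) = (K : ℝ) := by
        rw [hk'def]; exact_mod_cast congrArg Nat.cast (min_eq_left hle)
      rw [hkk]; ring_nf
    · have hkk : (k' : ℝ) = (m : ℝ) - (K : ℝ) := by
        rw [hk'def, min_eq_right hle, Nat.cast_sub hKm.le]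
      have harg : 2*π*((G j : ℝ) * (k' : ℝ) / m - (G i : ℝ) * (k' : ℝ) / m)
          = -(2*π*(((G j : ℝ) - (G i : ℝ))*K/m)) + (((G j : ℤ) - (G i : ℤ) : ℤ) : ℝ) * (2*π) := by
        rw [hkk]
        push_cast
        field_simp
        ring
      rw [harg, Real.cos_add_int_mul_two_pi, Real.cos_neg]
  have hnormSq : Complex.normSq (∑ i ∈ Icc 1 n, c i)
      = ∑ i ∈ Icc 1 n, ∑ j ∈ Icc 1 n, Real.cos (2*π*(z j - z i)) := by
    have h1 : (Complex.normSq (∑ i ∈ Icc 1 n, c i) : ℝ)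
        = ((∑ i ∈ Icc 1 n, c i) * (starRingEnd ℂ) (∑ j ∈ Icc 1 n, c j)).re := by
      rw [Complex.mul_conj]; simp
    rw [h1, map_sum, Finset.sum_mul_sum, Complex.re_sum]
    apply Finset.sum_congr rfl; intro i _
    rw [Complex.re_sum]
    exact Finset.sum_congr rfl fun j _ => hterm i j
  have hcard_n : (Icc 1 n).card = n := by rw [Nat.card_Icc]; omega
  set M : ℝ := max 1 (Real.logb s (2*(k':ℝ)) - 1) with hMdef
  have hMpos : 0 < M := lt_of_lt_of_le one_pos (le_max_left _ _)
  have hW : ∑ i ∈ Icc 1 n, ∑ j ∈ Icc 1 n, Real.cos (2*π*(z j - z i))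
      = (n:ℝ)^2 - ∑ p ∈ Icc 1 n ×ˢ Icc 1 n, (1 - Real.cos (2*π*(z p.2 - z p.1))) := by
    rw [Finset.sum_product]
    simp only [Finset.sum_sub_distrib, Finset.sum_const, hcard_n, nsmul_eq_mul, mul_one]
    ring
  have hWS : (8*(s:ℝ)^2)⁻¹ * M
      ≤ ∑ p ∈ Icc 1 n ×ˢ Icc 1 n, (1 - Real.cos (2*π*(z p.2 - z p.1))) := by
    have hsum1 : ∑ p ∈ S, (1 - Real.cos (2*π*(z p.2 - z p.1)))
        ≤ ∑ p ∈ Icc 1 n ×ˢ Icc 1 n, (1 - Real.cos (2*π*(z p.2 - z p.1))) := by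
      apply Finset.sum_le_sum_of_subset_of_nonneg hSsub
      intro p _ _
      nlinarith [Real.cos_le_one (2*π*(z p.2 - z p.1))]
    have hsum2 : (S.card : ℝ) * (8*δ^2) ≤ ∑ p ∈ S, (1 - Real.cos (2*π*(z p.2 - z p.1))) := by
      have := Finset.card_nsmul_le_sum S (fun p => 1 - Real.cos (2*π*(z p.2 - z p.1))) (8*δ^2)
        (fun p hp => cos_pair hδpos.le (hSgood p hp))
      simpa [nsmul_eq_mul] using this
    have hδ2 : 8*δ^2 = (8*(s:ℝ)^2)⁻¹ := by
      rw [hδdef]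
      rw [mul_inv, mul_inv]
      field_simp
    have hMcard : M ≤ (S.card : ℝ) := hScard
    calc (8*(s:ℝ)^2)⁻¹ * M ≤ (8*(s:ℝ)^2)⁻¹ * (S.card : ℝ) := by
          apply mul_le_mul_of_nonneg_left hMcard (by positivity)
      _ = (S.card : ℝ) * (8*δ^2) := by rw [hδ2]; ring
      _ ≤ _ := le_trans hsum2 hsum1
  have hfh : Complex.normSq (fhat (stepDist G n m) k)
      = ((n:ℝ)^2)⁻¹ * ∑ i ∈ Icc 1 n, ∑ j ∈ Icc 1 n, Real.cos (2*π*(z j - z i)) := by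
    rw [fhat_step G n m k]
    rw [map_mul, Complex.normSq_inv, Complex.normSq_natCast, ← hnormSq]
    congr 1
    rw [sq]
  rw [hfh, hW]
  have hfin : ((n:ℝ)^2)⁻¹ * ((n:ℝ)^2 - ∑ p ∈ Icc 1 n ×ˢ Icc 1 n,
      (1 - Real.cos (2*π*(z p.2 - z p.1))))
      ≤ 1 - ((8*(s:ℝ)^2)⁻¹ / (n:ℝ)^2) * M := by
    have hn2 : (0:ℝ) < (n:ℝ)^2 := by positivity
    rw [mul_sub, inv_mul_cancel₀ (ne_of_gt hn2), div_mul_eq_mul_div, sub_le_sub_iff_left]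
    rw [div_eq_mul_inv, mul_comm ((8*(s:ℝ)^2)⁻¹ * M) (((n:ℝ)^2)⁻¹)]
    exact mul_le_mul_of_nonneg_left hWS (by positivity)
  exact hfin
lemma sum_exp_bound (s : ℕ) (hs2 : 2 ≤ s) (m : ℕ) [NeZero m] (hm2 : 2 ≤ m) :
    ∑ k ∈ Finset.univ.erase (0 : ZMod m),
        Real.exp (-((4 * Real.log s + 4) * max 1 (Real.logb s (2 * min k.val (m - k.val)) - 1)))
      ≤ 1/4 := by
  classical
  set E : ℝ := 4 * Real.log s + 4 with hEdef
  have hsR : (2:ℝ) ≤ (s:ℝ) := by exact_mod_cast hs2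
  have hls : 0 < Real.log s := Real.log_pos (by linarith)
  have hE0 : 0 < E := by rw [hEdef]; linarith
  set F : ℕ → ℝ := fun v => Real.exp (-(E * max 1 (Real.logb s (2*(v:ℝ)) - 1))) with hFdef
  have hre : ∑ k ∈ Finset.univ.erase (0 : ZMod m),
      Real.exp (-(E * max 1 (Real.logb s (2 * (min k.val (m - k.val) : ℕ)) - 1)))
      = ∑ v ∈ Icc 1 (m-1),
        Real.exp (-(E * max 1 (Real.logb s (2 * (min v (m - v) : ℕ)) - 1))) := by
    refine Finset.sum_nbij' (i := fun k : ZMod m => k.val) (j := fun v : ℕ => (v : ZMod m))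
      ?_ ?_ ?_ ?_ ?_
    · intro a ha
      have h1 : a ≠ 0 := (Finset.mem_erase.1 ha).1
      have h2 : a.val < m := ZMod.val_lt a
      have h3 : a.val ≠ 0 := fun h => h1 ((ZMod.val_eq_zero a).1 h)
      simp only [mem_Icc]
      omega
    · intro v hv
      rw [mem_Icc] at hv
      rw [Finset.mem_erase]
      refine ⟨?_, Finset.mem_univ _⟩
      intro h
      have := congrArg ZMod.val h
      rw [ZMod.val_cast_of_lt (by omega), ZMod.val_zero] at this
      omega
    · intro a _; exact ZMod.natCast_zmod_val a
    · intro v hv; rw [mem_Icc] at hv; exact ZMod.val_cast_of_lt (by omega)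
    · intro a _; rfl
  have hpoint : ∀ v ∈ Icc 1 (m-1),
      Real.exp (-(E * max 1 (Real.logb s (2 * (min v (m - v) : ℕ)) - 1))) ≤ F v + F (m - v) := by
    intro v hv
    rcases Nat.le_total v (m - v) with h | h
    · rw [min_eq_left h]
      exact le_add_of_nonneg_right (Real.exp_pos _).le
    · rw [min_eq_right h]
      exact le_add_of_nonneg_left (Real.exp_pos _).le
  have hrefl : ∑ v ∈ Icc 1 (m-1), F (m - v) = ∑ v ∈ Icc 1 (m-1), F v := by
    refine Finset.sum_nbij' (i := fun v : ℕ => m - v) (j := fun v : ℕ => m - v) ?_ ?_ ?_ ?_ ?_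
    · intro a ha; rw [mem_Icc] at ha ⊢; omega
    · intro a ha; rw [mem_Icc] at ha ⊢; omega
    · intro a ha; rw [mem_Icc] at ha; omega
    · intro a ha; rw [mem_Icc] at ha; omega
    · intro a ha; rfl
  have hFle1 : ∀ v : ℕ, F v ≤ Real.exp (-E) := by
    intro v
    rw [hFdef]
    apply Real.exp_le_exp.2
    have h1 : (1:ℝ) ≤ max 1 (Real.logb s (2*(v:ℝ)) - 1) := le_max_left _ _
    nlinarith
  have hFlarge : ∀ v : ℕ, s^2 < v → F v ≤ Real.exp (-E) * (s:ℝ)^4 * (((2*(v:ℝ)))^2)⁻¹ := by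
    intro v hv
    have hs4 : 4 ≤ s*s := Nat.mul_le_mul hs2 hs2
    have hv1 : 1 ≤ v := by nlinarith [sq_nonneg s]
    have hvR : (1:ℝ) ≤ (v:ℝ) := by exact_mod_cast hv1
    have h2v : (0:ℝ) < 2*(v:ℝ) := by linarith
    set L : ℝ := Real.log (2*(v:ℝ)) with hLdef
    have hs2v : ((s:ℝ))^2 ≤ 2*(v:ℝ) := by
      have : ((s^2 : ℕ) : ℝ) < (v:ℝ) := by exact_mod_cast hv
      push_cast at this
      linarith
    have hLge : 2 * Real.log s ≤ L := by
      calc 2 * Real.log s = Real.log ((s:ℝ)^2) := by rw [Real.log_pow]; norm_num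
        _ ≤ L := Real.log_le_log (by positivity) hs2v
    have ht2 : 2 ≤ L / Real.log s := by
      rw [le_div_iff₀ hls]; linarith
    have hLt : L = (L / Real.log s) * Real.log s := by field_simp
    have hkey : -(E * (Real.logb s (2*(v:ℝ)) - 1)) ≤ -E + 4 * Real.log s - 2 * L := by
      rw [Real.logb, hEdef, ← hLdef]
      set t : ℝ := L / Real.log s
      have hprod : 0 ≤ (2*Real.log s + 4) * (t - 2) := mul_nonneg (by linarith) (by linarith)
      nlinarith [hprod, hLt]
    have hmax : Real.logb s (2*(v:ℝ)) - 1 ≤ max 1 (Real.logb s (2*(v:ℝ)) - 1) := le_max_right _ _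
    have hstep1 : F v ≤ Real.exp (-(E * (Real.logb s (2*(v:ℝ)) - 1))) := by
      rw [hFdef]
      apply Real.exp_le_exp.2
      nlinarith
    have hstep2 : Real.exp (-(E * (Real.logb s (2*(v:ℝ)) - 1)))
        ≤ Real.exp (-E + 4 * Real.log s - 2 * L) := Real.exp_le_exp.2 hkey
    have h4 : Real.exp (4*Real.log s) = (s:ℝ)^4 := by
      rw [show (4:ℝ)*Real.log s = Real.log ((s:ℝ)^4) from by rw [Real.log_pow]; norm_num]
      exact Real.exp_log (by positivity)
    have h5 : Real.exp (-(2*L)) = ((2*(v:ℝ))^2)⁻¹ := by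
      rw [Real.exp_neg]
      congr 1
      rw [show (2:ℝ)*L = Real.log ((2*(v:ℝ))^2) from by rw [Real.log_pow]; norm_num; exact hLdef]
      exact Real.exp_log (by positivity)
    have heq : Real.exp (-E + 4 * Real.log s - 2 * L)
        = Real.exp (-E) * (s:ℝ)^4 * ((2*(v:ℝ))^2)⁻¹ := by
      rw [show -E + 4*Real.log s - 2*L = (-E) + (4*Real.log s) + (-(2*L)) from by ring,
        Real.exp_add, Real.exp_add, h4, h5]
    rw [← heq]
    exact hstep1.trans hstep2
  have hsplit := Finset.sum_filter_add_sum_filter_not (Icc 1 (m-1)) (fun v => v ≤ s^2) F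
  have hsmall : ∑ v ∈ (Icc 1 (m-1)).filter (fun v => v ≤ s^2), F v
      ≤ (s:ℝ)^2 * Real.exp (-E) := by
    have h1 := Finset.sum_le_card_nsmul ((Icc 1 (m-1)).filter (fun v => v ≤ s^2)) F
      (Real.exp (-E)) (fun v _ => hFle1 v)
    have h2 : ((Icc 1 (m-1)).filter (fun v => v ≤ s^2)).card ≤ s^2 := by
      have hsub : (Icc 1 (m-1)).filter (fun v => v ≤ s^2) ⊆ Icc 1 (s^2) := by
        intro v hv
        rw [Finset.mem_filter, mem_Icc] at hv
        rw [mem_Icc]; omega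
      calc ((Icc 1 (m-1)).filter (fun v => v ≤ s^2)).card ≤ (Icc 1 (s^2)).card :=
            Finset.card_le_card hsub
        _ = s^2 := by rw [Nat.card_Icc]; omega
    have h3 : (((Icc 1 (m-1)).filter (fun v => v ≤ s^2)).card : ℝ) ≤ ((s:ℝ))^2 := by
      exact_mod_cast h2
    have h4 : (0:ℝ) ≤ Real.exp (-E) := (Real.exp_pos _).le
    calc ∑ v ∈ (Icc 1 (m-1)).filter (fun v => v ≤ s^2), F v
        ≤ (((Icc 1 (m-1)).filter (fun v => v ≤ s^2)).card : ℝ) * Real.exp (-E) := by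
          simpa [nsmul_eq_mul] using h1
      _ ≤ (s:ℝ)^2 * Real.exp (-E) := by nlinarith
  have hlarge : ∑ v ∈ (Icc 1 (m-1)).filter (fun v => ¬ v ≤ s^2), F v
      ≤ Real.exp (-E) * (s:ℝ)^4 * (1/2) := by
    have h1 : ∑ v ∈ (Icc 1 (m-1)).filter (fun v => ¬ v ≤ s^2), F v
        ≤ ∑ v ∈ (Icc 1 (m-1)).filter (fun v => ¬ v ≤ s^2),
            Real.exp (-E) * (s:ℝ)^4 * (((2*(v:ℝ)))^2)⁻¹ := by
      apply Finset.sum_le_sum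
      intro v hv
      rw [Finset.mem_filter] at hv
      exact hFlarge v (by omega)
    have h2 : ∑ v ∈ (Icc 1 (m-1)).filter (fun v => ¬ v ≤ s^2),
          Real.exp (-E) * (s:ℝ)^4 * (((2*(v:ℝ)))^2)⁻¹
        ≤ ∑ v ∈ Icc 1 (m-1), Real.exp (-E) * (s:ℝ)^4 * (((2*(v:ℝ)))^2)⁻¹ := by
      apply Finset.sum_le_sum_of_subset_of_nonneg (Finset.filter_subset _ _)
      intro v _ _
      positivity
    have hterm24 : ∀ v : ℕ, (((2*(v:ℝ)))^2)⁻¹ = 4⁻¹ * ((v:ℝ)^2)⁻¹ := by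
      intro v; rw [mul_pow, mul_inv]; norm_num
    have h3 : ∑ v ∈ Icc 1 (m-1), Real.exp (-E) * (s:ℝ)^4 * (((2*(v:ℝ)))^2)⁻¹
        = Real.exp (-E) * (s:ℝ)^4 * (4⁻¹ * ∑ v ∈ Icc 1 (m-1), ((v:ℝ)^2)⁻¹) := by
      simp only [hterm24]
      rw [← Finset.mul_sum, ← Finset.mul_sum]
    have h4 := sum_inv_sq_le (m-1)
    calc ∑ v ∈ (Icc 1 (m-1)).filter (fun v => ¬ v ≤ s^2), F v
        ≤ Real.exp (-E) * (s:ℝ)^4 * (4⁻¹ * ∑ v ∈ Icc 1 (m-1), ((v:ℝ)^2)⁻¹) := by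
          rw [← h3]; exact h1.trans h2
      _ ≤ Real.exp (-E) * (s:ℝ)^4 * (1/2) := by
          have he : (0:ℝ) < Real.exp (-E) := Real.exp_pos _
          have hs40 : (0:ℝ) < (s:ℝ)^4 := by positivity
          have h6 : 4⁻¹ * ∑ v ∈ Icc 1 (m-1), ((v:ℝ)^2)⁻¹ ≤ (1:ℝ)/2 := by linarith
          exact mul_le_mul_of_nonneg_left h6 (by positivity)
  have hFsum : ∑ v ∈ Icc 1 (m-1), F v ≤ Real.exp (-E) * (s:ℝ)^4 := by
    rw [← hsplit]
    have hs2sq : (4:ℝ) ≤ (s:ℝ)^2 := by nlinarith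
    have hs2R : (s:ℝ)^2 ≤ (s:ℝ)^4 / 2 := by
      nlinarith [mul_nonneg (by linarith : (0:ℝ) ≤ (s:ℝ)^2 - 4) (by positivity : (0:ℝ) ≤ (s:ℝ)^2)]
    have he : (0:ℝ) < Real.exp (-E) := Real.exp_pos _
    nlinarith [mul_le_mul_of_nonneg_right hs2R he.le]
  have hfin : Real.exp (-E) * (s:ℝ)^4 = Real.exp (-4) := by
    have h4 : Real.exp (4*Real.log s) = (s:ℝ)^4 := by
      rw [show (4:ℝ)*Real.log s = Real.log ((s:ℝ)^4) from by rw [Real.log_pow]; norm_num]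
      exact Real.exp_log (by positivity)
    rw [hEdef, show -(4*Real.log s + 4) = -(4*Real.log s) + (-4:ℝ) from by ring,
      Real.exp_add, Real.exp_neg, h4]
    have hs40 : (0:ℝ) < (s:ℝ)^4 := by positivity
    field_simp
  have hexp4 : Real.exp (-4:ℝ) ≤ 1/8 := by
    have h1 : (2:ℝ) ≤ Real.exp 1 := by
      have := Real.add_one_le_exp 1
      linarith
    have h2 : Real.exp (4:ℝ) = Real.exp 1 ^ (4:ℕ) := by
      rw [← Real.exp_nat_mul]; norm_num
    have h3 : (8:ℝ) ≤ Real.exp 4 := by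
      rw [h2]
      have h5 := pow_le_pow_left₀ (by norm_num : (0:ℝ) ≤ 2) h1 4
      norm_num at h5
      linarith
    rw [Real.exp_neg]
    rw [inv_le_comm₀ (by positivity) (by norm_num)]
    linarith
  calc ∑ k ∈ Finset.univ.erase (0 : ZMod m),
      Real.exp (-(E * max 1 (Real.logb s (2 * (min k.val (m - k.val) : ℕ)) - 1)))
      = ∑ v ∈ Icc 1 (m-1),
        Real.exp (-(E * max 1 (Real.logb s (2 * (min v (m - v) : ℕ)) - 1))) := hre
    _ ≤ ∑ v ∈ Icc 1 (m-1), (F v + F (m - v)) := Finset.sum_le_sum hpoint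
    _ = ∑ v ∈ Icc 1 (m-1), F v + ∑ v ∈ Icc 1 (m-1), F (m - v) := Finset.sum_add_distrib
    _ = 2 * ∑ v ∈ Icc 1 (m-1), F v := by rw [hrefl]; ring
    _ ≤ 2 * (Real.exp (-E) * (s:ℝ)^4) := by linarith
    _ = 2 * Real.exp (-4:ℝ) := by rw [hfin]
    _ ≤ 1/4 := by linarith


end RWmix

set_option maxHeartbeats 1000000 in
/-- The mixing time of the random walk determined by a linear recurrence is at most
`γ n²` for some constant `γ` depending only on `s`. -/
theorem mixing_time_le_n_sq
    (G : ℕ → ℕ) (hG1 : G 1 = 1) (hmono : ∀ i, 1 ≤ i → G i < G (i + 1))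
    (s : ℕ) (hs2 : 2 ≤ s) (hs : ∀ i, 1 ≤ i → G (i + 1) ≤ s * G i) :
    ∃ γ : ℝ, 0 < γ ∧
      ∀ (n : ℕ), 2 ≤ n → ∀ (m : ℕ) [NeZero m], m = G n →
        ∀ t : ℕ, γ * (n : ℝ) ^ 2 ≤ t →
          (1 / 2 : ℝ) * ∑ x : ZMod m, |walkDist G n m t x - 1 / m| ≤ 1 / 4 := by
  classical
  have hsR : (2:ℝ) ≤ (s:ℝ) := by exact_mod_cast hs2
  have hls : 0 < Real.log s := Real.log_pos (by linarith)
  refine ⟨(4*Real.log s + 4) * (8*(s:ℝ)^2), mul_pos (by linarith) (by positivity), ?_⟩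
  intro n hn m _inst hm t ht
  have hm2 : 2 ≤ m := by
    have h1 : G 1 < G 2 := hmono 1 le_rfl
    have h2 : G 2 ≤ G n := RWmix.G_mono G hmono 2 n (by norm_num) hn
    omega
  have hn0 : n ≠ 0 := by omega
  have hnR : (0:ℝ) < n := by exact_mod_cast (by omega : 0 < n)
  have hmR : (0:ℝ) < m := by exact_mod_cast (by omega : 0 < m)
  set q : ZMod m → ℝ := fun x => walkDist G n m t x - 1/m with hqdef
  have hfq : ∀ k : ZMod m, RWmix.fhat q k
      = if k = 0 then 0 else (RWmix.fhat (stepDist G n m) k)^t := by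
    intro k
    rw [show q = fun x => walkDist G n m t x - (fun _ : ZMod m => (1/m : ℝ)) x from rfl]
    rw [RWmix.fhat_sub, RWmix.fhat_walk, RWmix.fhat_const]
    by_cases hk : k = 0
    · rw [if_pos hk, if_pos hk, hk, RWmix.fhat_step_zero G n m hn0, one_pow]
      have hone : (m:ℂ) * ((1/m : ℝ) : ℂ) = 1 := by
        push_cast
        field_simp
        exact div_self (Nat.cast_ne_zero.2 (by omega))
      rw [hone, sub_self]
    · rw [if_neg hk, if_neg hk, sub_zero]
  have hpar := RWmix.parseval q
  have hsplit : ∑ k : ZMod m, Complex.normSq (RWmix.fhat q k)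
      = ∑ k ∈ Finset.univ.erase (0 : ZMod m),
          (Complex.normSq (RWmix.fhat (stepDist G n m) k))^t := by
    rw [← Finset.add_sum_erase Finset.univ _ (Finset.mem_univ (0 : ZMod m))]
    rw [hfq 0, if_pos rfl, Complex.normSq_zero, zero_add]
    apply Finset.sum_congr rfl
    intro k hk
    rw [hfq k, if_neg (Finset.mem_erase.1 hk).1, map_pow]
  set E : ℝ := 4*Real.log s + 4 with hEdef
  have hterm : ∀ k ∈ Finset.univ.erase (0 : ZMod m),
      (Complex.normSq (RWmix.fhat (stepDist G n m) k))^t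
        ≤ Real.exp (-(E * max 1 (Real.logb s (2 * min k.val (m - k.val)) - 1))) := by
    intro k hk
    have hk0 : k ≠ 0 := (Finset.mem_erase.1 hk).1
    set M : ℝ := max 1 (Real.logb s (2 * (min k.val (m - k.val) : ℕ)) - 1) with hMdef
    have hM1 : (1:ℝ) ≤ M := le_max_left _ _
    set ρ : ℝ := (8*(s:ℝ)^2)⁻¹ with hρdef
    have hρpos : (0:ℝ) < ρ := by positivity
    have h1 : Complex.normSq (RWmix.fhat (stepDist G n m) k) ≤ 1 - ρ/(n:ℝ)^2 * M :=
      RWmix.normSq_step_le G hG1 hmono s hs2 hs n hn m hm k hk0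
    have h2 : (0:ℝ) ≤ Complex.normSq (RWmix.fhat (stepDist G n m) k) := Complex.normSq_nonneg _
    have h3 : 1 - ρ/(n:ℝ)^2*M ≤ Real.exp (-(ρ/(n:ℝ)^2*M)) := by
      have := Real.add_one_le_exp (-(ρ/(n:ℝ)^2*M))
      linarith
    have h4 : (Complex.normSq (RWmix.fhat (stepDist G n m) k))^t
        ≤ Real.exp (-(ρ/(n:ℝ)^2*M))^t := pow_le_pow_left₀ h2 (h1.trans h3) t
    have h5 : Real.exp (-(ρ/(n:ℝ)^2*M))^t = Real.exp (-(ρ/(n:ℝ)^2*M*t)) := by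
      rw [← Real.exp_nat_mul]
      congr 1
      ring
    have h6 : E * M ≤ ρ/(n:ℝ)^2*M*t := by
      have htR : ((4*Real.log s + 4) * (8*(s:ℝ)^2)) * (n:ℝ)^2 ≤ (t:ℝ) := ht
      have h7 : E * (n:ℝ)^2 ≤ ρ * t := by
        have h8 : ρ * (((4*Real.log s + 4) * (8*(s:ℝ)^2)) * (n:ℝ)^2) ≤ ρ * t :=
          mul_le_mul_of_nonneg_left htR hρpos.le
        have h9 : ρ * (((4*Real.log s + 4) * (8*(s:ℝ)^2)) * (n:ℝ)^2) = E * (n:ℝ)^2 := by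
          rw [hρdef, hEdef]
          field_simp
        linarith
      have h10 : E ≤ ρ * t / (n:ℝ)^2 := by
        rw [le_div_iff₀ (by positivity : (0:ℝ) < (n:ℝ)^2)]
        linarith
      have h11 : E * M ≤ (ρ * t / (n:ℝ)^2) * M :=
        mul_le_mul_of_nonneg_right h10 (by linarith)
      calc E * M ≤ (ρ * t / (n:ℝ)^2) * M := h11
        _ = ρ/(n:ℝ)^2*M*t := by ring
    calc (Complex.normSq (RWmix.fhat (stepDist G n m) k))^t
        ≤ Real.exp (-(ρ/(n:ℝ)^2*M*t)) := by rw [← h5]; exact h4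
      _ ≤ Real.exp (-(E * M)) := Real.exp_le_exp.2 (by linarith)
  have hsum := RWmix.sum_exp_bound s hs2 m hm2
  have hkey : ∑ k ∈ Finset.univ.erase (0 : ZMod m),
      (Complex.normSq (RWmix.fhat (stepDist G n m) k))^t ≤ 1/4 :=
    (Finset.sum_le_sum hterm).trans hsum
  have hcs := sq_sum_le_card_mul_sum_sq (s := (Finset.univ : Finset (ZMod m)))
    (f := fun x : ZMod m => |q x|)
  have hcard : ((Finset.univ : Finset (ZMod m)).card : ℝ) = (m:ℝ) := by
    rw [Finset.card_univ, ZMod.card]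
  have htv2 : (∑ x : ZMod m, |q x|)^2 ≤ 1/4 := by
    have habs : ∀ x : ZMod m, |q x|^2 = q x^2 := fun x => sq_abs _
    calc (∑ x : ZMod m, |q x|)^2 ≤ (m:ℝ) * ∑ x : ZMod m, |q x|^2 := by
          rw [← hcard]; exact_mod_cast hcs
      _ = (m:ℝ) * ∑ x : ZMod m, q x^2 := by
          congr 1
          exact Finset.sum_congr rfl fun x _ => habs x
      _ = ∑ k : ZMod m, Complex.normSq (RWmix.fhat q k) := hpar.symm
      _ = ∑ k ∈ Finset.univ.erase (0 : ZMod m),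
          (Complex.normSq (RWmix.fhat (stepDist G n m) k))^t := hsplit
      _ ≤ 1/4 := hkey
  have htvpos : (0:ℝ) ≤ ∑ x : ZMod m, |q x| :=
    Finset.sum_nonneg fun x _ => abs_nonneg _
  have htv : ∑ x : ZMod m, |q x| ≤ 1/2 := by nlinarith
  show (1 / 2 : ℝ) * ∑ x : ZMod m, |q x| ≤ 1 / 4
  linarith
end

section
/- Let G : ℕ → ℕ be a sequence of positive integers with G i ≤ G (i+1) for all i, fix n ≥ 2, set m = G n, and let λ_1 = (1/n)·Σ_{i=1}^{n} exp(2π I G i / m) where I = √(-1). Let M = card{i ∈ Finset.Icc 1 (n−1) : n · G i > G n}. Then |λ_1| ≥ 1 − 2M/n − 2π²/n². -/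
open Finset Real

/-- Lower bound on the modulus of the eigenvalue `λ_1`:
`|λ_1| ≥ 1 - 2M/n - 2π²/n²`, where `M = #{1 ≤ i ≤ n-1 : n G i > G n}`. -/
theorem eigenvalue_one_modulus_lower_bound
    (G : ℕ → ℕ) (hGpos : ∀ i, 1 ≤ i → 0 < G i)
    (hmono : ∀ i, G i ≤ G (i + 1))
    (n : ℕ) (hn : 2 ≤ n) (m : ℕ) (hm : m = G n)
    (M : ℕ) (hM : M = ((Finset.Icc 1 (n - 1)).filter (fun i => G n < n * G i)).card) :
    1 - 2 * (M : ℝ) / n - 2 * π ^ 2 / (n : ℝ) ^ 2 ≤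
      ‖(1 / n : ℂ) *
        ∑ i ∈ Finset.Icc 1 n, Complex.exp (2 * π * Complex.I * G i / m)‖ := by
  have hGn : 0 < G n := hGpos n (by omega)
  have hm0 : 0 < m := hm ▸ hGn
  have hmr : (0:ℝ) < (m:ℝ) := by exact_mod_cast hm0
  have hnr : (0:ℝ) < (n:ℝ) := by positivity
  have hpi : (0:ℝ) < π := Real.pi_pos
  -- reduce to the real part
  have habs : ∀ z : ℂ, z.re ≤ ‖z‖ := fun z => Complex.re_le_norm z
  refine le_trans ?_ (habs _)
  have hre : ∀ i : ℕ, (Complex.exp (2 * π * Complex.I * G i / m)).re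
      = Real.cos (2 * π * G i / m) := by
    intro i
    have h : (2 * π * Complex.I * G i / m : ℂ) = ((2 * π * G i / m : ℝ) : ℂ) * Complex.I := by
      push_cast
      ring
    rw [h, Complex.exp_ofReal_mul_I_re]
  have hre2 : ((1 / n : ℂ) * ∑ i ∈ Finset.Icc 1 n,
        Complex.exp (2 * π * Complex.I * G i / m)).re
      = (1 / n : ℝ) * ∑ i ∈ Finset.Icc 1 n, Real.cos (2 * π * G i / m) := by
    have h1 : (1 / n : ℂ) = ((1 / n : ℝ) : ℂ) := by push_cast; ring
    rw [h1, Complex.re_ofReal_mul, Complex.re_sum]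
    congr 1
    exact Finset.sum_congr rfl fun i _ => hre i
  rw [hre2]
  -- split off the top term i = n
  have hsplit : ∑ i ∈ Finset.Icc 1 n, Real.cos (2 * π * G i / m)
      = (∑ i ∈ Finset.Icc 1 (n - 1), Real.cos (2 * π * G i / m))
        + Real.cos (2 * π * G n / m) := by
    have h : n = (n - 1) + 1 := by omega
    rw [h, Finset.sum_Icc_succ_top (by omega)]
    rw [← h]
  have hcosn : Real.cos (2 * π * G n / m) = 1 := by
    have : (2 * π * G n / m : ℝ) = 2 * π := by
      rw [hm]; field_simp
    rw [this, Real.cos_two_pi]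
  -- bound the sum over Icc 1 (n-1)
  set s : Finset ℕ := Finset.Icc 1 (n - 1) with hs
  set B : Finset ℕ := s.filter (fun i => G n < n * G i) with hB
  have hMcard : M = B.card := hM
  have hMle : M ≤ n - 1 := by
    rw [hMcard]
    calc B.card ≤ s.card := Finset.card_filter_le _ _
    _ = n - 1 := by simp [hs]
  -- bad terms
  have hbad : ∀ i ∈ B, (-1 : ℝ) ≤ Real.cos (2 * π * G i / m) := fun i _ =>
    Real.neg_one_le_cos _
  -- good terms
  have hgood : ∀ i ∈ s.filter (fun i => ¬ G n < n * G i),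
      (1 - 2 * π ^ 2 / (n:ℝ) ^ 2 : ℝ) ≤ Real.cos (2 * π * G i / m) := by
    intro i hi
    simp only [Finset.mem_filter, hs, Finset.mem_Icc, not_lt] at hi
    obtain ⟨⟨hi1, hi2⟩, hle⟩ := hi
    set x : ℝ := 2 * π * G i / m with hx
    have hx0 : 0 ≤ x := by positivity
    have hGipos : (0:ℝ) < G i := by exact_mod_cast hGpos i hi1
    have hxle : x ≤ 2 * π / n := by
      rw [hx, div_le_div_iff₀ hmr hnr]
      have : (n:ℝ) * G i ≤ (m:ℝ) := by
        rw [hm]; exact_mod_cast hle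
      nlinarith
    have h1 : 1 - x ^ 2 / 2 ≤ Real.cos x := Real.one_sub_sq_div_two_le_cos
    have h2 : x ^ 2 ≤ (2 * π / n) ^ 2 := by nlinarith
    have h3 : (2 * π / n) ^ 2 / 2 = 2 * π ^ 2 / (n:ℝ) ^ 2 := by
      field_simp
    nlinarith
  have hsumb : ∑ i ∈ s, Real.cos (2 * π * G i / m)
      ≥ (B.card : ℝ) * (-1) + ((s.filter (fun i => ¬ G n < n * G i)).card : ℝ)
        * (1 - 2 * π ^ 2 / (n:ℝ) ^ 2) := by
    rw [← Finset.sum_filter_add_sum_filter_not s (fun i => G n < n * G i)]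
    gcongr ?_ + ?_
    · calc (B.card : ℝ) * (-1) = ∑ _i ∈ B, (-1 : ℝ) := by simp
        _ ≤ _ := Finset.sum_le_sum hbad
    · calc ((s.filter (fun i => ¬ G n < n * G i)).card : ℝ) * (1 - 2 * π ^ 2 / (n:ℝ) ^ 2)
          = ∑ _i ∈ s.filter (fun i => ¬ G n < n * G i), (1 - 2 * π ^ 2 / (n:ℝ) ^ 2) := by
            simp [mul_comm]; ring
        _ ≤ _ := Finset.sum_le_sum hgood
  have hcardgood : (s.filter (fun i => ¬ G n < n * G i)).card = n - 1 - M := by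
    have h := Finset.card_filter_add_card_filter_not
      (s := s) (p := fun i => G n < n * G i)
    rw [← hB] at h
    have hscard : s.card = n - 1 := by simp [hs]
    omega
  rw [hsplit, hcosn]
  have hcg : ((s.filter (fun i => ¬ G n < n * G i)).card : ℝ) = (n:ℝ) - 1 - M := by
    rw [hcardgood]
    have : (1:ℕ) ≤ n := by omega
    push_cast [Nat.cast_sub hMle, Nat.cast_sub this]
    ring
  have h1n : (1:ℕ) ≤ n := by omega
  have hMr : (M:ℝ) ≤ (n:ℝ) - 1 := by
    have hc : ((n-1:ℕ):ℝ) = (n:ℝ) - 1 := by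
      rw [Nat.cast_sub h1n]; norm_num
    rw [← hc]; exact_mod_cast hMle
  have hpisq : (0:ℝ) < π ^ 2 := by positivity
  have hM0 : (0:ℝ) ≤ M := Nat.cast_nonneg M
  have hL : (n:ℝ) * (1 - 2 * (M:ℝ) / n - 2 * π ^ 2 / (n:ℝ) ^ 2)
      ≤ ((n:ℝ) - 1 - M) * (1 - 2 * π ^ 2 / (n:ℝ) ^ 2) + (M:ℝ) * (-1) + 1 := by
    have key : ((n:ℝ) - 1 - M) * (2 * π ^ 2 / (n:ℝ) ^ 2) ≤ (n:ℝ) * (2 * π ^ 2 / (n:ℝ) ^ 2) :=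
      mul_le_mul_of_nonneg_right (by linarith) (by positivity)
    have hexp : (n:ℝ) * (2 * π ^ 2 / (n:ℝ) ^ 2) = 2 * π ^ 2 / n := by
      field_simp
    have hexp2 : (n:ℝ) * (2 * (M:ℝ) / n) = 2 * M := by field_simp
    nlinarith [key]
  rw [hcg, ← hMcard] at hsumb
  have hfin : (n:ℝ) * (1 - 2 * (M:ℝ) / n - 2 * π ^ 2 / (n:ℝ) ^ 2)
      ≤ (∑ i ∈ s, Real.cos (2 * π * G i / m)) + 1 := by linarith [hsumb, hL]
  calc 1 - 2 * (M:ℝ) / n - 2 * π ^ 2 / (n:ℝ) ^ 2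
      = (1 / (n:ℝ)) * ((n:ℝ) * (1 - 2 * (M:ℝ) / n - 2 * π ^ 2 / (n:ℝ) ^ 2)) := by
        rw [← mul_assoc, one_div_mul_cancel (ne_of_gt hnr), one_mul]
    _ ≤ (1 / (n:ℝ)) * ((∑ i ∈ s, Real.cos (2 * π * G i / m)) + 1) := by
        exact mul_le_mul_of_nonneg_left hfin (by positivity)
end

section
/- Let c ≥ 2 and n ≥ 2 be integers, set κ = 1/(1 − cos(π/c)), and let λ̃(n,k) = Σ_{i=0}^{n−1} exp(2π I k / c^i) where I = √(-1). Then for every natural number t ≥ 1, Σ_{k=1}^{c^{n−1}−1} (|λ̃(n,k)|/n)^{2t} ≤ (1 + (c−1)·exp(−t/(κ·n)))^{n−1} − 1. -/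
open Finset Real

noncomputable def gfun (x : ℝ) : ℝ := 1 - |Real.cos (π * x)|

lemma gfun_nonneg (x : ℝ) : 0 ≤ gfun x := by
  simpa [gfun] using Real.abs_cos_le_one (π * x)

lemma gfun_le_one (x : ℝ) : gfun x ≤ 1 := by
  simp [gfun, abs_nonneg]

lemma gfun_add_one (x : ℝ) : gfun (x + 1) = gfun x := by
  have : π * (x + 1) = π * x + π := by ring
  rw [gfun, this, Real.cos_add_pi, abs_neg, gfun]

lemma gfun_add_nat (x : ℝ) (m : ℕ) : gfun (x + m) = gfun x := by
  induction m with
  | zero => simp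
  | succ k ih =>
      have : x + (k + 1 : ℕ) = (x + k) + 1 := by push_cast; ring
      rw [this, gfun_add_one, ih]

lemma gfun_zero : gfun 0 = 0 := by simp [gfun]

lemma gfun_ge_of_middle (c : ℕ) (hc : 2 ≤ c) (v : ℝ) (hv0 : 0 ≤ v) (hv1 : v ≤ 1)
    (a : ℕ) (ha1 : 1 ≤ a) (ha2 : a ≤ c - 2) :
    (1 - Real.cos (π / c)) / 2 ≤ gfun ((v + a) / c) := by
  have hπ := Real.pi_pos
  have hc0 : (0:ℝ) < c := by positivity
  have ha1' : (1:ℝ) ≤ a := by exact_mod_cast ha1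
  have ha2' : (a:ℝ) ≤ (c:ℝ) - 2 := by
    have : (a:ℝ) ≤ ((c - 2 : ℕ) : ℝ) := by exact_mod_cast ha2
    have h2c : ((c - 2 : ℕ) : ℝ) = (c:ℝ) - 2 := by
      have : (2:ℕ) ≤ c := hc
      push_cast [Nat.cast_sub this]
      ring
    linarith [h2c ▸ this]
  set x := π * ((v + a) / c) with hx
  have hx0 : 0 ≤ x := by positivity
  have hx1 : π / c ≤ x := by
    rw [hx, mul_div_assoc']
    rw [div_le_div_iff₀ hc0 hc0]
    nlinarith [mul_nonneg (mul_nonneg hπ.le hc0.le) (by linarith : (0:ℝ) ≤ v + ↑a - 1)]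
  have hx2 : x ≤ π - π / c := by
    have : π - π / c = π * (((c:ℝ) - 1) / c) := by field_simp
    rw [hx, this, mul_div_assoc', mul_div_assoc', div_le_div_iff₀ hc0 hc0]
    nlinarith [mul_nonneg (mul_nonneg hπ.le hc0.le) (by linarith : (0:ℝ) ≤ (c:ℝ) - 1 - (v + ↑a))]
  have hxpi : x ≤ π := by
    linarith [div_nonneg Real.pi_pos.le hc0.le]
  have hub : Real.cos x ≤ Real.cos (π / c) :=
    Real.cos_le_cos_of_nonneg_of_le_pi (by positivity) hxpi hx1
  have hlb : -Real.cos (π / c) ≤ Real.cos x := by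
    have := Real.cos_le_cos_of_nonneg_of_le_pi hx0 (by linarith [div_nonneg Real.pi_pos.le hc0.le]) hx2
    rwa [Real.cos_pi_sub] at this
  have habs : |Real.cos x| ≤ Real.cos (π / c) := abs_le.mpr ⟨hlb, hub⟩
  have hcos1 : Real.cos (π / c) ≤ 1 := Real.cos_le_one _
  rw [gfun, ← hx]
  linarith

lemma pair_sum_ge (c : ℕ) (hc : 2 ≤ c) (v : ℝ) (hv0 : 0 ≤ v) (hv1 : v ≤ 1) :
    (1 - Real.cos (π / c)) / 2 ≤ gfun (v / c) + gfun ((v + ((c:ℕ) - 1 : ℕ)) / c) := by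
  have hπ := Real.pi_pos
  have hc0 : (0:ℝ) < c := by positivity
  have hc2 : (2:ℝ) ≤ c := by exact_mod_cast hc
  -- first term
  have hA : gfun (v / c) = 1 - Real.cos (π * (v / c)) := by
    rw [gfun, abs_of_nonneg]
    apply Real.cos_nonneg_of_mem_Icc
    constructor
    · have : 0 ≤ π * (v / c) := by positivity
      linarith
    · have h1 : v / c ≤ 1 / 2 := by
        rw [div_le_div_iff₀ hc0 (by norm_num : (0:ℝ) < 2)]
        nlinarith
      calc π * (v / c) ≤ π * (1 / 2) := by nlinarith
        _ = π / 2 := by ring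
  -- second term
  have hcast : ((c - 1 : ℕ) : ℝ) = (c:ℝ) - 1 := by
    have : (1:ℕ) ≤ c := by omega
    push_cast [Nat.cast_sub this]; ring
  have harg : (v + ((c:ℕ) - 1 : ℕ)) / c = (v - 1) / c + 1 := by
    rw [hcast]; field_simp; ring
  have hB : gfun ((v + ((c:ℕ) - 1 : ℕ)) / c) = 1 - Real.cos (π * ((1 - v) / c)) := by
    rw [harg, gfun_add_one, gfun]
    have hev : Real.cos (π * ((v - 1) / c)) = Real.cos (π * ((1 - v) / c)) := by
      rw [← Real.cos_neg]
      congr 1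
      ring
    rw [hev, abs_of_nonneg]
    apply Real.cos_nonneg_of_mem_Icc
    constructor
    · have : 0 ≤ π * ((1 - v) / c) :=
        mul_nonneg hπ.le (div_nonneg (by linarith) hc0.le)
      linarith
    · have h1 : (1 - v) / c ≤ 1 / 2 := by
        rw [div_le_div_iff₀ hc0 (by norm_num : (0:ℝ) < 2)]
        nlinarith
      calc π * ((1 - v) / c) ≤ π * (1 / 2) := by nlinarith
        _ = π / 2 := by ring
  rw [hA, hB]
  -- cos u1 + cos u2 ≤ 2 cos (π/(2c))
  have hsum : Real.cos (π * (v / c)) + Real.cos (π * ((1 - v) / c)) ≤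
      2 * Real.cos (π / (2 * c)) := by
    rw [Real.cos_add_cos]
    have h1 : (π * (v / c) + π * ((1 - v) / c)) / 2 = π / (2 * c) := by field_simp; ring
    rw [h1]
    have hcosnn : 0 ≤ Real.cos (π / (2 * c)) := by
      apply Real.cos_nonneg_of_mem_Icc
      constructor
      · have : 0 ≤ π / (2 * c) := by positivity
        linarith
      · rw [div_le_div_iff₀ (by positivity) (by norm_num : (0:ℝ) < 2)]
        nlinarith
    nlinarith [Real.cos_le_one ((π * (v / c) - π * ((1 - v) / c)) / 2),
      Real.neg_one_le_cos ((π * (v / c) - π * ((1 - v) / c)) / 2)]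
  -- cos (π/c) = 2 cos(π/(2c))^2 - 1
  have hdbl : Real.cos (π / c) = 2 * Real.cos (π / (2 * c)) ^ 2 - 1 := by
    have : π / c = 2 * (π / (2 * c)) := by field_simp
    rw [this, Real.cos_two_mul]
  have hw1 : Real.cos (π / (2 * c)) ≤ 1 := Real.cos_le_one _
  nlinarith [sq_nonneg (1 - Real.cos (π / (2 * c)))]

lemma scale_sum (c : ℕ) (hc : 2 ≤ c) (s : ℝ) (hs : 0 ≤ s) (v : ℝ) (hv0 : 0 ≤ v) (hv1 : v ≤ 1) :
    ∑ a ∈ Finset.range c, Real.exp (-(s * gfun ((v + a) / c))) ≤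
      1 + ((c : ℝ) - 1) * Real.exp (-(s * ((1 - Real.cos (π / c)) / 2))) := by
  set β : ℝ := (1 - Real.cos (π / c)) / 2 with hβ
  have hβ0 : 0 ≤ β := by
    have := Real.cos_le_one (π / c)
    rw [hβ]; linarith
  obtain ⟨c', rfl⟩ : ∃ c', c = c' + 2 := ⟨c - 2, by omega⟩
  rw [Finset.sum_range_succ, Finset.sum_range_succ']
  have hmid : ∀ i ∈ Finset.range c',
      Real.exp (-(s * gfun ((v + ((i:ℕ) + 1 : ℕ)) / (c' + 2 : ℕ)))) ≤
        Real.exp (-(s * β)) := by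
    intro i hi
    rw [Finset.mem_range] at hi
    apply Real.exp_le_exp.mpr
    have hg := gfun_ge_of_middle (c' + 2) hc v hv0 hv1 (i + 1) (by omega) (by omega)
    rw [hβ]
    nlinarith [hg]
  have hmids : ∑ i ∈ Finset.range c',
      Real.exp (-(s * gfun ((v + ((i:ℕ) + 1 : ℕ)) / (c' + 2 : ℕ)))) ≤
        c' * Real.exp (-(s * β)) := by
    calc ∑ i ∈ Finset.range c', Real.exp (-(s * gfun ((v + ((i:ℕ) + 1 : ℕ)) / (c' + 2 : ℕ))))
        ≤ ∑ _i ∈ Finset.range c', Real.exp (-(s * β)) := Finset.sum_le_sum hmid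
      _ = c' * Real.exp (-(s * β)) := by rw [Finset.sum_const, Finset.card_range]; ring
  -- the pair
  have hpair : Real.exp (-(s * gfun ((v + (0:ℕ)) / (c' + 2 : ℕ)))) +
      Real.exp (-(s * gfun ((v + ((c'+1:ℕ)) : ℝ) / (c' + 2 : ℕ)))) ≤
      1 + Real.exp (-(s * β)) := by
    set X := Real.exp (-(s * gfun ((v + (0:ℕ)) / (c' + 2 : ℕ)))) with hX
    set Y := Real.exp (-(s * gfun ((v + ((c'+1:ℕ)) : ℝ) / (c' + 2 : ℕ)))) with hY
    have hX1 : X ≤ 1 := Real.exp_le_one_iff.mpr (by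
      have := gfun_nonneg ((v + (0:ℕ)) / (c' + 2 : ℕ)); nlinarith)
    have hY1 : Y ≤ 1 := Real.exp_le_one_iff.mpr (by
      have := gfun_nonneg ((v + ((c'+1:ℕ)) : ℝ) / (c' + 2 : ℕ)); nlinarith)
    have hX0 : 0 < X := Real.exp_pos _
    have hY0 : 0 < Y := Real.exp_pos _
    have hXY : X * Y ≤ Real.exp (-(s * β)) := by
      rw [hX, hY, ← Real.exp_add]
      apply Real.exp_le_exp.mpr
      have hP : β ≤ gfun (v / (c' + 2 : ℕ)) + gfun ((v + ((c'+2:ℕ) - 1 : ℕ)) / (c' + 2 : ℕ)) := by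
        rw [hβ]
        exact pair_sum_ge (c' + 2) hc v hv0 hv1
      have e1 : ((c' + 2 : ℕ) - 1 : ℕ) = (c' + 1 : ℕ) := by omega
      rw [e1] at hP
      have e2 : (v + (0:ℕ)) = v := by push_cast; ring
      rw [e2]
      push_cast at hP ⊢
      nlinarith [mul_le_mul_of_nonneg_left hP hs]
    nlinarith [mul_nonneg (sub_nonneg.mpr hX1) (sub_nonneg.mpr hY1)]
  have hcast : ((c' + 2 : ℕ) : ℝ) - 1 = (c' : ℝ) + 1 := by push_cast; ring
  rw [hcast]
  push_cast
  push_cast at hmids hpair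
  linarith [hmids, hpair]

lemma U_le (c : ℕ) (hc : 2 ≤ c) (s : ℝ) (hs : 0 ≤ s) (m : ℕ) :
    ∑ r ∈ Finset.range (c ^ m),
        Real.exp (-(s * ∑ j ∈ Finset.range m, gfun ((r : ℝ) / (c:ℝ) ^ (j+1)))) ≤
      (1 + ((c:ℝ) - 1) * Real.exp (-(s * ((1 - Real.cos (π / c)) / 2)))) ^ m := by
  have hc0 : (0:ℝ) < c := by positivity
  have hc0' : (c:ℝ) ≠ 0 := ne_of_gt hc0
  set ε : ℝ := Real.exp (-(s * ((1 - Real.cos (π / c)) / 2))) with hε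
  induction m with
  | zero => simp
  | succ m ih =>
      have hcm : (0:ℝ) < (c:ℝ) ^ m := by positivity
      set F : ℕ → ℝ := fun r => Real.exp
        (-(s * ∑ j ∈ Finset.range (m+1), gfun ((r : ℝ) / (c:ℝ) ^ (j+1)))) with hF
      have hre : ∑ r ∈ Finset.range (c ^ (m+1)), F r =
          ∑ p ∈ Finset.range c ×ˢ Finset.range (c ^ m), F (p.1 * c ^ m + p.2) := by
        refine Finset.sum_nbij' (i := fun r => (r / c ^ m, r % c ^ m))
          (j := fun p => p.1 * c ^ m + p.2) ?_ ?_ ?_ ?_ ?_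
        · intro r hr
          rw [Finset.mem_range] at hr
          rw [Finset.mem_product, Finset.mem_range, Finset.mem_range]
          have hcmpos : 0 < c ^ m := Nat.pow_pos (by omega)
          constructor
          · apply Nat.div_lt_of_lt_mul
            rw [← pow_succ]
            exact hr
          · exact Nat.mod_lt _ hcmpos
        · intro p hp
          rw [Finset.mem_product, Finset.mem_range, Finset.mem_range] at hp
          rw [Finset.mem_range, pow_succ]
          calc p.1 * c ^ m + p.2 < p.1 * c ^ m + c ^ m := by omega
            _ = (p.1 + 1) * c ^ m := by ring
            _ ≤ c * c ^ m := Nat.mul_le_mul_right _ (by omega)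
            _ = c ^ m * c := by ring
        · intro r _
          show r / c ^ m * c ^ m + r % c ^ m = r
          rw [mul_comm]
          exact Nat.div_add_mod r (c ^ m)
        · intro p hp
          rw [Finset.mem_product, Finset.mem_range, Finset.mem_range] at hp
          have hcmpos : 0 < c ^ m := Nat.pow_pos (by omega)
          have hcomm : p.1 * c ^ m + p.2 = p.2 + p.1 * c ^ m := by ring
          show ((p.1 * c ^ m + p.2) / c ^ m, (p.1 * c ^ m + p.2) % c ^ m) = p
          rw [hcomm, Nat.add_mul_div_right _ _ hcmpos, Nat.div_eq_of_lt hp.2,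
            Nat.add_mul_mod_self_right, Nat.mod_eq_of_lt hp.2]
          simp
        · intro r _
          show F r = F (r / c ^ m * c ^ m + r % c ^ m)
          congr 1
          rw [mul_comm]
          exact (Nat.div_add_mod r (c ^ m)).symm
      rw [hre, Finset.sum_product]
      -- rewrite each term
      have hterm : ∀ a ∈ Finset.range c, ∀ r ∈ Finset.range (c ^ m),
          F (a * c ^ m + r) =
            Real.exp (-(s * ∑ j ∈ Finset.range m, gfun ((r : ℝ) / (c:ℝ) ^ (j+1)))) *
              Real.exp (-(s * gfun (((r:ℝ) / (c:ℝ) ^ m + a) / c))) := by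
        intro a ha r hr
        simp only [hF]
        have hin : ∀ j ∈ Finset.range m,
            gfun (((a * c ^ m + r : ℕ) : ℝ) / (c:ℝ) ^ (j+1)) =
              gfun ((r : ℝ) / (c:ℝ) ^ (j+1)) := by
          intro j hj
          rw [Finset.mem_range] at hj
          have hexp : c ^ m = c ^ (j+1) * c ^ (m - (j+1)) := by
            rw [← pow_add]
            congr 1
            omega
          have harg : ((a * c ^ m + r : ℕ) : ℝ) / (c:ℝ) ^ (j+1) =
              (r : ℝ) / (c:ℝ) ^ (j+1) + ((a * c ^ (m - (j+1)) : ℕ) : ℝ) := by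
            push_cast
            rw [show ((c:ℝ) ^ m) = (c:ℝ) ^ (j+1) * (c:ℝ) ^ (m - (j+1)) by
              exact_mod_cast congrArg (Nat.cast : ℕ → ℝ) hexp]
            field_simp
            ring
          rw [harg, gfun_add_nat]
        have htop : ((a * c ^ m + r : ℕ) : ℝ) / (c:ℝ) ^ (m+1) =
            ((r:ℝ) / (c:ℝ) ^ m + a) / c := by
          push_cast
          rw [pow_succ]
          field_simp
          ring
        rw [Finset.sum_range_succ, Finset.sum_congr rfl hin, htop, mul_add, neg_add,
          Real.exp_add]
      calc ∑ a ∈ Finset.range c, ∑ r ∈ Finset.range (c ^ m), F (a * c ^ m + r)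
          = ∑ a ∈ Finset.range c, ∑ r ∈ Finset.range (c ^ m),
              Real.exp (-(s * ∑ j ∈ Finset.range m, gfun ((r : ℝ) / (c:ℝ) ^ (j+1)))) *
                Real.exp (-(s * gfun (((r:ℝ) / (c:ℝ) ^ m + a) / c))) := by
            apply Finset.sum_congr rfl
            intro a ha
            exact Finset.sum_congr rfl (fun r hr => hterm a ha r hr)
        _ = ∑ r ∈ Finset.range (c ^ m),
              Real.exp (-(s * ∑ j ∈ Finset.range m, gfun ((r : ℝ) / (c:ℝ) ^ (j+1)))) *
                ∑ a ∈ Finset.range c,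
                  Real.exp (-(s * gfun (((r:ℝ) / (c:ℝ) ^ m + a) / c))) := by
            rw [Finset.sum_comm]
            exact Finset.sum_congr rfl (fun r _ => (Finset.mul_sum _ _ _).symm)
        _ ≤ ∑ r ∈ Finset.range (c ^ m),
              Real.exp (-(s * ∑ j ∈ Finset.range m, gfun ((r : ℝ) / (c:ℝ) ^ (j+1)))) *
                (1 + ((c:ℝ) - 1) * ε) := by
            apply Finset.sum_le_sum
            intro r hr
            rw [Finset.mem_range] at hr
            apply mul_le_mul_of_nonneg_left _ (Real.exp_pos _).le
            have hv0 : 0 ≤ (r:ℝ) / (c:ℝ) ^ m := by positivity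
            have hv1 : (r:ℝ) / (c:ℝ) ^ m ≤ 1 := by
              rw [div_le_one hcm]
              exact_mod_cast hr.le
            exact scale_sum c hc s hs _ hv0 hv1
        _ = (1 + ((c:ℝ) - 1) * ε) * ∑ r ∈ Finset.range (c ^ m),
              Real.exp (-(s * ∑ j ∈ Finset.range m, gfun ((r : ℝ) / (c:ℝ) ^ (j+1)))) := by
            rw [← Finset.sum_mul]
            ring
        _ ≤ (1 + ((c:ℝ) - 1) * ε) * (1 + ((c:ℝ) - 1) * ε) ^ m := by
            apply mul_le_mul_of_nonneg_left ih
            have : 0 ≤ ((c:ℝ) - 1) * ε := by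
              apply mul_nonneg _ (Real.exp_pos _).le
              have : (2:ℝ) ≤ c := by exact_mod_cast hc
              linarith
            linarith
        _ = (1 + ((c:ℝ) - 1) * ε) ^ (m + 1) := by ring

lemma abs_exp_add_exp (x y : ℝ) :
    ‖Complex.exp ((x:ℂ) * Complex.I) + Complex.exp ((y:ℂ) * Complex.I)‖ =
      2 * |Real.cos ((x - y) / 2)| := by
  have h1 : (x:ℂ) * Complex.I =
      (((x+y)/2 : ℝ):ℂ) * Complex.I + (((x-y)/2 : ℝ):ℂ) * Complex.I := by push_cast; ring
  have h2 : (y:ℂ) * Complex.I =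
      (((x+y)/2 : ℝ):ℂ) * Complex.I + -((((x-y)/2 : ℝ):ℂ) * Complex.I) := by push_cast; ring
  rw [h1, h2, Complex.exp_add, Complex.exp_add]
  have h3 : Complex.exp ((((x-y)/2 : ℝ):ℂ) * Complex.I) +
      Complex.exp (-((((x-y)/2 : ℝ):ℂ) * Complex.I)) =
        ((2 * Real.cos ((x-y)/2) : ℝ) : ℂ) := by
    rw [Complex.ofReal_mul, Complex.ofReal_cos, Complex.cos]
    push_cast
    ring
  calc ‖Complex.exp ((((x+y)/2 : ℝ):ℂ) * Complex.I) *
          Complex.exp ((((x-y)/2 : ℝ):ℂ) * Complex.I) +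
        Complex.exp ((((x+y)/2 : ℝ):ℂ) * Complex.I) *
          Complex.exp (-((((x-y)/2 : ℝ):ℂ) * Complex.I))‖
      = ‖Complex.exp ((((x+y)/2 : ℝ):ℂ) * Complex.I) *
          ((2 * Real.cos ((x-y)/2) : ℝ) : ℂ)‖ := by rw [← h3]; ring_nf
    _ = 2 * |Real.cos ((x - y) / 2)| := by
        rw [norm_mul, Complex.norm_exp_ofReal_mul_I, Complex.norm_real, one_mul]
        rw [Real.norm_eq_abs, abs_mul]
        norm_num

lemma eig_bound (c n t : ℕ) (hc : 2 ≤ c) (hn : 2 ≤ n) (k : ℕ) :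
    (‖∑ i ∈ Finset.range n, Complex.exp (2 * π * Complex.I * k / c ^ i)‖ / n)
        ^ (2 * t) ≤
      Real.exp (-((2 * t / n : ℝ) *
        ∑ j ∈ Finset.range (n-1), gfun (((k * (c-1) : ℕ) : ℝ) / (c:ℝ) ^ (j+1)))) := by
  have hπ := Real.pi_pos
  have hc0 : (0:ℝ) < c := by positivity
  have hn0 : (0:ℝ) < n := by positivity
  set z : ℕ → ℂ := fun i => Complex.exp (((2 * π * k / (c:ℝ) ^ i : ℝ) : ℂ) * Complex.I)
    with hzdef
  have hz : ∀ i, z i = Complex.exp (((2 * π * k / (c:ℝ) ^ i : ℝ) : ℂ) * Complex.I) :=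
    fun i => rfl
  have hrw : (∑ i ∈ Finset.range n, Complex.exp (2 * π * Complex.I * k / c ^ i)) =
      ∑ i ∈ Finset.range n, z i := by
    apply Finset.sum_congr rfl
    intro i _
    rw [hz i]
    exact congrArg Complex.exp (by push_cast; ring)
  rw [hrw]
  have habs1 : ∀ i, ‖z i‖ = 1 := by
    intro i
    rw [hz i]
    exact Complex.norm_exp_ofReal_mul_I _
  have hsplit : (2:ℂ) * (∑ i ∈ Finset.range n, z i) =
      z 0 + z (n-1) + ∑ j ∈ Finset.range (n-1), (z j + z (j+1)) := by
    have e : n - 1 + 1 = n := by omega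
    have h1 : ∑ j ∈ Finset.range (n-1), z j = (∑ i ∈ Finset.range n, z i) - z (n-1) := by
      have h := Finset.sum_range_succ z (n-1)
      rw [e] at h
      rw [h]
      ring
    have h2 : ∑ j ∈ Finset.range (n-1), z (j+1) = (∑ i ∈ Finset.range n, z i) - z 0 := by
      have h := Finset.sum_range_succ' z (n-1)
      rw [e] at h
      rw [h]
      ring
    rw [Finset.sum_add_distrib, h1, h2]
    ring
  -- pairwise bound
  have hpair : ∀ j ∈ Finset.range (n-1), ‖z j + z (j+1)‖ =
      2 * (1 - gfun (((k * (c-1) : ℕ) : ℝ) / (c:ℝ) ^ (j+1))) := by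
    intro j _
    rw [hz j, hz (j+1), abs_exp_add_exp]
    have harg : (2 * π * k / (c:ℝ) ^ j - 2 * π * k / (c:ℝ) ^ (j+1)) / 2 =
        π * (((k * (c-1) : ℕ) : ℝ) / (c:ℝ) ^ (j+1)) := by
      have hcast : ((k * (c-1) : ℕ) : ℝ) = (k:ℝ) * ((c:ℝ) - 1) := by
        have h1 : (1:ℕ) ≤ c := by omega
        push_cast [Nat.cast_sub h1]
        ring
      rw [hcast, pow_succ]
      have hcj : (c:ℝ) ^ j ≠ 0 := by positivity
      field_simp
    rw [harg, gfun]
    ring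
  have htri : ‖∑ i ∈ Finset.range n, z i‖ ≤
      1 + ∑ j ∈ Finset.range (n-1), (1 - gfun (((k * (c-1) : ℕ) : ℝ) / (c:ℝ) ^ (j+1))) := by
    have h2S : 2 * ‖∑ i ∈ Finset.range n, z i‖ =
        ‖(2:ℂ) * (∑ i ∈ Finset.range n, z i)‖ := by
      rw [norm_mul]
      norm_num
    have hb : ‖(2:ℂ) * (∑ i ∈ Finset.range n, z i)‖ ≤
        2 + ∑ j ∈ Finset.range (n-1), 2 * (1 - gfun (((k * (c-1) : ℕ) : ℝ) / (c:ℝ) ^ (j+1))) := by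
      rw [hsplit]
      calc ‖z 0 + z (n-1) + ∑ j ∈ Finset.range (n-1), (z j + z (j+1))‖
          ≤ ‖z 0 + z (n-1)‖ +
            ‖∑ j ∈ Finset.range (n-1), (z j + z (j+1))‖ := by
            exact norm_add_le _ _
        _ ≤ (‖z 0‖ + ‖z (n-1)‖) +
            ∑ j ∈ Finset.range (n-1), ‖z j + z (j+1)‖ := by
            gcongr
            · exact norm_add_le _ _
            · exact norm_sum_le _ _
        _ = 2 + ∑ j ∈ Finset.range (n-1), 2 * (1 - gfun (((k * (c-1) : ℕ) : ℝ) / (c:ℝ) ^ (j+1))) := by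
            rw [habs1, habs1, Finset.sum_congr rfl hpair]
            norm_num
    have := h2S ▸ hb
    have hsum2 : ∑ j ∈ Finset.range (n-1), 2 * (1 - gfun (((k * (c-1) : ℕ) : ℝ) / (c:ℝ) ^ (j+1))) =
        2 * ∑ j ∈ Finset.range (n-1), (1 - gfun (((k * (c-1) : ℕ) : ℝ) / (c:ℝ) ^ (j+1))) := by
      rw [Finset.mul_sum]
    rw [hsum2] at this
    linarith
  -- now the exponential bound
  set A : ℝ := ∑ j ∈ Finset.range (n-1), gfun (((k * (c-1) : ℕ) : ℝ) / (c:ℝ) ^ (j+1)) with hA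
  have hA0 : 0 ≤ A := Finset.sum_nonneg (fun j _ => gfun_nonneg _)
  have hcastn : ((n - 1 : ℕ) : ℝ) = (n:ℝ) - 1 := by
    have h1 : (1:ℕ) ≤ n := by omega
    push_cast [Nat.cast_sub h1]
    ring
  have hAn : A ≤ (n:ℝ) - 1 := by
    have h : A ≤ ∑ _j ∈ Finset.range (n-1), (1:ℝ) :=
      Finset.sum_le_sum (fun j _ => gfun_le_one _)
    simp only [Finset.sum_const, Finset.card_range, nsmul_eq_mul, mul_one] at h
    rw [hcastn] at h
    exact h
  have hsum1 : 1 + ∑ j ∈ Finset.range (n-1), (1 - gfun (((k * (c-1) : ℕ) : ℝ) / (c:ℝ) ^ (j+1))) =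
      (n:ℝ) - A := by
    rw [Finset.sum_sub_distrib, ← hA]
    simp only [Finset.sum_const, Finset.card_range, nsmul_eq_mul, mul_one]
    rw [hcastn]
    ring
  have hste : ‖∑ i ∈ Finset.range n, z i‖ / n ≤ Real.exp (-(A / n)) := by
    have h1 : ‖∑ i ∈ Finset.range n, z i‖ / n ≤ ((n:ℝ) - A) / n := by
      apply (div_le_div_iff_of_pos_right hn0).mpr
      rw [hsum1] at htri
      exact htri
    have h2 : ((n:ℝ) - A) / n = 1 - A / n := by field_simp
    have h3 : 1 - A / n ≤ Real.exp (-(A / n)) := Real.one_sub_le_exp_neg (A / n)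
    rw [h2] at h1
    linarith
  have hpow : (‖∑ i ∈ Finset.range n, z i‖ / n) ^ (2 * t) ≤
      Real.exp (-(A / n)) ^ (2 * t) := by
    apply pow_le_pow_left₀ _ hste
    positivity
  have hexp : Real.exp (-(A / n)) ^ (2 * t) = Real.exp (-((2 * t / n : ℝ) * A)) := by
    rw [← Real.exp_nat_mul]
    congr 1
    push_cast
    ring
  rw [hexp] at hpow
  exact hpow

/-- Eigenvalue-sum estimate for the random walk determined by `G i = c^(i-1)`:
`Σ_{k=1}^{c^(n-1)-1} (|λ̃(n,k)|/n)^(2t) ≤ (1 + (c-1)e^(-t/(κn)))^(n-1) - 1`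
with `κ = 1/(1 - cos(π/c))`. -/
theorem eigenvalue_power_sum_bound
    (c n : ℕ) (hc : 2 ≤ c) (hn : 2 ≤ n)
    (κ : ℝ) (hκ : κ = 1 / (1 - Real.cos (π / c)))
    (t : ℕ) (ht : 1 ≤ t) :
    ∑ k ∈ Finset.Icc 1 (c ^ (n - 1) - 1),
        (‖∑ i ∈ Finset.range n, Complex.exp (2 * π * Complex.I * k / c ^ i)‖
          / n) ^ (2 * t) ≤
      (1 + ((c : ℝ) - 1) * Real.exp (-(t : ℝ) / (κ * n))) ^ (n - 1) - 1 := by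
  have hπ := Real.pi_pos
  have hc0 : (0:ℝ) < c := by positivity
  have hn0 : (0:ℝ) < n := by positivity
  set N := c ^ (n - 1) with hN
  have hN2 : 2 ≤ N := by
    calc 2 ≤ c := hc
      _ = c ^ 1 := (pow_one c).symm
      _ ≤ c ^ (n - 1) := Nat.pow_le_pow_right (by omega) (by omega)
  have hcos1 : Real.cos (π / c) < 1 := by
    have h0 : (0:ℝ) < π / c := by positivity
    have h1 : π / c ≤ π := by
      apply div_le_self hπ.le
      exact_mod_cast (by omega : 1 ≤ c)
    have h2 := Real.cos_lt_cos_of_nonneg_of_le_pi (le_refl (0:ℝ)) h1 h0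
    rwa [Real.cos_zero] at h2
  have hcosne : 1 - Real.cos (π / c) ≠ 0 := by linarith
  have hεeq : Real.exp (-(t : ℝ) / (κ * n)) =
      Real.exp (-((2 * t / n : ℝ) * ((1 - Real.cos (π / c)) / 2))) := by
    congr 1
    rw [hκ]
    field_simp
  set W : ℕ → ℝ := fun x => Real.exp
    (-((2 * t / n : ℝ) * ∑ j ∈ Finset.range (n-1), gfun ((x:ℝ) / (c:ℝ) ^ (j+1)))) with hW
  -- replacing the argument by its residue mod N
  have hmod : ∀ k : ℕ,
      (∑ j ∈ Finset.range (n-1), gfun (((k * (c-1) : ℕ) : ℝ) / (c:ℝ) ^ (j+1))) =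
        ∑ j ∈ Finset.range (n-1), gfun (((k * (c-1) % N : ℕ) : ℝ) / (c:ℝ) ^ (j+1)) := by
    intro k
    apply Finset.sum_congr rfl
    intro j hj
    rw [Finset.mem_range] at hj
    set M := k * (c-1) with hM
    have hexp : N = c ^ (j+1) * c ^ (n-1-(j+1)) := by
      rw [hN, ← pow_add]
      congr 1
      omega
    have hMnat : M = M % N + M / N * (c ^ (j+1) * c ^ (n-1-(j+1))) := by
      rw [← hexp]
      exact (Nat.mod_add_div' M N).symm
    have hcj : ((c:ℝ)) ^ (j+1) ≠ 0 := by positivity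
    have hMreal : (M:ℝ) = ((M % N : ℕ) : ℝ) +
        ((M / N : ℕ) : ℝ) * ((c:ℝ) ^ (j+1) * (c:ℝ) ^ (n-1-(j+1))) := by
      exact_mod_cast congrArg (Nat.cast : ℕ → ℝ) hMnat
    have harg : (M:ℝ) / (c:ℝ) ^ (j+1) =
        ((M % N : ℕ) : ℝ) / (c:ℝ) ^ (j+1) + ((M / N * c ^ (n-1-(j+1)) : ℕ) : ℝ) := by
      rw [hMreal]
      push_cast
      field_simp
    rw [harg, gfun_add_nat]
  -- pointwise bound
  have hpt : ∀ k ∈ Finset.Icc 1 (N-1),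
      (‖∑ i ∈ Finset.range n, Complex.exp (2 * π * Complex.I * k / c ^ i)‖
        / n) ^ (2 * t) ≤ W (k * (c-1) % N) := by
    intro k _
    have h := eig_bound c n t hc hn k
    rw [hmod k] at h
    exact h
  -- injectivity of k ↦ k*(c-1) % N on [1, N-1]
  have hcop : Nat.Coprime N (c-1) := by
    have h1 : Nat.Coprime c (c - 1) := by
      rw [show c = (c - 1) + 1 by omega]
      exact Nat.coprime_self_add_left.mpr (Nat.coprime_one_left _)
    exact Nat.Coprime.pow_left _ h1
  have hinj : ∀ x ∈ Finset.Icc 1 (N-1), ∀ y ∈ Finset.Icc 1 (N-1),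
      x * (c-1) % N = y * (c-1) % N → x = y := by
    intro x hx y hy hxy
    rw [Finset.mem_Icc] at hx hy
    have hmeq : x * (c-1) ≡ y * (c-1) [MOD N] := hxy
    have hxy2 : x ≡ y [MOD N] := Nat.ModEq.cancel_right_of_coprime hcop hmeq
    have hx' : x < N := by omega
    have hy' : y < N := by omega
    have := hxy2
    rw [Nat.ModEq, Nat.mod_eq_of_lt hx', Nat.mod_eq_of_lt hy'] at this
    exact this
  have himg : (Finset.Icc 1 (N-1)).image (fun k => k * (c-1) % N) ⊆ Finset.Icc 1 (N-1) := by
    intro y hy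
    rw [Finset.mem_image] at hy
    obtain ⟨k, hk, rfl⟩ := hy
    rw [Finset.mem_Icc] at hk ⊢
    have hlt : k * (c-1) % N < N := Nat.mod_lt _ (by omega)
    have hne : k * (c-1) % N ≠ 0 := by
      intro h0
      have hdvd : N ∣ k * (c-1) := Nat.dvd_of_mod_eq_zero h0
      have hdk : N ∣ k := hcop.dvd_of_dvd_mul_right hdvd
      have := Nat.le_of_dvd (by omega) hdk
      omega
    omega
  -- chain of sums
  have hchain : ∑ k ∈ Finset.Icc 1 (N-1), W (k * (c-1) % N) ≤
      ∑ k ∈ Finset.Icc 1 (N-1), W k := by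
    rw [← Finset.sum_image hinj]
    apply Finset.sum_le_sum_of_subset_of_nonneg himg
    intro i _ _
    exact (Real.exp_pos _).le
  have hrange : Finset.range N = insert 0 (Finset.Icc 1 (N-1)) := by
    ext x
    simp only [Finset.mem_range, Finset.mem_insert, Finset.mem_Icc]
    omega
  have hW0 : W 0 = 1 := by
    rw [hW]
    simp [gfun_zero]
  have hsumN : ∑ k ∈ Finset.range N, W k = 1 + ∑ k ∈ Finset.Icc 1 (N-1), W k := by
    rw [hrange, Finset.sum_insert (by simp)]
    rw [hW0]
  have hU := U_le c hc (2 * t / n : ℝ) (by positivity) (n - 1)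
  rw [← hN] at hU
  have hUW : ∑ k ∈ Finset.range N, W k ≤
      (1 + ((c:ℝ) - 1) *
        Real.exp (-((2 * t / n : ℝ) * ((1 - Real.cos (π / c)) / 2)))) ^ (n - 1) := hU
  calc ∑ k ∈ Finset.Icc 1 (N-1),
        (‖∑ i ∈ Finset.range n, Complex.exp (2 * π * Complex.I * k / c ^ i)‖
          / n) ^ (2 * t)
      ≤ ∑ k ∈ Finset.Icc 1 (N-1), W (k * (c-1) % N) := Finset.sum_le_sum hpt
    _ ≤ ∑ k ∈ Finset.Icc 1 (N-1), W k := hchain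
    _ = ∑ k ∈ Finset.range N, W k - 1 := by rw [hsumN]; ring
    _ ≤ (1 + ((c:ℝ) - 1) *
          Real.exp (-((2 * t / n : ℝ) * ((1 - Real.cos (π / c)) / 2)))) ^ (n - 1) - 1 := by
        linarith
    _ = (1 + ((c : ℝ) - 1) * Real.exp (-(t : ℝ) / (κ * n))) ^ (n - 1) - 1 := by
        rw [hεeq]
end
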